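/- arXiv:0812.4154 — 7 statements merged into one kernel-verified Lean document; each statement's English description precedes it below -/
import Mathlib

section
/- Let ε ∈ {1, −1} and let P(z) = Σ_{j=0}^m z^j A_j be a T-palindromic matrix polynomial if ε = 1 and a T-anti-palindromic matrix polynomial if ε = −1. Let λ ∈ ℂ, let x ∈ ℂⁿ with ‖x‖₂ = 1, set r := −P(λ)x and P_x := I − x xᴴ. For j = 0, …, m define ΔA_j := −(xᵀA_j x)· x̄ xᴴ + ‖Λ_m‖₂^{−2} · [ conj(λ)^j · P_xᵀ r xᴴ + ε · conj(λ)^{m−j} · x̄ rᵀ P_x ]. Then ΔA_{m−j} = ε (ΔA_j)ᵀ for all j = 0, …, m (so ΔP(z) := Σ_{j=0}^m z^j ΔA_j is T-palindromic if ε = 1 and T-anti-palindromic if ε = −1), and P(λ)x + ΔP(λ)x = 0. -/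
noncomputable section

/-- Euclidean (ℓ²) norm of a complex vector. -/
def vnorm {α : Type*} [Fintype α] (x : α → ℂ) : ℝ :=
  Real.sqrt (∑ i, ‖x i‖ ^ 2)

/-- Frobenius norm of a complex matrix. -/
def frobNorm {α : Type*} [Fintype α] (A : Matrix α α ℂ) : ℝ :=
  Real.sqrt (∑ i, ∑ j, ‖A i j‖ ^ 2)

/-- Spectral (operator 2-)norm of a complex matrix. -/
def specNorm {α : Type*} [Fintype α] [DecidableEq α] (A : Matrix α α ℂ) : ℝ :=
  ‖Matrix.toEuclideanCLM (𝕜 := ℂ) A‖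

/-- Evaluation of the matrix polynomial `P(z) = ∑_{j=0}^m z^j A_j`. -/
def evalP {n : ℕ} (m : ℕ) (A : ℕ → Matrix (Fin n) (Fin n) ℂ) (z : ℂ) :
    Matrix (Fin n) (Fin n) ℂ :=
  ∑ j ∈ Finset.range (m + 1), z ^ j • A j

/-- `‖Λ_m‖₂² = ∑_{j=0}^m |λ|^{2j}` where `Λ_m = (1, λ, …, λ^m)ᵀ`. -/
def LamNormSq (m : ℕ) (lam : ℂ) : ℝ :=
  ∑ j ∈ Finset.range (m + 1), ‖lam‖ ^ (2 * j)

/-- `‖Π₊(Λ_m)‖₂²`. -/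
def PiPlusSq (m : ℕ) (lam : ℂ) : ℝ :=
  if m % 2 = 1 then
    ∑ j ∈ Finset.range ((m + 1) / 2), ‖lam ^ j + lam ^ (m - j)‖ ^ 2 / 2
  else
    (∑ j ∈ Finset.range (m / 2), ‖lam ^ j + lam ^ (m - j)‖ ^ 2 / 2) + ‖lam ^ (m / 2)‖ ^ 2

/-- `‖Π₋(Λ_m)‖₂²`. -/
def PiMinusSq (m : ℕ) (lam : ℂ) : ℝ :=
  if m % 2 = 1 then
    ∑ j ∈ Finset.range ((m + 1) / 2), ‖lam ^ j - lam ^ (m - j)‖ ^ 2 / 2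
  else
    ∑ j ∈ Finset.range (m / 2), ‖lam ^ j - lam ^ (m - j)‖ ^ 2 / 2

section helpers
variable {n : ℕ}

lemma vecMulVec_transpose' (u v : Fin n → ℂ) :
    (Matrix.vecMulVec u v).transpose = Matrix.vecMulVec v u := by
  ext i j; simp [Matrix.vecMulVec_apply, mul_comm]

lemma vecMulVec_mulVec' (u v w : Fin n → ℂ) :
    (Matrix.vecMulVec u v).mulVec w = (dotProduct v w) • u := by
  ext i
  simp only [Matrix.mulVec, dotProduct, Matrix.vecMulVec_apply, Pi.smul_apply,
    smul_eq_mul, Finset.sum_mul]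
  exact Finset.sum_congr rfl fun j _ => by ring

lemma evalP_mulVec (m : ℕ) (A : ℕ → Matrix (Fin n) (Fin n) ℂ) (z : ℂ) (w : Fin n → ℂ) :
    (evalP m A z).mulVec w = ∑ j ∈ Finset.range (m + 1), z ^ j • (A j).mulVec w := by
  ext i
  simp only [evalP, Matrix.mulVec, dotProduct, Matrix.sum_apply, Matrix.smul_apply,
    Finset.sum_apply, Pi.smul_apply, smul_eq_mul, Finset.sum_mul, Finset.mul_sum, mul_assoc]
  rw [Finset.sum_comm]

lemma dotProduct_sum' {ι : Type*} (s : Finset ι) (v : Fin n → ℂ) (f : ι → Fin n → ℂ) :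
    dotProduct v (∑ j ∈ s, f j) = ∑ j ∈ s, dotProduct v (f j) := by
  simp only [dotProduct, Finset.sum_apply, Finset.mul_sum]
  rw [Finset.sum_comm]

lemma real_smul_vec {a : ℝ} (v : Fin n → ℂ) : a • v = (a : ℂ) • v := by
  funext i; simp [Complex.real_smul]

end helpers

/-- existence of a T-palindromic (ε = 1) / T-anti-palindromic (ε = −1)
structured perturbation `ΔP` with `P(λ)x + ΔP(λ)x = 0`. -/
theorem stmt_0 {m n : ℕ} (hm : 0 < m) (hn : 0 < n)
    (ε : ℂ) (hε : ε = 1 ∨ ε = -1)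
    (A : ℕ → Matrix (Fin n) (Fin n) ℂ)
    (hpal : ∀ j ≤ m, A (m - j) = ε • (A j).transpose)
    (lam : ℂ) (x : Fin n → ℂ) (hx : vnorm x = 1)
    (r : Fin n → ℂ) (hr : r = -(evalP m A lam).mulVec x)
    (Px : Matrix (Fin n) (Fin n) ℂ)
    (hPx : Px = 1 - Matrix.vecMulVec x (star x))
    (ΔA : ℕ → Matrix (Fin n) (Fin n) ℂ)
    (hΔA : ∀ j ≤ m, ΔA j =
      -((dotProduct x ((A j).mulVec x)) • Matrix.vecMulVec (star x) (star x)) +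
        (LamNormSq m lam)⁻¹ •
          ((starRingEnd ℂ lam) ^ j • Matrix.vecMulVec ((Px.transpose).mulVec r) (star x) +
            ε • ((starRingEnd ℂ lam) ^ (m - j) •
              Matrix.vecMulVec (star x) (Matrix.vecMul r Px)))) :
    (∀ j ≤ m, ΔA (m - j) = ε • (ΔA j).transpose) ∧
      (evalP m A lam).mulVec x + (evalP m ΔA lam).mulVec x = 0 := by
  have hε2 : ε * ε = 1 := by rcases hε with h | h <;> simp [h]
  -- norm of x as a complex dot product
  have hxsum : (∑ i, ‖x i‖ ^ 2) = 1 := by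
    have h0 : (0:ℝ) ≤ ∑ i, ‖x i‖ ^ 2 := Finset.sum_nonneg fun i _ => sq_nonneg _
    have := hx
    unfold vnorm at this
    nlinarith [Real.sq_sqrt h0, Real.sqrt_nonneg (∑ i, ‖x i‖ ^ 2)]
  have hsx : dotProduct (star x) x = 1 := by
    have : dotProduct (star x) x = ((∑ i, ‖x i‖ ^ 2 : ℝ) : ℂ) := by
      simp only [dotProduct, Pi.star_apply, Complex.ofReal_sum]
      refine Finset.sum_congr rfl fun i _ => ?_
      rw [Complex.star_def, mul_comm, Complex.mul_conj]
      congr 1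
      rw [← Complex.sq_norm]
    rw [this, hxsum]; norm_num
  -- Px kills x
  have hPxx : Px.mulVec x = 0 := by
    rw [hPx, Matrix.sub_mulVec, vecMulVec_mulVec', hsx, Matrix.one_mulVec, one_smul, sub_self]
  -- transpose of Px applied to r
  have hPxT : Px.transpose.mulVec r = r - (dotProduct x r) • star x := by
    rw [hPx]
    have : (1 - Matrix.vecMulVec x (star x)).transpose
        = 1 - Matrix.vecMulVec (star x) x := by
      rw [Matrix.transpose_sub, Matrix.transpose_one, vecMulVec_transpose']
    rw [this, Matrix.sub_mulVec, vecMulVec_mulVec', Matrix.one_mulVec]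
  have hrPx : dotProduct (Matrix.vecMul r Px) x = 0 := by
    rw [← Matrix.dotProduct_mulVec, hPxx, dotProduct_zero]
  -- LamNormSq is nonzero
  have hL : (LamNormSq m lam : ℂ) ≠ 0 := by
    have h1 : (1:ℝ) ≤ LamNormSq m lam := by
      unfold LamNormSq
      calc (1:ℝ) = ∑ j ∈ ({0}: Finset ℕ), ‖lam‖ ^ (2 * j) := by simp
        _ ≤ _ := Finset.sum_le_sum_of_subset_of_nonneg (by simp)
            (fun j _ _ => by positivity)
    simp only [ne_eq, Complex.ofReal_eq_zero]
    linarith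
  have hLsum : (∑ j ∈ Finset.range (m + 1), lam ^ j * (starRingEnd ℂ lam) ^ j)
      = (LamNormSq m lam : ℂ) := by
    unfold LamNormSq
    rw [Complex.ofReal_sum]
    refine Finset.sum_congr rfl fun j _ => ?_
    rw [← map_pow, Complex.mul_conj]
    congr 1
    rw [← Complex.sq_norm, norm_pow, ← pow_mul, mul_comm j 2]
  constructor
  · intro j hj
    have hj' : m - j ≤ m := Nat.sub_le m j
    have hmmj : m - (m - j) = j := Nat.sub_sub_self hj
    have hc : dotProduct x ((ε • (A j).transpose).mulVec x)
        = ε * dotProduct x ((A j).mulVec x) := by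
      rw [Matrix.smul_mulVec, dotProduct_smul, smul_eq_mul]
      congr 1
      rw [Matrix.dotProduct_mulVec, Matrix.vecMul_transpose, dotProduct_comm]
    have hMT : Px.transpose.mulVec r = Matrix.vecMul r Px := Matrix.mulVec_transpose Px r
    rw [hΔA _ hj', hΔA j hj, hmmj, hpal j hj, hc, hMT]
    rcases hε with rfl | rfl <;>
      simp only [Matrix.transpose_add, Matrix.transpose_neg, Matrix.transpose_smul,
        vecMulVec_transpose', one_smul, neg_smul, one_mul, neg_neg, smul_neg, neg_mul,
        smul_add, smul_smul, neg_one_mul] <;>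
      module
  · have key : (evalP m ΔA lam).mulVec x = r := by
      rw [evalP_mulVec]
      have step : ∀ j ∈ Finset.range (m + 1),
          lam ^ j • (ΔA j).mulVec x
            = lam ^ j • (-(dotProduct x ((A j).mulVec x)) • star x)
              + ((LamNormSq m lam : ℂ))⁻¹ • ((lam ^ j * (starRingEnd ℂ lam) ^ j)
                  • Px.transpose.mulVec r) := by
        intro j hj
        rw [Finset.mem_range, Nat.lt_succ_iff] at hj
        rw [hΔA j hj]
        rw [Matrix.add_mulVec, Matrix.neg_mulVec, Matrix.smul_mulVec,
          vecMulVec_mulVec', hsx, one_smul,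
          Matrix.smul_mulVec, Matrix.add_mulVec, Matrix.smul_mulVec,
          Matrix.smul_mulVec, Matrix.smul_mulVec,
          vecMulVec_mulVec' ((Px.transpose).mulVec r) (star x) x,
          vecMulVec_mulVec' (star x) (Matrix.vecMul r Px) x, hsx, hrPx]
        simp only [one_smul, zero_smul, smul_zero, add_zero]
        rw [real_smul_vec, Complex.ofReal_inv]
        module
      rw [Finset.sum_congr rfl step, Finset.sum_add_distrib]
      have e1 : (∑ j ∈ Finset.range (m + 1),
          lam ^ j • (-(dotProduct x ((A j).mulVec x)) • star x))
            = (dotProduct x r) • star x := by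
        have : ∀ j, lam ^ j • (-(dotProduct x ((A j).mulVec x)) • star x)
            = (-(dotProduct x (lam ^ j • (A j).mulVec x))) • star x := by
          intro j
          rw [smul_smul, dotProduct_smul, smul_eq_mul, mul_neg]
        simp only [this]
        rw [← Finset.sum_smul]
        congr 1
        rw [Finset.sum_neg_distrib, ← dotProduct_sum', ← evalP_mulVec, hr, dotProduct_neg]
      have e2 : (∑ j ∈ Finset.range (m + 1),
          ((LamNormSq m lam : ℂ))⁻¹ • ((lam ^ j * (starRingEnd ℂ lam) ^ j)
            • Px.transpose.mulVec r)) = Px.transpose.mulVec r := by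
        simp only [smul_smul, ← Finset.sum_smul, ← Finset.mul_sum, hLsum]
        rw [inv_mul_cancel₀ hL, one_smul]
      rw [e1, e2, hPxT]
      abel
    rw [key, hr]
    simp
end
end

section
/- Let ε ∈ {1, −1} and let P(z) = Σ_{j=0}^m z^j A_j be an H-palindromic matrix polynomial if ε = 1 and an H-anti-palindromic matrix polynomial if ε = −1. Let λ ∈ ℂ, let x ∈ ℂⁿ with ‖x‖₂ = 1, set r := −P(λ)x and P_x := I − x xᴴ. For j = 0, …, m define ΔA_j := −(xᴴA_j x)· x xᴴ + ‖Λ_m‖₂^{−2} · [ conj(λ)^j · P_x r xᴴ + ε · λ^{m−j} · x rᴴ P_x ]. Then ΔA_{m−j} = ε (ΔA_j)ᴴ for all j = 0, …, m (so ΔP(z) := Σ_{j=0}^m z^j ΔA_j is H-palindromic if ε = 1 and H-anti-palindromic if ε = −1), and P(λ)x + ΔP(λ)x = 0. -/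
noncomputable section

open Matrix

lemma vmv_mulVec {n : ℕ} (u v w : Fin n → ℂ) :
    Matrix.vecMulVec u v *ᵥ w = (v ⬝ᵥ w) • u := by
  ext i
  simp [Matrix.mulVec, Matrix.vecMulVec_apply, dotProduct, Finset.sum_mul,
    Finset.mul_sum, mul_comm, mul_assoc, mul_left_comm]

lemma sum_mulVec' {n : ℕ} {ι : Type*} (s : Finset ι) (f : ι → Matrix (Fin n) (Fin n) ℂ)
    (x : Fin n → ℂ) : (∑ j ∈ s, f j) *ᵥ x = ∑ j ∈ s, f j *ᵥ x := by
  ext i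
  simp [Matrix.mulVec, dotProduct, Finset.sum_mul, Matrix.sum_apply]
  rw [Finset.sum_comm]

lemma dp_sum' {n : ℕ} {ι : Type*} (s : Finset ι) (v : Fin n → ℂ) (f : ι → Fin n → ℂ) :
    v ⬝ᵥ (∑ j ∈ s, f j) = ∑ j ∈ s, v ⬝ᵥ f j := by
  simp [dotProduct, Finset.mul_sum, Finset.sum_apply]
  rw [Finset.sum_comm]

lemma vmv_ct {n : ℕ} (u v : Fin n → ℂ) :
    (Matrix.vecMulVec u v)ᴴ = Matrix.vecMulVec (star v) (star u) := by
  ext i j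
  simp [Matrix.vecMulVec_apply, Matrix.conjTranspose_apply, mul_comm]


/-- existence of an H-palindromic (ε = 1) / H-anti-palindromic (ε = −1)
structured perturbation `ΔP` with `P(λ)x + ΔP(λ)x = 0`. -/
theorem stmt_1 {m n : ℕ} (hm : 0 < m) (hn : 0 < n)
    (ε : ℂ) (hε : ε = 1 ∨ ε = -1)
    (A : ℕ → Matrix (Fin n) (Fin n) ℂ)
    (hpal : ∀ j ≤ m, A (m - j) = ε • (A j).conjTranspose)
    (lam : ℂ) (x : Fin n → ℂ) (hx : vnorm x = 1)
    (r : Fin n → ℂ) (hr : r = -(evalP m A lam).mulVec x)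
    (Px : Matrix (Fin n) (Fin n) ℂ)
    (hPx : Px = 1 - Matrix.vecMulVec x (star x))
    (ΔA : ℕ → Matrix (Fin n) (Fin n) ℂ)
    (hΔA : ∀ j ≤ m, ΔA j =
      -((dotProduct (star x) ((A j).mulVec x)) • Matrix.vecMulVec x (star x)) +
        (LamNormSq m lam)⁻¹ •
          ((starRingEnd ℂ lam) ^ j • Matrix.vecMulVec (Px.mulVec r) (star x) +
            ε • (lam ^ (m - j) •
              Matrix.vecMulVec x (Matrix.vecMul (star r) Px)))) :
    (∀ j ≤ m, ΔA (m - j) = ε • (ΔA j).conjTranspose) ∧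
      (evalP m A lam).mulVec x + (evalP m ΔA lam).mulVec x = 0 := by
  have hε2 : ε * ε = 1 := by rcases hε with h | h <;> simp [h]
  have hεs : star ε = ε := by rcases hε with h | h <;> simp [h]
  -- star x ⬝ᵥ x = 1
  have hsum1 : ∑ i, ‖x i‖ ^ 2 = 1 := by
    have h0 : (0:ℝ) ≤ ∑ i, ‖x i‖ ^ 2 := Finset.sum_nonneg fun i _ => sq_nonneg _
    have := hx
    unfold vnorm at this
    nlinarith [Real.sq_sqrt h0, Real.sqrt_nonneg (∑ i, ‖x i‖ ^ 2)]
  have hxx : dotProduct (star x) x = 1 := by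
    have : dotProduct (star x) x = ((∑ i, ‖x i‖ ^ 2 : ℝ) : ℂ) := by
      push_cast
      simp [dotProduct, Complex.conj_mul']
    rw [this, hsum1]; norm_num
  -- Px facts
  have hPxH : Pxᴴ = Px := by
    rw [hPx]
    simp [Matrix.conjTranspose_sub, vmv_ct]
  have hPxx : Px *ᵥ x = 0 := by
    rw [hPx, Matrix.sub_mulVec, vmv_mulVec, hxx, Matrix.one_mulVec]
    simp
  constructor
  · intro j hj
    have hjm : m - (m - j) = j := Nat.sub_sub_self hj
    rw [hΔA (m - j) (Nat.sub_le m j), hΔA j hj, hjm, hpal j hj]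
    have hd : dotProduct (star x) ((ε • (A j)ᴴ) *ᵥ x)
        = ε * starRingEnd ℂ (dotProduct (star x) ((A j).mulVec x)) := by
      rw [Matrix.smul_mulVec, dotProduct_smul]
      congr 1
      have : star (dotProduct (star x) ((A j).mulVec x))
          = dotProduct (star ((A j).mulVec x)) x := by
        rw [Matrix.star_dotProduct]
        simp [dotProduct, mul_comm]
      rw [Complex.star_def] at this
      rw [this, Matrix.star_mulVec, Matrix.dotProduct_mulVec]
    rw [hd]
    simp only [Matrix.conjTranspose_add, Matrix.conjTranspose_neg, Matrix.conjTranspose_smul,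
      vmv_ct, star_star, Matrix.star_mulVec, Matrix.star_vecMul, hPxH, star_pow, star_star,
      starRingEnd_apply, hεs, star_trivial]
    have hεq : ε ^ 2 = 1 := by rw [sq]; exact hε2
    match_scalars <;> ring_nf <;> simp [hεq]
  · have hlc : ∀ k : ℕ, lam ^ k * (starRingEnd ℂ) lam ^ k = ((‖lam‖ ^ (2*k) : ℝ) : ℂ) := by
      intro k
      rw [← mul_pow, Complex.mul_conj']
      push_cast
      rw [pow_mul]
    have hL1 : (1:ℝ) ≤ LamNormSq m lam := by
      unfold LamNormSq
      have := Finset.single_le_sum (f := fun j => ‖lam‖ ^ (2*j))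
        (fun i _ => pow_nonneg (norm_nonneg _) _) (Finset.mem_range.mpr (Nat.succ_pos m))
      simpa using this
    have hL0 : LamNormSq m lam ≠ 0 := by linarith
    set p := (evalP m A lam) *ᵥ x with hp
    have hxr : star x ⬝ᵥ r = -(star x ⬝ᵥ p) := by
      rw [hr]
      simp [dotProduct_neg]
    have hPxr : Px *ᵥ r = r + (star x ⬝ᵥ p) • x := by
      rw [hPx, Matrix.sub_mulVec, Matrix.one_mulVec, vmv_mulVec, hxr]
      module
    have hterm : ∀ j ∈ Finset.range (m+1),
        lam ^ j • (ΔA j *ᵥ x)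
          = (-(lam ^ j * (star x ⬝ᵥ ((A j) *ᵥ x)))) • x
            + ((LamNormSq m lam)⁻¹ * ‖lam‖ ^ (2*j)) • (Px *ᵥ r) := by
      intro j hj
      rw [hΔA j (Nat.lt_succ_iff.mp (Finset.mem_range.mp hj))]
      have h0 : (star r ᵥ* Px) ⬝ᵥ x = 0 := by
        rw [← Matrix.dotProduct_mulVec, hPxx, dotProduct_zero]
      rw [Matrix.add_mulVec, Matrix.neg_mulVec, Matrix.smul_mulVec, vmv_mulVec, hxx,
        Matrix.smul_mulVec, Matrix.add_mulVec, Matrix.smul_mulVec,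
        Matrix.smul_mulVec, Matrix.smul_mulVec, vmv_mulVec, vmv_mulVec, hxx, h0]
      ext i
      simp only [Pi.smul_apply, Pi.add_apply, Pi.neg_apply, smul_eq_mul, Complex.real_smul,
        one_smul, zero_smul, smul_zero, add_zero, Complex.ofReal_mul, Complex.ofReal_inv]
      rw [← hlc j]
      ring
    have hsum : (evalP m ΔA lam) *ᵥ x = ∑ j ∈ Finset.range (m+1), lam ^ j • (ΔA j *ᵥ x) := by
      unfold evalP
      rw [sum_mulVec']
      exact Finset.sum_congr rfl fun j _ => Matrix.smul_mulVec _ _ _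
    have hps : ∑ j ∈ Finset.range (m+1), lam ^ j * (star x ⬝ᵥ ((A j) *ᵥ x)) = star x ⬝ᵥ p := by
      rw [hp]
      unfold evalP
      rw [sum_mulVec', dp_sum']
      exact Finset.sum_congr rfl fun j _ => by
        rw [Matrix.smul_mulVec, dotProduct_smul, smul_eq_mul]
    have hcs : ∑ j ∈ Finset.range (m+1), ((LamNormSq m lam)⁻¹ * ‖lam‖ ^ (2*j)) = 1 := by
      rw [← Finset.mul_sum]
      unfold LamNormSq
      exact inv_mul_cancel₀ hL0
    rw [hsum, Finset.sum_congr rfl hterm, Finset.sum_add_distrib, ← Finset.sum_smul,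
      ← Finset.sum_smul, hcs]
    have : ∑ j ∈ Finset.range (m+1), (-(lam ^ j * (star x ⬝ᵥ ((A j) *ᵥ x)))) = -(star x ⬝ᵥ p) := by
      rw [← hps, Finset.sum_neg_distrib]
    rw [this, hPxr, hr, one_smul]
    module
end
end

section
/- Let m be odd and let P be a regular T-palindromic matrix polynomial of degree m with n×n coefficients, and let x ∈ ℂⁿ with ‖x‖₂ = 1. Then the Frobenius-norm structured backward error over the class S_p of T-palindromic polynomials of degree m at λ = −1 satisfies η_F^{S_p}(−1, x, P) = √(2/(m+1)) · ‖P(−1)x‖₂. -/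
noncomputable section

/-- Frobenius-norm structured backward error over T-palindromic polynomials of degree `m`. -/
def etaF_Tpal {n : ℕ} (m : ℕ) (A : ℕ → Matrix (Fin n) (Fin n) ℂ) (lam : ℂ)
    (x : Fin n → ℂ) : ℝ :=
  sInf { e : ℝ | ∃ Δ : ℕ → Matrix (Fin n) (Fin n) ℂ,
    (∀ j ≤ m, Δ (m - j) = (Δ j).transpose) ∧
    (evalP m A lam).mulVec x + (evalP m Δ lam).mulVec x = 0 ∧
    e = Real.sqrt (∑ j ∈ Finset.range (m + 1), frobNorm (Δ j) ^ 2) }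

/- ================= Auxiliary material ================= -/

open scoped ComplexConjugate
open Finset

variable {n : ℕ}

/-- Viewing a matrix as a vector in Euclidean space (for the Frobenius norm). -/
def uL {n : ℕ} : Matrix (Fin n) (Fin n) ℂ →ₗ[ℂ] EuclideanSpace ℂ (Fin n × Fin n) where
  toFun M := WithLp.toLp 2 (fun p : Fin n × Fin n => M p.1 p.2)
  map_add' _ _ := rfl
  map_smul' _ _ := rfl

lemma frobNorm_eq_norm_uL (M : Matrix (Fin n) (Fin n) ℂ) :
    frobNorm M = ‖uL M‖ := by
  rw [frobNorm, EuclideanSpace.norm_eq, Fintype.sum_prod_type]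
  rfl

lemma S0_transpose (x r : Fin n → ℂ) :
    (Matrix.of fun i k => r i * conj (x k) - conj (x i) * r k :
      Matrix (Fin n) (Fin n) ℂ).transpose
    = -(Matrix.of fun i k => r i * conj (x k) - conj (x i) * r k) := by
  ext i k
  simp [Matrix.transpose_apply]
  ring

lemma S0_mulVec (x r : Fin n → ℂ) (hx : ∑ k, conj (x k) * x k = 1)
    (hrx : ∑ k, r k * x k = 0) :
    (Matrix.of fun i k => r i * conj (x k) - conj (x i) * r k :
      Matrix (Fin n) (Fin n) ℂ).mulVec x = r := by
  funext i
  simp only [Matrix.mulVec, dotProduct, Matrix.of_apply]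
  have : ∀ k, (r i * conj (x k) - conj (x i) * r k) * x k
      = r i * (conj (x k) * x k) - conj (x i) * (r k * x k) := by intro k; ring
  rw [Fintype.sum_congr _ _ this, Finset.sum_sub_distrib, ← Finset.mul_sum, ← Finset.mul_sum,
    hx, hrx]
  ring

lemma S0_vecMul (x r : Fin n → ℂ) (hx : ∑ k, conj (x k) * x k = 1)
    (hrx : ∑ k, r k * x k = 0) :
    Matrix.vecMul x (Matrix.of fun i k => r i * conj (x k) - conj (x i) * r k :
      Matrix (Fin n) (Fin n) ℂ) = -r := by
  funext k
  simp only [Matrix.vecMul, dotProduct, Matrix.of_apply, Pi.neg_apply]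
  have : ∀ i, x i * (r i * conj (x k) - conj (x i) * r k)
      = conj (x k) * (r i * x i) - r k * (conj (x i) * x i) := by intro i; ring
  rw [Fintype.sum_congr _ _ this, Finset.sum_sub_distrib, ← Finset.mul_sum, ← Finset.mul_sum]
  have h1 : ∑ i, r i * x i = 0 := hrx
  have h2 : ∑ i, conj (x i) * x i = 1 := hx
  rw [h1, h2]
  ring

lemma skew_quad (M : Matrix (Fin n) (Fin n) ℂ) (hM : M.transpose = -M) (x : Fin n → ℂ) :
    ∑ k, x k * M.mulVec x k = 0 := by
  have hMd : ∀ i k, M k i = -M i k := by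
    intro i k
    have := congrFun (congrFun hM i) k
    simpa [Matrix.transpose_apply] using this
  have hq : (∑ k, x k * M.mulVec x k) = -(∑ k, x k * M.mulVec x k) := by
    calc (∑ k, x k * M.mulVec x k) = ∑ k, ∑ i, x k * (M k i * x i) := by
          simp [Matrix.mulVec, dotProduct, Finset.mul_sum]
      _ = ∑ i, ∑ k, x k * (M k i * x i) := Finset.sum_comm
      _ = ∑ i, ∑ k, -(x i * (M i k * x k)) := by
          refine Finset.sum_congr rfl fun i _ => Finset.sum_congr rfl fun k _ => ?_
          rw [hMd k i]; ring
      _ = -(∑ i, ∑ k, x i * (M i k * x k)) := by simp [Finset.sum_neg_distrib]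
      _ = -(∑ k, x k * M.mulVec x k) := by
          simp [Matrix.mulVec, dotProduct, Finset.mul_sum]
  exact self_eq_neg.mp hq

lemma neg_one_pow_sub {K : Type*} [Field K] {m j : ℕ} (hm : Odd m) (hj : j ≤ m) :
    ((-1 : K)) ^ (m - j) = -((-1) ^ j) := by
  have h1 : ((-1 : K)) ^ (m - j) * (-1) ^ j = (-1) ^ m := by
    rw [← pow_add, Nat.sub_add_cancel hj]
  have h2 : ((-1 : K)) ^ j * (-1) ^ j = 1 := by
    rw [← mul_pow]; norm_num
  have h3 : ((-1 : K)) ^ m = -1 := Odd.neg_one_pow hm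
  calc ((-1 : K)) ^ (m - j) = ((-1) ^ (m - j) * (-1) ^ j) * (-1) ^ j := by
        rw [mul_assoc, h2, mul_one]
    _ = -((-1) ^ j) := by rw [h1, h3]; ring

lemma evalP_neg_one_skew {m : ℕ} (hm : Odd m) (B : ℕ → Matrix (Fin n) (Fin n) ℂ)
    (hp : ∀ j ≤ m, B (m - j) = (B j).transpose) :
    (evalP m B (-1)).transpose = -(evalP m B (-1)) := by
  unfold evalP
  rw [Matrix.transpose_sum]
  simp only [Matrix.transpose_smul]
  have step1 : ∀ j ∈ Finset.range (m + 1),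
      ((-1 : ℂ)) ^ j • (B j).transpose = (fun j => ((-1 : ℂ)) ^ (m - j) • B j) (m - j) := by
    intro j hj
    have hjm : j ≤ m := Nat.lt_succ_iff.mp (Finset.mem_range.mp hj)
    rw [← hp j hjm]
    congr 1
    rw [Nat.sub_sub_self hjm]
  rw [Finset.sum_congr rfl step1]
  have : ∀ j ∈ Finset.range (m + 1),
      (fun j => ((-1 : ℂ)) ^ (m - j) • B j) (m - j)
        = (fun j => ((-1 : ℂ)) ^ (m - j) • B j) (m + 1 - 1 - j) := by
    intro j hj; rfl
  have hr := Finset.sum_range_reflect (fun j => ((-1 : ℂ)) ^ (m - j) • B j) (m + 1)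
  rw [Finset.sum_congr rfl this, hr]
  rw [← Finset.sum_neg_distrib]
  refine Finset.sum_congr rfl fun j hj => ?_
  have hjm : j ≤ m := Nat.lt_succ_iff.mp (Finset.mem_range.mp hj)
  rw [neg_one_pow_sub hm hjm, neg_smul]

lemma S0_inner (x r : Fin n → ℂ) (M : Matrix (Fin n) (Fin n) ℂ)
    (h1 : M.mulVec x = r) (h2 : Matrix.vecMul x M = -r) :
    (inner ℂ (uL (Matrix.of fun i k => r i * conj (x k) - conj (x i) * r k)) (uL M) : ℂ)
      = ((2 * ∑ i, ‖r i‖ ^ 2 : ℝ) : ℂ) := by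
  rw [PiLp.inner_apply]
  have : ∀ p : Fin n × Fin n,
      (inner ℂ ((uL (Matrix.of fun i k => r i * conj (x k) - conj (x i) * r k :
        Matrix (Fin n) (Fin n) ℂ)) p) ((uL M) p) : ℂ)
      = conj (r p.1) * (M p.1 p.2 * x p.2) - conj (r p.2) * (x p.1 * M p.1 p.2) := by
    intro p
    change (inner ℂ ((Matrix.of fun i k => r i * conj (x k) - conj (x i) * r k :
      Matrix (Fin n) (Fin n) ℂ) p.1 p.2) (M p.1 p.2) : ℂ) = _
    simp only [RCLike.inner_apply, uL, LinearMap.coe_mk, AddHom.coe_mk, WithLp.ofLp_toLp, Matrix.of_apply,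
      map_sub, map_mul, RingHom.id_apply, Complex.conj_conj]
    ring
  rw [Fintype.sum_congr _ _ this, Fintype.sum_prod_type]
  have e1 : ∀ i, ∑ k, (conj (r i) * (M i k * x k) - conj (r k) * (x i * M i k))
      = conj (r i) * (M.mulVec x i) - ∑ k, conj (r k) * (x i * M i k) := by
    intro i
    rw [Finset.sum_sub_distrib, ← Finset.mul_sum]
    rfl
  rw [Fintype.sum_congr _ _ e1, Finset.sum_sub_distrib]
  have e2 : ∑ i, ∑ k, conj (r k) * (x i * M i k) = ∑ k, conj (r k) * (Matrix.vecMul x M k) := by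
    rw [Finset.sum_comm]
    congr 1
    ext k
    rw [← Finset.mul_sum]
    rfl
  rw [e2, h1, h2]
  have e3 : ∀ z : ℂ, conj z * z = ((‖z‖ ^ 2 : ℝ) : ℂ) := fun z => by
    rw [RCLike.conj_mul]; norm_cast
  simp only [Pi.neg_apply, mul_neg, e3, Finset.sum_neg_distrib]
  push_cast
  ring

lemma norm_uL_S0_sq (x r : Fin n → ℂ) (hx : ∑ k, conj (x k) * x k = 1)
    (hrx : ∑ k, r k * x k = 0) :
    ‖uL (Matrix.of fun i k => r i * conj (x k) - conj (x i) * r k)‖ ^ 2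
      = 2 * ∑ i, ‖r i‖ ^ 2 := by
  have hi := S0_inner x r _ (S0_mulVec x r hx hrx) (S0_vecMul x r hx hrx)
  rw [inner_self_eq_norm_sq_to_K] at hi
  have hi' : ((‖uL (Matrix.of fun i k => r i * conj (x k) - conj (x i) * r k)‖ ^ 2 : ℝ) : ℂ)
      = ((2 * ∑ i, ‖r i‖ ^ 2 : ℝ) : ℂ) := by rw [Complex.ofReal_pow]; exact hi
  exact Complex.ofReal_injective hi'

lemma lower_key (M : Matrix (Fin n) (Fin n) ℂ) (x : Fin n → ℂ)
    (hskew : M.transpose = -M) (hx : ∑ k, conj (x k) * x k = 1) :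
    2 * ∑ i, ‖M.mulVec x i‖ ^ 2 ≤ ‖uL M‖ ^ 2 := by
  set r := M.mulVec x with hr
  have hrx : ∑ k, r k * x k = 0 := by
    have h := skew_quad M hskew x
    calc ∑ k, r k * x k = ∑ k, x k * M.mulVec x k := by
          refine Finset.sum_congr rfl fun k _ => ?_; rw [hr]; ring
      _ = 0 := h
  have h2 : Matrix.vecMul x M = -r := by
    rw [← Matrix.mulVec_transpose, hskew, Matrix.neg_mulVec]
  have hi := S0_inner x r M rfl h2
  have hv := norm_uL_S0_sq x r hx hrx
  have hcs := norm_inner_le_norm (𝕜 := ℂ)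
    (uL (Matrix.of fun i k => r i * conj (x k) - conj (x i) * r k)) (uL M)
  rw [hi] at hcs
  have hR : (0 : ℝ) ≤ ∑ i, ‖r i‖ ^ 2 := by positivity
  have hnorm : ‖((2 * ∑ i, ‖r i‖ ^ 2 : ℝ) : ℂ)‖ = 2 * ∑ i, ‖r i‖ ^ 2 := by
    rw [Complex.norm_real, Real.norm_eq_abs, abs_of_nonneg (by linarith)]
  rw [hnorm] at hcs
  set a := ‖uL (Matrix.of fun i k => r i * conj (x k) - conj (x i) * r k)‖
  set b := ‖uL M‖
  have ha : 0 ≤ a := norm_nonneg _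
  have hb : 0 ≤ b := norm_nonneg _
  nlinarith [sq_nonneg (a - b)]

/- ================= Main theorem ================= -/

set_option maxHeartbeats 1600000 in
/-- Frobenius structured backward error, T-palindromic, m odd, λ = −1. -/
theorem stmt_4 {m n : ℕ} (hm : Odd m) (hn : 0 < n)
    (A : ℕ → Matrix (Fin n) (Fin n) ℂ)
    (hpal : ∀ j ≤ m, A (m - j) = (A j).transpose)
    (hreg : ∃ z : ℂ, (evalP m A z).det ≠ 0)
    (x : Fin n → ℂ) (hx : vnorm x = 1) :
    etaF_Tpal m A (-1) x =
      Real.sqrt (2 / ((m : ℝ) + 1)) * vnorm ((evalP m A (-1)).mulVec x) := by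
  classical
  -- normalization of x
  have hxsum : ∑ i, ‖x i‖ ^ 2 = 1 := by
    have h0 : (0:ℝ) ≤ ∑ i, ‖x i‖ ^ 2 := Finset.sum_nonneg fun i _ => sq_nonneg _
    have h1 := Real.sq_sqrt h0
    rw [show Real.sqrt (∑ i, ‖x i‖ ^ 2) = 1 from hx, one_pow] at h1
    exact h1.symm
  have hxC : ∑ k, conj (x k) * x k = (1 : ℂ) := by
    have e : ∀ k, conj (x k) * x k = ((‖x k‖ ^ 2 : ℝ) : ℂ) := fun k => by
      rw [RCLike.conj_mul]; norm_cast
    rw [Fintype.sum_congr _ _ e, ← Complex.ofReal_sum, hxsum, Complex.ofReal_one]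
  set y := (evalP m A (-1)).mulVec x with hy
  set R : ℝ := ∑ i, ‖y i‖ ^ 2 with hR
  have hR0 : 0 ≤ R := Finset.sum_nonneg fun i _ => sq_nonneg _
  have hm1 : (0:ℝ) < (m:ℝ) + 1 := by positivity
  have hPskew := evalP_neg_one_skew hm A hpal
  have hyx : ∑ k, y k * x k = 0 := by
    have h := skew_quad (evalP m A (-1)) hPskew x
    calc ∑ k, y k * x k = ∑ k, x k * (evalP m A (-1)).mulVec x k := by
          refine Finset.sum_congr rfl fun k _ => ?_; rw [hy]; ring
      _ = 0 := h
  have hrx : ∑ k, (-y) k * x k = 0 := by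
    have : ∀ k, (-y) k * x k = -(y k * x k) := fun k => by simp
    rw [Fintype.sum_congr _ _ this, Finset.sum_neg_distrib, hyx, neg_zero]
  set S0m : Matrix (Fin n) (Fin n) ℂ :=
    Matrix.of (fun i k => (-y) i * conj (x k) - conj (x i) * (-y) k) with hS0m
  have hrnorm : ∑ i, ‖(-y) i‖ ^ 2 = R := by
    rw [hR]; exact Finset.sum_congr rfl fun i _ => by simp
  have hvS0 : ‖uL S0m‖ ^ 2 = 2 * R := by
    rw [hS0m, norm_uL_S0_sq x (-y) hxC hrx, hrnorm]
  set c : ℝ := Real.sqrt (2 / ((m:ℝ) + 1)) * vnorm y with hc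
  have hvnormy : vnorm y = Real.sqrt R := rfl
  have hc0 : 0 ≤ c := mul_nonneg (Real.sqrt_nonneg _) (by rw [hvnormy]; exact Real.sqrt_nonneg _)
  have hcsq : c ^ 2 = 2 / ((m:ℝ)+1) * R := by
    rw [hc, hvnormy, mul_pow, Real.sq_sqrt (by positivity), Real.sq_sqrt hR0]
  have hT : S0m.transpose = -S0m := by rw [hS0m]; exact S0_transpose x (-y)
  -- the optimal perturbation
  set c' : ℂ := (((m:ℕ) : ℂ) + 1)⁻¹ with hc'
  set Δopt : ℕ → Matrix (Fin n) (Fin n) ℂ := fun j => (((-1:ℂ))^j * c') • S0m with hΔopt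
  have hmem : ∃ Δ : ℕ → Matrix (Fin n) (Fin n) ℂ,
      (∀ j ≤ m, Δ (m - j) = (Δ j).transpose) ∧
      (evalP m A (-1)).mulVec x + (evalP m Δ (-1)).mulVec x = 0 ∧
      c = Real.sqrt (∑ j ∈ Finset.range (m + 1), frobNorm (Δ j) ^ 2) := by
    refine ⟨Δopt, ?_, ?_, ?_⟩
    · intro j hj
      rw [hΔopt]
      simp only
      rw [Matrix.transpose_smul, hT, smul_neg, ← neg_smul]
      congr 1
      rw [neg_one_pow_sub hm hj]
      ring
    · have hevalΔ : evalP m Δopt (-1) = S0m := by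
        unfold evalP
        have e : ∀ j ∈ Finset.range (m+1), (-1:ℂ)^j • Δopt j = c' • S0m := by
          intro j _
          rw [hΔopt]
          simp only
          rw [smul_smul]
          congr 1
          have h2 : ((-1:ℂ))^j * ((-1)^j * c') = (((-1:ℂ))^j * (-1)^j) * c' := by ring
          have h3 : ((-1:ℂ))^j * (-1)^j = 1 := by rw [← mul_pow]; norm_num
          rw [h2, h3, one_mul]
        rw [Finset.sum_congr rfl e, Finset.sum_const, Finset.card_range,
          ← Nat.cast_smul_eq_nsmul ℂ, smul_smul]
        have : ((m + 1 : ℕ) : ℂ) * c' = 1 := by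
          rw [hc']
          push_cast
          rw [mul_inv_cancel₀ (by
            exact_mod_cast Nat.cast_add_one_ne_zero (R := ℂ) m)]
        rw [this, one_smul]
      rw [hevalΔ, hS0m, S0_mulVec x (-y) hxC hrx]
      exact add_neg_cancel _
    · have e : ∀ j ∈ Finset.range (m+1),
          frobNorm (Δopt j) ^ 2 = ((m:ℝ)+1)⁻¹ ^ 2 * (2 * R) := by
        intro j _
        rw [frobNorm_eq_norm_uL, hΔopt]
        simp only
        rw [map_smul, norm_smul, mul_pow, hvS0]
        congr 1
        have hms : ‖c'‖ = ((m:ℝ)+1)⁻¹ := by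
          rw [hc', norm_inv]
          have : ((m:ℕ) : ℂ) + 1 = (((m:ℝ) + 1 : ℝ) : ℂ) := by push_cast; ring
          rw [this, Complex.norm_real, Real.norm_eq_abs, abs_of_pos hm1]
        rw [norm_mul, norm_pow, norm_neg, norm_one, one_pow, one_mul, hms]
      rw [Finset.sum_congr rfl e, Finset.sum_const, Finset.card_range, nsmul_eq_mul]
      have : ((m+1 : ℕ) : ℝ) * (((m:ℝ)+1)⁻¹ ^ 2 * (2 * R)) = c ^ 2 := by
        rw [hcsq]
        push_cast
        field_simp
      rw [this, Real.sqrt_sq hc0]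
  -- lower bound
  have hlb : ∀ e ∈ { e : ℝ | ∃ Δ : ℕ → Matrix (Fin n) (Fin n) ℂ,
      (∀ j ≤ m, Δ (m - j) = (Δ j).transpose) ∧
      (evalP m A (-1)).mulVec x + (evalP m Δ (-1)).mulVec x = 0 ∧
      e = Real.sqrt (∑ j ∈ Finset.range (m + 1), frobNorm (Δ j) ^ 2) }, c ≤ e := by
    rintro e ⟨Δ, hp, heq, rfl⟩
    have hskewS := evalP_neg_one_skew hm Δ hp
    have hSx : (evalP m Δ (-1)).mulVec x = -y := eq_neg_of_add_eq_zero_right heq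
    have hlow := lower_key (evalP m Δ (-1)) x hskewS hxC
    rw [hSx, hrnorm] at hlow
    have huSum : uL (evalP m Δ (-1)) = ∑ j ∈ Finset.range (m+1), ((-1:ℂ))^j • uL (Δ j) := by
      unfold evalP
      rw [map_sum]
      exact Finset.sum_congr rfl fun j _ => by rw [map_smul]
    have htri : ‖uL (evalP m Δ (-1))‖ ≤ ∑ j ∈ Finset.range (m+1), ‖uL (Δ j)‖ := by
      rw [huSum]
      refine le_trans (norm_sum_le _ _) (Finset.sum_le_sum fun j _ => ?_)
      rw [norm_smul, norm_pow, norm_neg, norm_one, one_pow, one_mul]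
    have hcs2 := sq_sum_le_card_mul_sum_sq (s := Finset.range (m+1))
      (f := fun j => ‖uL (Δ j)‖)
    rw [Finset.card_range] at hcs2
    have h2 : ‖uL (evalP m Δ (-1))‖ ^ 2 ≤ (∑ j ∈ Finset.range (m+1), ‖uL (Δ j)‖) ^ 2 :=
      pow_le_pow_left₀ (norm_nonneg _) htri 2
    have hfrob : ∑ j ∈ Finset.range (m+1), frobNorm (Δ j) ^ 2
        = ∑ j ∈ Finset.range (m+1), ‖uL (Δ j)‖ ^ 2 :=
      Finset.sum_congr rfl fun j _ => by rw [frobNorm_eq_norm_uL]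
    have hbig : 2 * R ≤ ((m:ℝ)+1) * ∑ j ∈ Finset.range (m+1), ‖uL (Δ j)‖ ^ 2 := by
      have : ((m+1 : ℕ) : ℝ) = (m:ℝ) + 1 := by push_cast; ring
      rw [this] at hcs2
      calc 2 * R ≤ ‖uL (evalP m Δ (-1))‖ ^ 2 := hlow
        _ ≤ (∑ j ∈ Finset.range (m+1), ‖uL (Δ j)‖) ^ 2 := h2
        _ ≤ ((m:ℝ)+1) * ∑ j ∈ Finset.range (m+1), ‖uL (Δ j)‖ ^ 2 := hcs2
    have hchain : c ^ 2 ≤ ∑ j ∈ Finset.range (m+1), frobNorm (Δ j) ^ 2 := by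
      rw [hfrob, hcsq, div_mul_eq_mul_div, div_le_iff₀ hm1, mul_comm _ ((m:ℝ)+1)]
      linarith [hbig]
    calc c = Real.sqrt (c ^ 2) := (Real.sqrt_sq hc0).symm
      _ ≤ Real.sqrt (∑ j ∈ Finset.range (m+1), frobNorm (Δ j) ^ 2) :=
        Real.sqrt_le_sqrt hchain
  have hunf : etaF_Tpal m A (-1) x = sInf { e : ℝ | ∃ Δ : ℕ → Matrix (Fin n) (Fin n) ℂ,
      (∀ j ≤ m, Δ (m - j) = (Δ j).transpose) ∧
      (evalP m A (-1)).mulVec x + (evalP m Δ (-1)).mulVec x = 0 ∧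
      e = Real.sqrt (∑ j ∈ Finset.range (m + 1), frobNorm (Δ j) ^ 2) } := rfl
  rw [hunf]
  exact IsLeast.csInf_eq ⟨hmem, hlb⟩
end
end

section
/- Let m be odd, let P be a regular T-anti-palindromic matrix polynomial of degree m with n×n coefficients, let λ ∈ ℂ with λ ≠ 1, and let x ∈ ℂⁿ with ‖x‖₂ = 1; set r := −P(λ)x. Then the Frobenius-norm structured backward error over the class S_ap of T-anti-palindromic polynomials of degree m satisfies η_F^{S_ap}(λ, x, P) = [ (2/‖Λ_m‖₂²)·‖r‖₂² + ( 1/‖Π₋(Λ_m)‖₂² − 2/‖Λ_m‖₂² )·|xᵀr|² ]^{1/2}. -/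
noncomputable section

/-- Frobenius-norm structured backward error over T-anti-palindromic polynomials of degree `m`. -/
def etaF_Tapal {n : ℕ} (m : ℕ) (A : ℕ → Matrix (Fin n) (Fin n) ℂ) (lam : ℂ)
    (x : Fin n → ℂ) : ℝ :=
  sInf { e : ℝ | ∃ Δ : ℕ → Matrix (Fin n) (Fin n) ℂ,
    (∀ j ≤ m, Δ (m - j) = -(Δ j).transpose) ∧
    (evalP m A lam).mulVec x + (evalP m Δ lam).mulVec x = 0 ∧
    e = Real.sqrt (∑ j ∈ Finset.range (m + 1), frobNorm (Δ j) ^ 2) }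

namespace Stmt5Aux

open Finset Complex Matrix

local notation "conj'" => starRingEnd ℂ

variable {n : ℕ}

def N2 (v : Fin n → ℂ) : ℝ := ∑ i, Complex.normSq (v i)

def FS (A : Matrix (Fin n) (Fin n) ℂ) : ℝ := ∑ i, ∑ j, Complex.normSq (A i j)

lemma N2_nonneg (v : Fin n → ℂ) : 0 ≤ N2 v :=
  Finset.sum_nonneg fun _ _ => Complex.normSq_nonneg _

lemma FS_nonneg (A : Matrix (Fin n) (Fin n) ℂ) : 0 ≤ FS A :=
  Finset.sum_nonneg fun _ _ => Finset.sum_nonneg fun _ _ => Complex.normSq_nonneg _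

lemma vnorm_sq (v : Fin n → ℂ) : vnorm v ^ 2 = N2 v := by
  rw [vnorm, Real.sq_sqrt (Finset.sum_nonneg fun _ _ => sq_nonneg _)]
  simp [N2, Complex.sq_norm]

lemma frob_sq (A : Matrix (Fin n) (Fin n) ℂ) : frobNorm A ^ 2 = FS A := by
  rw [frobNorm, Real.sq_sqrt (Finset.sum_nonneg fun _ _ => Finset.sum_nonneg fun _ _ => sq_nonneg _)]
  simp [FS, Complex.sq_norm]

lemma FS_neg_transpose (A : Matrix (Fin n) (Fin n) ℂ) : FS (-(A.transpose)) = FS A := by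
  simp only [FS, Matrix.neg_apply, Matrix.transpose_apply, Complex.normSq_neg]
  exact Finset.sum_comm

/-- pair splitting of a sum over `range (2k+2)` -/
lemma pair_sum {M : Type*} [AddCommMonoid M] (k : ℕ) (f : ℕ → M) :
    ∑ j ∈ Finset.range (2*k+1+1), f j
      = ∑ j ∈ Finset.range (k+1), (f j + f (2*k+1 - j)) := by
  rw [Finset.sum_add_distrib]
  have h1 : ∑ j ∈ Finset.range (k+1), f (2*k+1-j)
      = ∑ j ∈ Finset.Ico (k+1) (2*k+1+1), f j := by
    refine Finset.sum_nbij' (fun j => 2*k+1-j) (fun j => 2*k+1-j) ?_ ?_ ?_ ?_ ?_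
    · intro a ha; simp only [Finset.mem_range] at ha; simp only [Finset.mem_Ico]; omega
    · intro a ha; simp only [Finset.mem_Ico] at ha; simp only [Finset.mem_range]; omega
    · intro a ha; simp only [Finset.mem_range] at ha; show 2*k+1-(2*k+1-a) = a; omega
    · intro a ha; simp only [Finset.mem_Ico] at ha; show 2*k+1-(2*k+1-a) = a; omega
    · intro a ha; rfl
  rw [h1, Finset.range_eq_Ico, Finset.range_eq_Ico]
  exact (Finset.sum_Ico_consecutive f (by omega : 0 ≤ k+1) (by omega : k+1 ≤ 2*k+1+1)).symm

lemma N2_add_orth (f g : Fin n → ℂ) (h : ∑ i, f i * conj' (g i) = 0) :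
    (∑ i, Complex.normSq (f i + g i)) = N2 f + N2 g := by
  have : ∀ i, Complex.normSq (f i + g i)
      = Complex.normSq (f i) + Complex.normSq (g i) + 2*(f i * conj' (g i)).re := by
    intro i; exact Complex.normSq_add _ _
  rw [Finset.sum_congr rfl fun i _ => this i]
  rw [Finset.sum_add_distrib, Finset.sum_add_distrib]
  have : ∑ i, 2*(f i * conj' (g i)).re = 2 * (∑ i, f i * conj' (g i)).re := by
    rw [Complex.re_sum, Finset.mul_sum]
  rw [this, h]
  simp [N2]

lemma N2_smul (c : ℂ) (g : Fin n → ℂ) : N2 (fun i => c * g i) = Complex.normSq c * N2 g := by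
  simp [N2, Complex.normSq_mul, Finset.mul_sum]

lemma sum_conj_mul_self (x : Fin n → ℂ) (hx : ∑ i, Complex.normSq (x i) = 1) :
    ∑ i, x i * conj' (x i) = 1 := by
  have : ∀ i, x i * conj' (x i) = ((Complex.normSq (x i) : ℝ) : ℂ) := fun i => Complex.mul_conj _
  rw [Finset.sum_congr rfl fun i _ => this i, ← Complex.ofReal_sum, hx, Complex.ofReal_one]

lemma N2_sub_proj (x v : Fin n → ℂ) (hx : ∑ i, Complex.normSq (x i) = 1) :
    N2 (fun i => v i - (dotProduct x v) * conj' (x i))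
      = N2 v - Complex.normSq (dotProduct x v) := by
  set d := dotProduct x v with hd
  set w : Fin n → ℂ := fun i => v i - d * conj' (x i) with hw
  have hwx : ∑ i, w i * x i = 0 := by
    simp only [hw, sub_mul, Finset.sum_sub_distrib, mul_assoc]
    rw [← Finset.mul_sum]
    have h1 : ∑ i, conj' (x i) * x i = 1 := by
      rw [Finset.sum_congr rfl (fun i _ => mul_comm (conj' (x i)) (x i))]
      exact sum_conj_mul_self x hx
    have h2 : ∑ i, v i * x i = d := by
      rw [hd, dotProduct]
      exact Finset.sum_congr rfl fun i _ => mul_comm _ _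
    rw [h1, h2, mul_one, sub_self]
  have key : N2 v = N2 w + Complex.normSq d := by
    have hv : ∀ i, v i = w i + d * conj' (x i) := by intro i; simp [hw]
    have : N2 v = ∑ i, Complex.normSq (w i + d * conj' (x i)) := by
      unfold N2; exact Finset.sum_congr rfl fun i _ => by rw [← hv i]
    rw [this, N2_add_orth]
    · rw [N2_smul]
      have : N2 (fun i => conj' (x i)) = 1 := by
        simpa [N2, Complex.normSq_conj] using hx
      rw [this, mul_one]
    · have : ∀ i, w i * conj' (d * conj' (x i)) = conj' d * (w i * x i) := by
        intro i; simp only [_root_.map_mul, Complex.conj_conj]; ring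
      rw [Finset.sum_congr rfl fun i _ => this i, ← Finset.mul_sum, hwx, mul_zero]
  rw [key]; ring

/-- the minimal-norm matrix with prescribed `Mx = p`, `Mᵀx = q` -/
def Mmat (x p q : Fin n → ℂ) : Matrix (Fin n) (Fin n) ℂ :=
  Matrix.of fun i l => p i * conj' (x l)
    + conj' (x i) * (q l - (dotProduct x p) * conj' (x l))

lemma normSq_eq_norm_sq (z : ℂ) : Complex.normSq z = ‖z‖^2 := by
  rw [Complex.sq_norm]

lemma Mmat_mulVec (x p q : Fin n → ℂ) (hx : ∑ i, Complex.normSq (x i) = 1)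
    (hq : dotProduct x q = dotProduct x p) :
    (Mmat x p q).mulVec x = p := by
  funext i
  have hs1 : ∑ l, conj' (x l) * x l = 1 := by
    rw [Finset.sum_congr rfl (fun l (_ : l ∈ Finset.univ) => mul_comm (conj' (x l)) (x l))]
    exact sum_conj_mul_self x hx
  have hs2 : ∑ l, q l * x l = dotProduct x p := by
    rw [← hq, dotProduct]; exact Finset.sum_congr rfl fun l _ => mul_comm _ _
  show ∑ l, (p i * conj' (x l) + conj' (x i) * (q l - dotProduct x p * conj' (x l))) * x l = p i
  have expand : ∀ l, (p i * conj' (x l) + conj' (x i) * (q l - dotProduct x p * conj' (x l))) * x l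
      = p i * (conj' (x l) * x l) + conj' (x i) * (q l * x l)
        - (conj' (x i) * dotProduct x p) * (conj' (x l) * x l) := by intro l; ring
  rw [Finset.sum_congr rfl fun l _ => expand l]
  rw [Finset.sum_sub_distrib, Finset.sum_add_distrib, ← Finset.mul_sum, ← Finset.mul_sum,
    ← Finset.mul_sum, hs1, hs2]
  ring

lemma Mmat_transpose_mulVec (x p q : Fin n → ℂ) (hx : ∑ i, Complex.normSq (x i) = 1) :
    (Mmat x p q).transpose.mulVec x = q := by
  funext l
  have hs1 : ∑ i, conj' (x i) * x i = 1 := by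
    rw [Finset.sum_congr rfl (fun i (_ : i ∈ Finset.univ) => mul_comm (conj' (x i)) (x i))]
    exact sum_conj_mul_self x hx
  have hs2 : ∑ i, p i * x i = dotProduct x p := by
    rw [dotProduct]; exact Finset.sum_congr rfl fun i _ => mul_comm _ _
  show ∑ i, (p i * conj' (x l) + conj' (x i) * (q l - dotProduct x p * conj' (x l))) * x i = q l
  have expand : ∀ i, (p i * conj' (x l) + conj' (x i) * (q l - dotProduct x p * conj' (x l))) * x i
      = conj' (x l) * (p i * x i)
        + (q l - dotProduct x p * conj' (x l)) * (conj' (x i) * x i) := by intro i; ring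
  rw [Finset.sum_congr rfl fun i _ => expand i]
  rw [Finset.sum_add_distrib, ← Finset.mul_sum, ← Finset.mul_sum, hs1, hs2]
  ring

lemma FS_Mmat (x p q : Fin n → ℂ) (hx : ∑ i, Complex.normSq (x i) = 1)
    (hq : dotProduct x q = dotProduct x p) :
    FS (Mmat x p q) = N2 p + N2 q - Complex.normSq (dotProduct x p) := by
  set d : ℂ := dotProduct x p with hd
  set e : Fin n → ℂ := fun l => q l - d * conj' (x l) with he
  have hxe : ∑ l, x l * e l = 0 := by
    simp only [he, mul_sub, Finset.sum_sub_distrib]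
    have h1 : ∑ l, x l * q l = d := by rw [← hq]; rfl
    have h2 : ∑ l, x l * (d * conj' (x l)) = d := by
      have : ∀ l, x l * (d * conj' (x l)) = d * (x l * conj' (x l)) := fun l => by ring
      rw [Finset.sum_congr rfl fun l _ => this l, ← Finset.mul_sum, sum_conj_mul_self x hx, mul_one]
    rw [h1, h2, sub_self]
  have hN2e : N2 e = N2 q - Complex.normSq d := by
    have := N2_sub_proj x q hx
    rw [hq] at this
    simpa [he, hd] using this
  -- entrywise expansion
  have entry : ∀ i l, Complex.normSq (Mmat x p q i l)
      = Complex.normSq (p i) * Complex.normSq (x l)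
        + Complex.normSq (x i) * Complex.normSq (e l)
        + 2 * ((p i * x i) * (conj' (x l) * conj' (e l))).re := by
    intro i l
    have h0 : Mmat x p q i l = p i * conj' (x l) + conj' (x i) * e l := rfl
    rw [h0, Complex.normSq_add]
    have h1 : Complex.normSq (p i * conj' (x l)) = Complex.normSq (p i) * Complex.normSq (x l) := by
      rw [Complex.normSq_mul, Complex.normSq_conj]
    have h2 : Complex.normSq (conj' (x i) * e l) = Complex.normSq (x i) * Complex.normSq (e l) := by
      rw [Complex.normSq_mul, Complex.normSq_conj]
    have h3 : p i * conj' (x l) * conj' (conj' (x i) * e l)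
        = (p i * x i) * (conj' (x l) * conj' (e l)) := by
      simp only [_root_.map_mul, Complex.conj_conj]; ring
    rw [h1, h2, h3]
  have hce : ∑ l, conj' (x l) * conj' (e l) = 0 := by
    have : ∀ l, conj' (x l) * conj' (e l) = conj' (x l * e l) := fun l => by
      rw [_root_.map_mul]
    rw [Finset.sum_congr rfl fun l _ => this l, ← map_sum, hxe, map_zero]
  unfold FS
  rw [Finset.sum_congr rfl (fun i (_ : i ∈ Finset.univ) => Finset.sum_congr rfl
    (fun l (_ : l ∈ Finset.univ) => entry i l))]
  have inner : ∀ i, (∑ l, (Complex.normSq (p i) * Complex.normSq (x l)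
        + Complex.normSq (x i) * Complex.normSq (e l)
        + 2 * ((p i * x i) * (conj' (x l) * conj' (e l))).re))
      = Complex.normSq (p i) + Complex.normSq (x i) * N2 e := by
    intro i
    rw [Finset.sum_add_distrib, Finset.sum_add_distrib, ← Finset.mul_sum, ← Finset.mul_sum, hx]
    have : ∑ l, 2 * ((p i * x i) * (conj' (x l) * conj' (e l))).re
        = 2 * ((p i * x i) * ∑ l, (conj' (x l) * conj' (e l))).re := by
      rw [Finset.mul_sum, Complex.re_sum, Finset.mul_sum]
    rw [this, hce, mul_zero, Complex.zero_re, mul_zero, add_zero, mul_one]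
    rfl
  rw [Finset.sum_congr rfl fun i _ => inner i, Finset.sum_add_distrib, ← Finset.sum_mul, hx, one_mul,
    hN2e]
  show N2 p + _ = _
  ring

lemma FS_lower (x : Fin n → ℂ) (hx : ∑ i, Complex.normSq (x i) = 1)
    (Δ : Matrix (Fin n) (Fin n) ℂ) :
    N2 (Δ.mulVec x) + N2 (Δ.transpose.mulVec x)
      - Complex.normSq (dotProduct x (Δ.mulVec x)) ≤ FS Δ := by
  set p := Δ.mulVec x with hp
  set q := Δ.transpose.mulVec x with hqdef
  have hq : dotProduct x q = dotProduct x p := by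
    rw [hqdef, Matrix.dotProduct_mulVec, Matrix.vecMul_transpose, ← hp, dotProduct_comm]
  set M := Mmat x p q with hM
  set E := Δ - M with hE
  have hE1 : E.mulVec x = 0 := by
    rw [hE, Matrix.sub_mulVec, ← hp, Mmat_mulVec x p q hx hq, sub_self]
  have hE2 : E.transpose.mulVec x = 0 := by
    rw [hE, Matrix.transpose_sub, Matrix.sub_mulVec, ← hqdef,
      Mmat_transpose_mulVec x p q hx, sub_self]
  have key : FS Δ = FS M + FS E := by
    have hDelta : ∀ i l, Δ i l = M i l + E i l := by intro i l; simp [hE]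
    have entry : ∀ i l, Complex.normSq (Δ i l)
        = Complex.normSq (M i l) + Complex.normSq (E i l) + 2 * (M i l * conj' (E i l)).re := by
      intro i l; rw [hDelta i l]; exact Complex.normSq_add _ _
    have cross : ∑ i, ∑ l, (M i l * conj' (E i l)) = 0 := by
      have hMentry : ∀ i l, M i l = p i * conj' (x l) + conj' (x i) * (q l - dotProduct x p * conj' (x l)) := fun i l => rfl
      have expand : ∀ i l, M i l * conj' (E i l)
          = p i * conj' (E i l * x l)
            + (q l - dotProduct x p * conj' (x l)) * conj' (E i l * x i) := by
        intro i l
        rw [hMentry i l]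
        simp only [_root_.map_mul]
        ring
      rw [Finset.sum_congr rfl (fun i (_ : i ∈ Finset.univ) => Finset.sum_congr rfl
        (fun l (_ : l ∈ Finset.univ) => expand i l))]
      have t1 : ∑ i, ∑ l, p i * conj' (E i l * x l) = 0 := by
        have : ∀ i, ∑ l, p i * conj' (E i l * x l) = p i * conj' (E.mulVec x i) := by
          intro i
          rw [← Finset.mul_sum, ← map_sum]
          rfl
        rw [Finset.sum_congr rfl fun i _ => this i]
        simp [hE1]
      have t2 : ∑ i, ∑ l, (q l - dotProduct x p * conj' (x l)) * conj' (E i l * x i) = 0 := by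
        rw [Finset.sum_comm]
        have : ∀ l, ∑ i, (q l - dotProduct x p * conj' (x l)) * conj' (E i l * x i)
            = (q l - dotProduct x p * conj' (x l)) * conj' (E.transpose.mulVec x l) := by
          intro l
          rw [← Finset.mul_sum, ← map_sum]
          rfl
        rw [Finset.sum_congr rfl fun l _ => this l]
        simp [hE2]
      have split : ∀ i : Fin n, (∑ l, (p i * conj' (E i l * x l)
            + (q l - dotProduct x p * conj' (x l)) * conj' (E i l * x i)))
          = (∑ l, p i * conj' (E i l * x l))
            + ∑ l, (q l - dotProduct x p * conj' (x l)) * conj' (E i l * x i) :=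
        fun i => Finset.sum_add_distrib
      rw [Finset.sum_congr rfl fun i _ => split i, Finset.sum_add_distrib, t1, t2, add_zero]
    unfold FS
    rw [Finset.sum_congr rfl (fun i (_ : i ∈ Finset.univ) => Finset.sum_congr rfl
      (fun l (_ : l ∈ Finset.univ) => entry i l))]
    have split2 : ∀ i : Fin n, (∑ l, (Complex.normSq (M i l) + Complex.normSq (E i l)
          + 2 * (M i l * conj' (E i l)).re))
        = (∑ l, Complex.normSq (M i l)) + (∑ l, Complex.normSq (E i l))
          + ∑ l, 2 * (M i l * conj' (E i l)).re := by
      intro i; rw [Finset.sum_add_distrib, Finset.sum_add_distrib]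
    rw [Finset.sum_congr rfl fun i _ => split2 i, Finset.sum_add_distrib, Finset.sum_add_distrib]
    have crossre : ∑ i, ∑ l, 2 * (M i l * conj' (E i l)).re = 0 := by
      have : ∀ i, ∑ l, 2 * (M i l * conj' (E i l)).re = 2 * (∑ l, (M i l * conj' (E i l))).re := by
        intro i; rw [Complex.re_sum, Finset.mul_sum]
      rw [Finset.sum_congr rfl fun i _ => this i]
      have : ∑ i, 2 * (∑ l, (M i l * conj' (E i l))).re
          = 2 * (∑ i, ∑ l, (M i l * conj' (E i l))).re := by
        rw [Complex.re_sum, Finset.mul_sum]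
      rw [this, cross, Complex.zero_re, mul_zero]
    rw [crossre, add_zero]
  rw [key, FS_Mmat x p q hx hq]
  have := FS_nonneg E
  linarith

lemma cs_scalar {ι : Type*} (T : Finset ι) (c d : ι → ℂ) :
    Complex.normSq (∑ t ∈ T, c t * d t)
      ≤ (∑ t ∈ T, Complex.normSq (c t)) * (∑ t ∈ T, Complex.normSq (d t)) := by
  have h1 : ‖∑ t ∈ T, c t * d t‖ ≤ ∑ t ∈ T, ‖c t‖ * ‖d t‖ :=
    (norm_sum_le _ _).trans (le_of_eq (Finset.sum_congr rfl fun t _ => norm_mul _ _))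
  calc Complex.normSq (∑ t ∈ T, c t * d t) = ‖∑ t ∈ T, c t * d t‖^2 := normSq_eq_norm_sq _
    _ ≤ (∑ t ∈ T, ‖c t‖ * ‖d t‖)^2 := by
        apply pow_le_pow_left₀ (norm_nonneg _) h1
    _ ≤ (∑ t ∈ T, ‖c t‖^2) * (∑ t ∈ T, ‖d t‖^2) :=
        Finset.sum_mul_sq_le_sq_mul_sq T _ _
    _ = _ := by
        rw [Finset.sum_congr rfl fun t _ => (normSq_eq_norm_sq (c t)).symm,
          Finset.sum_congr rfl fun t _ => (normSq_eq_norm_sq (d t)).symm]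

lemma cs_fun {ι : Type*} (T : Finset ι) (c : ι → ℂ) (v : ι → (Fin n → ℂ)) :
    N2 (fun i => ∑ t ∈ T, c t * v t i)
      ≤ (∑ t ∈ T, Complex.normSq (c t)) * (∑ t ∈ T, N2 (v t)) := by
  have step1 : ∀ i : Fin n, Complex.normSq (∑ t ∈ T, c t * v t i)
      ≤ (∑ t ∈ T, Complex.normSq (c t)) * (∑ t ∈ T, Complex.normSq (v t i)) :=
    fun i => cs_scalar T c (fun t => v t i)
  calc N2 (fun i => ∑ t ∈ T, c t * v t i)
      ≤ ∑ i, (∑ t ∈ T, Complex.normSq (c t)) * (∑ t ∈ T, Complex.normSq (v t i)) :=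
        Finset.sum_le_sum fun i _ => step1 i
    _ = (∑ t ∈ T, Complex.normSq (c t)) * (∑ t ∈ T, N2 (v t)) := by
        rw [← Finset.mul_sum, Finset.sum_comm]
        rfl

lemma evalP_mulVec {m : ℕ} (A : ℕ → Matrix (Fin n) (Fin n) ℂ) (z : ℂ) (x : Fin n → ℂ) :
    (evalP m A z).mulVec x
      = fun i => ∑ j ∈ Finset.range (m+1), z^j * ((A j).mulVec x i) := by
  funext i
  show dotProduct (fun l => (∑ j ∈ Finset.range (m+1), z^j • A j) i l) x = _
  simp only [dotProduct, Matrix.sum_apply, Matrix.smul_apply, smul_eq_mul,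
    Finset.sum_mul]
  rw [Finset.sum_comm]
  refine Finset.sum_congr rfl fun j _ => ?_
  show _ = z^j * dotProduct (fun l => A j i l) x
  rw [dotProduct, Finset.mul_sum]
  exact Finset.sum_congr rfl fun l _ => by ring

lemma Lam_pair (k : ℕ) (lam : ℂ) :
    LamNormSq (2*k+1) lam
      = ∑ j ∈ Finset.range (k+1),
          (Complex.normSq (lam^j) + Complex.normSq (lam^(2*k+1-j))) := by
  unfold LamNormSq
  rw [pair_sum k (fun j => ‖lam‖^(2*j))]
  refine Finset.sum_congr rfl fun j _ => ?_
  have e : ∀ t : ℕ, ‖lam‖^(2*t) = Complex.normSq (lam^t) := by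
    intro t
    rw [pow_mul, map_pow, ← normSq_eq_norm_sq]
  rw [e j, e (2*k+1-j)]

lemma Pim_pair (k : ℕ) (lam : ℂ) :
    PiMinusSq (2*k+1) lam
      = (∑ j ∈ Finset.range (k+1), Complex.normSq (lam^j - lam^(2*k+1-j))) / 2 := by
  unfold PiMinusSq
  rw [if_pos (by omega : (2*k+1) % 2 = 1)]
  have h2 : (2*k+1+1)/2 = k+1 := by omega
  rw [h2, Finset.sum_div]
  exact Finset.sum_congr rfl fun j _ => by rw [normSq_eq_norm_sq]

lemma Lam_pos (m : ℕ) (lam : ℂ) : 0 < LamNormSq m lam := by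
  unfold LamNormSq
  have h0 : (0:ℕ) ∈ Finset.range (m+1) := by simp
  have h1 : (1:ℝ) = ‖lam‖^(2*0) := by norm_num
  have := Finset.single_le_sum (f := fun j => ‖lam‖^(2*j))
    (fun j _ => pow_nonneg (norm_nonneg _) _) h0
  simp only [Nat.mul_zero, pow_zero] at this
  linarith

lemma Pim_pos (k : ℕ) (lam : ℂ) (hlam : lam ≠ 1) : 0 < PiMinusSq (2*k+1) lam := by
  rw [Pim_pair]
  have key : 0 < ∑ j ∈ Finset.range (k+1), Complex.normSq (lam^j - lam^(2*k+1-j)) := by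
    rcases eq_or_ne lam 0 with h0 | h0
    · have hmem : (0:ℕ) ∈ Finset.range (k+1) := by simp
      have hval : Complex.normSq (lam^0 - lam^(2*k+1-0)) = 1 := by
        subst h0
        rw [pow_zero, zero_pow (by omega : 2*k+1-0 ≠ 0)]
        simp
      have h3 : Complex.normSq (lam^0 - lam^(2*k+1-0))
          ≤ ∑ j ∈ Finset.range (k+1), Complex.normSq (lam^j - lam^(2*k+1-j)) :=
        Finset.single_le_sum (f := fun j => Complex.normSq (lam^j - lam^(2*k+1-j)))
          (fun j _ => Complex.normSq_nonneg _) hmem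
      rw [hval] at h3; linarith
    · have hmem : k ∈ Finset.range (k+1) := by simp
      have hne : lam^k - lam^(2*k+1-k) ≠ 0 := by
        have hkk : 2*k+1-k = k+1 := by omega
        rw [hkk]
        intro h
        apply hlam
        have heq : lam^k = lam^(k+1) := by
          have := sub_eq_zero.mp h; exact this
        rw [pow_succ] at heq
        have hk0 : lam^k ≠ 0 := pow_ne_zero _ h0
        have h1 : lam^k * 1 = lam^k * lam := by rw [mul_one]; exact heq
        exact (mul_left_cancel₀ hk0 h1).symm
      have hpos : 0 < Complex.normSq (lam^k - lam^(2*k+1-k)) :=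
        Complex.normSq_pos.mpr hne
      have h3 : Complex.normSq (lam^k - lam^(2*k+1-k))
          ≤ ∑ j ∈ Finset.range (k+1), Complex.normSq (lam^j - lam^(2*k+1-j)) :=
        Finset.single_le_sum (f := fun j => Complex.normSq (lam^j - lam^(2*k+1-j)))
          (fun j _ => Complex.normSq_nonneg _) hmem
      linarith
  linarith

lemma lower_core {k : ℕ} (lam : ℂ) (hlam : lam ≠ 1) (x r : Fin n → ℂ)
    (hxn : ∑ i, Complex.normSq (x i) = 1)
    (p q : ℕ → Fin n → ℂ) (d : ℕ → ℂ)
    (hd : ∀ j, dotProduct x (p j) = d j)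
    (hd2 : ∀ j, dotProduct x (q j) = d j)
    (hcon : ∀ i, ∑ j ∈ Finset.range (k+1),
      (lam^j * p j i - lam^(2*k+1-j) * q j i) = r i)
    (FSb : ℕ → ℝ)
    (hFSb : ∀ j ∈ Finset.range (k+1),
      N2 (p j) + N2 (q j) - Complex.normSq (d j) ≤ FSb j) :
    2 * N2 (fun i => r i - dotProduct x r * conj' (x i)) / LamNormSq (2*k+1) lam
      + Complex.normSq (dotProduct x r) / PiMinusSq (2*k+1) lam
      ≤ 2 * ∑ j ∈ Finset.range (k+1), FSb j := by
  have hL := Lam_pos (2*k+1) lam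
  have hPm := Pim_pos k lam hlam
  -- scalar constraint
  have hs : dotProduct x r
      = ∑ j ∈ Finset.range (k+1), (lam^j - lam^(2*k+1-j)) * d j := by
    calc dotProduct x r
        = ∑ i, ∑ j ∈ Finset.range (k+1),
            x i * (lam^j * p j i - lam^(2*k+1-j) * q j i) := by
          refine Finset.sum_congr rfl fun i _ => ?_
          rw [← Finset.mul_sum, hcon i]
      _ = ∑ j ∈ Finset.range (k+1), ∑ i,
            x i * (lam^j * p j i - lam^(2*k+1-j) * q j i) := Finset.sum_comm
      _ = ∑ j ∈ Finset.range (k+1), (lam^j - lam^(2*k+1-j)) * d j := by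
          refine Finset.sum_congr rfl fun j _ => ?_
          have e1 : ∀ i : Fin n, x i * (lam^j * p j i - lam^(2*k+1-j) * q j i)
              = lam^j * (x i * p j i) - lam^(2*k+1-j) * (x i * q j i) := fun i => by ring
          rw [Finset.sum_congr rfl fun i _ => e1 i, Finset.sum_sub_distrib,
            ← Finset.mul_sum, ← Finset.mul_sum]
          have hxp : (∑ i, x i * p j i) = d j := hd j
          have hxq : (∑ i, x i * q j i) = d j := hd2 j
          rw [hxp, hxq]; ring
  -- vector constraint for the projected parts
  have hu2 : ∀ i : Fin n, r i - dotProduct x r * conj' (x i)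
      = ∑ j ∈ Finset.range (k+1),
          (lam^j * (p j i - d j * conj' (x i))
            + (-(lam^(2*k+1-j))) * (q j i - d j * conj' (x i))) := by
    intro i
    have expand : ∀ j ∈ Finset.range (k+1),
        lam^j * (p j i - d j * conj' (x i))
          + (-(lam^(2*k+1-j))) * (q j i - d j * conj' (x i))
        = (lam^j * p j i - lam^(2*k+1-j) * q j i)
          - ((lam^j - lam^(2*k+1-j)) * d j) * conj' (x i) := fun j _ => by ring
    rw [Finset.sum_congr rfl expand, Finset.sum_sub_distrib, hcon i, ← Finset.sum_mul, ← hs]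
  -- Cauchy-Schwarz for the vector part
  have hcs1 : N2 (fun i => r i - dotProduct x r * conj' (x i))
      ≤ LamNormSq (2*k+1) lam
        * ∑ j ∈ Finset.range (k+1),
            (N2 (fun i => p j i - d j * conj' (x i))
              + N2 (fun i => q j i - d j * conj' (x i))) := by
    have hmain := cs_fun (T := (Finset.range (k+1)) ×ˢ (Finset.univ : Finset Bool))
      (c := fun t => if t.2 then lam^t.1 else -(lam^(2*k+1-t.1)))
      (v := fun t => if t.2 then (fun i => p t.1 i - d t.1 * conj' (x i))
        else (fun i => q t.1 i - d t.1 * conj' (x i)))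
    have e1 : (fun i => ∑ t ∈ (Finset.range (k+1)) ×ˢ (Finset.univ : Finset Bool),
          (if t.2 then lam^t.1 else -(lam^(2*k+1-t.1)))
            * (if t.2 then (fun i => p t.1 i - d t.1 * conj' (x i))
                else (fun i => q t.1 i - d t.1 * conj' (x i))) i)
        = fun i => r i - dotProduct x r * conj' (x i) := by
      funext i
      rw [Finset.sum_product]
      have hb : ∀ j : ℕ, (∑ b : Bool,
          (if b then lam^j else -(lam^(2*k+1-j)))
            * (if b then (fun i => p j i - d j * conj' (x i))
                else (fun i => q j i - d j * conj' (x i))) i)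
          = lam^j * (p j i - d j * conj' (x i))
            + (-(lam^(2*k+1-j))) * (q j i - d j * conj' (x i)) := by
        intro j
        rw [Fintype.sum_bool]
        simp
      rw [Finset.sum_congr rfl fun j _ => hb j, ← hu2 i]
    have e2 : (∑ t ∈ (Finset.range (k+1)) ×ˢ (Finset.univ : Finset Bool),
          Complex.normSq (if t.2 then lam^t.1 else -(lam^(2*k+1-t.1))))
        = LamNormSq (2*k+1) lam := by
      rw [Finset.sum_product]
      have hb : ∀ j : ℕ, (∑ b : Bool,
          Complex.normSq (if b then lam^j else -(lam^(2*k+1-j))))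
          = Complex.normSq (lam^j) + Complex.normSq (lam^(2*k+1-j)) := by
        intro j
        rw [Fintype.sum_bool]
        simp [Complex.normSq_neg]
      rw [Finset.sum_congr rfl fun j _ => hb j, ← Lam_pair]
    have e3 : (∑ t ∈ (Finset.range (k+1)) ×ˢ (Finset.univ : Finset Bool),
          N2 (if t.2 then (fun i => p t.1 i - d t.1 * conj' (x i))
            else (fun i => q t.1 i - d t.1 * conj' (x i))))
        = ∑ j ∈ Finset.range (k+1),
            (N2 (fun i => p j i - d j * conj' (x i))
              + N2 (fun i => q j i - d j * conj' (x i))) := by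
      rw [Finset.sum_product]
      refine Finset.sum_congr rfl fun j _ => ?_
      rw [Fintype.sum_bool]
      simp
    rw [e1, e2, e3] at hmain
    exact hmain
  -- Cauchy-Schwarz for the scalar part
  have hcs2 : Complex.normSq (dotProduct x r)
      ≤ (2 * PiMinusSq (2*k+1) lam)
        * ∑ j ∈ Finset.range (k+1), Complex.normSq (d j) := by
    have hmain := cs_scalar (Finset.range (k+1))
      (fun j => lam^j - lam^(2*k+1-j)) d
    rw [← hs] at hmain
    have e2 : (∑ j ∈ Finset.range (k+1), Complex.normSq (lam^j - lam^(2*k+1-j)))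
        = 2 * PiMinusSq (2*k+1) lam := by
      rw [Pim_pair]; ring
    rw [e2] at hmain
    exact hmain
  -- norm decompositions
  have hdecomp : ∀ j ∈ Finset.range (k+1),
      N2 (fun i => p j i - d j * conj' (x i))
        + N2 (fun i => q j i - d j * conj' (x i))
        + Complex.normSq (d j) ≤ FSb j := by
    intro j hj
    have h1 := N2_sub_proj x (p j) hxn
    rw [hd j] at h1
    have h2 := N2_sub_proj x (q j) hxn
    rw [hd2 j] at h2
    have := hFSb j hj
    linarith
  -- combine
  set SU := ∑ j ∈ Finset.range (k+1),
      (N2 (fun i => p j i - d j * conj' (x i))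
        + N2 (fun i => q j i - d j * conj' (x i))) with hSU
  set SD := ∑ j ∈ Finset.range (k+1), Complex.normSq (d j) with hSD
  have hsum : SU + SD ≤ ∑ j ∈ Finset.range (k+1), FSb j := by
    rw [hSU, hSD, ← Finset.sum_add_distrib]
    exact Finset.sum_le_sum hdecomp
  have hA1 : 2 * N2 (fun i => r i - dotProduct x r * conj' (x i))
      / LamNormSq (2*k+1) lam ≤ 2 * SU := by
    rw [div_le_iff₀ hL]
    nlinarith [hcs1]
  have hA2 : Complex.normSq (dotProduct x r) / PiMinusSq (2*k+1) lam ≤ 2 * SD := by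
    rw [div_le_iff₀ hPm]
    nlinarith [hcs2]
  linarith

lemma lower_bound {k : ℕ} (lam : ℂ) (hlam : lam ≠ 1) (x r : Fin n → ℂ)
    (hxn : ∑ i, Complex.normSq (x i) = 1)
    (Δ : ℕ → Matrix (Fin n) (Fin n) ℂ)
    (hstr : ∀ j ≤ 2*k+1, Δ (2*k+1 - j) = -(Δ j).transpose)
    (hcon : (evalP (2*k+1) Δ lam).mulVec x = r) :
    2 * N2 (fun i => r i - dotProduct x r * conj' (x i)) / LamNormSq (2*k+1) lam
      + Complex.normSq (dotProduct x r) / PiMinusSq (2*k+1) lam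
      ≤ ∑ j ∈ Finset.range (2*k+1+1), FS (Δ j) := by
  have hpair : ∑ j ∈ Finset.range (2*k+1+1), FS (Δ j)
      = 2 * ∑ j ∈ Finset.range (k+1), FS (Δ j) := by
    rw [pair_sum k (fun j => FS (Δ j)), Finset.mul_sum]
    refine Finset.sum_congr rfl fun j hj => ?_
    have hj' : j ≤ 2*k+1 := by
      simp only [Finset.mem_range] at hj; omega
    show FS (Δ j) + FS (Δ (2*k+1-j)) = 2 * FS (Δ j)
    rw [hstr j hj', FS_neg_transpose]; ring
  rw [hpair]
  rw [evalP_mulVec] at hcon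
  have hconK : ∀ i, ∑ j ∈ Finset.range (k+1),
      (lam^j * ((Δ j).mulVec x) i - lam^(2*k+1-j) * ((Δ j).transpose.mulVec x) i) = r i := by
    intro i
    have h0 := congrFun hcon i
    rw [pair_sum k (fun j => lam^j * ((Δ j).mulVec x i))] at h0
    rw [← h0]
    refine Finset.sum_congr rfl fun j hj => ?_
    have hj' : j ≤ 2*k+1 := by
      simp only [Finset.mem_range] at hj; omega
    show lam^j * ((Δ j).mulVec x) i - lam^(2*k+1-j) * ((Δ j).transpose.mulVec x) i
        = lam^j * ((Δ j).mulVec x i) + lam^(2*k+1-j) * ((Δ (2*k+1-j)).mulVec x i)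
    rw [hstr j hj', Matrix.neg_mulVec]
    simp only [Pi.neg_apply]
    ring
  exact lower_core lam hlam x r hxn
    (fun j => (Δ j).mulVec x) (fun j => (Δ j).transpose.mulVec x)
    (fun j => dotProduct x ((Δ j).mulVec x))
    (fun j => rfl)
    (fun j => by rw [Matrix.dotProduct_mulVec, Matrix.vecMul_transpose, dotProduct_comm])
    hconK
    (fun j => FS (Δ j))
    (fun j _ => FS_lower x hxn (Δ j))

section Construction

variable (k : ℕ) (lam : ℂ) (x r : Fin n → ℂ)

def sc : ℂ := dotProduct x r
def uv : Fin n → ℂ := fun i => r i - sc x r * conj' (x i)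
def bco (j : ℕ) : ℂ := conj' (lam^j) / ((LamNormSq (2*k+1) lam : ℝ) : ℂ)
def dcoef (j : ℕ) : ℂ := -(conj' (lam^(2*k+1-j))) / ((LamNormSq (2*k+1) lam : ℝ) : ℂ)
def gco (j : ℕ) : ℂ :=
  sc x r * conj' (lam^j - lam^(2*k+1-j)) / (((2 * PiMinusSq (2*k+1) lam : ℝ)) : ℂ)
def pOpt (j : ℕ) : Fin n → ℂ :=
  fun i => bco k lam j * uv x r i + gco k lam x r j * conj' (x i)
def qOpt (j : ℕ) : Fin n → ℂ :=
  fun i => gco k lam x r j * conj' (x i) + dcoef k lam j * uv x r i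
def DOpt (j : ℕ) : Matrix (Fin n) (Fin n) ℂ :=
  Mmat x (pOpt k lam x r j) (qOpt k lam x r j)
def DeltaOpt : ℕ → Matrix (Fin n) (Fin n) ℂ :=
  fun j => if j ≤ k then DOpt k lam x r j else -((DOpt k lam x r (2*k+1-j)).transpose)

variable {x r}

lemma dot_uv (hxn : ∑ i, Complex.normSq (x i) = 1) : dotProduct x (uv x r) = 0 := by
  show (∑ i, x i * (r i - sc x r * conj' (x i))) = 0
  have e1 : ∀ i : Fin n, x i * (r i - sc x r * conj' (x i))
      = x i * r i - sc x r * (x i * conj' (x i)) := fun i => by ring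
  rw [Finset.sum_congr rfl fun i _ => e1 i, Finset.sum_sub_distrib, ← Finset.mul_sum,
    sum_conj_mul_self x hxn, mul_one]
  show sc x r - sc x r = 0
  ring

lemma dot_pOpt (hxn : ∑ i, Complex.normSq (x i) = 1) (j : ℕ) :
    dotProduct x (pOpt k lam x r j) = gco k lam x r j := by
  show (∑ i, x i * (bco k lam j * uv x r i + gco k lam x r j * conj' (x i))) = _
  have e1 : ∀ i : Fin n, x i * (bco k lam j * uv x r i + gco k lam x r j * conj' (x i))
      = bco k lam j * (x i * uv x r i) + gco k lam x r j * (x i * conj' (x i)) :=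
    fun i => by ring
  rw [Finset.sum_congr rfl fun i _ => e1 i, Finset.sum_add_distrib, ← Finset.mul_sum,
    ← Finset.mul_sum, sum_conj_mul_self x hxn]
  have h0 : (∑ i, x i * uv x r i) = 0 := dot_uv hxn
  rw [h0, mul_zero, mul_one, zero_add]

lemma dot_qOpt (hxn : ∑ i, Complex.normSq (x i) = 1) (j : ℕ) :
    dotProduct x (qOpt k lam x r j) = gco k lam x r j := by
  show (∑ i, x i * (gco k lam x r j * conj' (x i) + dcoef k lam j * uv x r i)) = _
  have e1 : ∀ i : Fin n, x i * (gco k lam x r j * conj' (x i) + dcoef k lam j * uv x r i)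
      = dcoef k lam j * (x i * uv x r i) + gco k lam x r j * (x i * conj' (x i)) :=
    fun i => by ring
  rw [Finset.sum_congr rfl fun i _ => e1 i, Finset.sum_add_distrib, ← Finset.mul_sum,
    ← Finset.mul_sum, sum_conj_mul_self x hxn]
  have h0 : (∑ i, x i * uv x r i) = 0 := dot_uv hxn
  rw [h0, mul_zero, mul_one, zero_add]

lemma DeltaOpt_struct : ∀ j ≤ 2*k+1,
    DeltaOpt k lam x r (2*k+1-j) = -(DeltaOpt k lam x r j).transpose := by
  intro j hj
  by_cases hc : j ≤ k
  · have h1 : ¬ (2*k+1-j ≤ k) := by omega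
    have h2 : 2*k+1-(2*k+1-j) = j := by omega
    simp only [DeltaOpt, if_neg h1, if_pos hc, h2]
  · have h1 : 2*k+1-j ≤ k := by omega
    simp only [DeltaOpt, if_pos h1, if_neg hc]
    rw [Matrix.transpose_neg, Matrix.transpose_transpose, neg_neg]

lemma coeff_one (hlam : lam ≠ 1) :
    ∑ j ∈ Finset.range (k+1),
      (lam^j * bco k lam j - lam^(2*k+1-j) * dcoef k lam j) = 1 := by
  have hL := Lam_pos (2*k+1) lam
  have hLne : ((LamNormSq (2*k+1) lam : ℝ) : ℂ) ≠ 0 :=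
    Complex.ofReal_ne_zero.mpr hL.ne'
  have e1 : ∀ j ∈ Finset.range (k+1),
      lam^j * bco k lam j - lam^(2*k+1-j) * dcoef k lam j
      = ((Complex.normSq (lam^j) + Complex.normSq (lam^(2*k+1-j)) : ℝ) : ℂ)
        / ((LamNormSq (2*k+1) lam : ℝ) : ℂ) := by
    intro j _
    have : lam^j * bco k lam j - lam^(2*k+1-j) * dcoef k lam j
        = (lam^j * conj' (lam^j) + lam^(2*k+1-j) * conj' (lam^(2*k+1-j)))
          / ((LamNormSq (2*k+1) lam : ℝ) : ℂ) := by
      unfold bco dcoef; ring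
    rw [this, Complex.mul_conj, Complex.mul_conj]
    push_cast
    ring
  rw [Finset.sum_congr rfl e1, ← Finset.sum_div, ← Complex.ofReal_sum, ← Lam_pair k lam,
    div_self hLne]

lemma coeff_s (hlam : lam ≠ 1) :
    ∑ j ∈ Finset.range (k+1),
      ((lam^j - lam^(2*k+1-j)) * gco k lam x r j) = sc x r := by
  have hPm := Pim_pos k lam hlam
  have hPne : (((2 * PiMinusSq (2*k+1) lam : ℝ)) : ℂ) ≠ 0 :=
    Complex.ofReal_ne_zero.mpr (by positivity)
  have e1 : ∀ j ∈ Finset.range (k+1),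
      (lam^j - lam^(2*k+1-j)) * gco k lam x r j
      = sc x r * (((Complex.normSq (lam^j - lam^(2*k+1-j)) : ℝ) : ℂ)
          / (((2 * PiMinusSq (2*k+1) lam : ℝ)) : ℂ)) := by
    intro j _
    have : (lam^j - lam^(2*k+1-j)) * gco k lam x r j
        = sc x r * (((lam^j - lam^(2*k+1-j)) * conj' (lam^j - lam^(2*k+1-j)))
          / (((2 * PiMinusSq (2*k+1) lam : ℝ)) : ℂ)) := by
      unfold gco; ring
    rw [this, Complex.mul_conj]
  rw [Finset.sum_congr rfl e1, ← Finset.mul_sum, ← Finset.sum_div, ← Complex.ofReal_sum]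
  have e2 : (∑ j ∈ Finset.range (k+1), Complex.normSq (lam^j - lam^(2*k+1-j)))
      = 2 * PiMinusSq (2*k+1) lam := by
    rw [Pim_pair]; ring
  rw [e2, div_self hPne, mul_one]

lemma DeltaOpt_con (hlam : lam ≠ 1) (hxn : ∑ i, Complex.normSq (x i) = 1) :
    (evalP (2*k+1) (DeltaOpt k lam x r) lam).mulVec x = r := by
  rw [evalP_mulVec]
  funext i
  rw [pair_sum k (fun j => lam^j * ((DeltaOpt k lam x r j).mulVec x i))]
  have hterm : ∀ j ∈ Finset.range (k+1),
      lam^j * ((DeltaOpt k lam x r j).mulVec x i)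
        + lam^(2*k+1-j) * ((DeltaOpt k lam x r (2*k+1-j)).mulVec x i)
      = (lam^j * bco k lam j - lam^(2*k+1-j) * dcoef k lam j) * uv x r i
        + ((lam^j - lam^(2*k+1-j)) * gco k lam x r j) * conj' (x i) := by
    intro j hj
    have hjk : j ≤ k := by simp only [Finset.mem_range] at hj; omega
    have h1 : ¬ (2*k+1-j ≤ k) := by omega
    have h2 : 2*k+1-(2*k+1-j) = j := by omega
    have hq : dotProduct x (qOpt k lam x r j) = dotProduct x (pOpt k lam x r j) := by
      rw [dot_pOpt k lam hxn j, dot_qOpt k lam hxn j]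
    have hmv1 : (DeltaOpt k lam x r j).mulVec x = pOpt k lam x r j := by
      simp only [DeltaOpt, if_pos hjk, DOpt]
      exact Mmat_mulVec x _ _ hxn hq
    have hmv2 : (DeltaOpt k lam x r (2*k+1-j)).mulVec x i = -(qOpt k lam x r j i) := by
      simp only [DeltaOpt, if_neg h1, h2, Matrix.neg_mulVec]
      have : ((DOpt k lam x r j).transpose).mulVec x = qOpt k lam x r j := by
        simp only [DOpt]
        exact Mmat_transpose_mulVec x _ _ hxn
      rw [this]
      rfl
    rw [hmv1, hmv2]
    show lam^j * (bco k lam j * uv x r i + gco k lam x r j * conj' (x i))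
        + lam^(2*k+1-j) * (-(gco k lam x r j * conj' (x i) + dcoef k lam j * uv x r i)) = _
    ring
  rw [Finset.sum_congr rfl hterm, Finset.sum_add_distrib, ← Finset.sum_mul, ← Finset.sum_mul,
    coeff_one k lam hlam, coeff_s k lam hlam, one_mul]
  show (r i - sc x r * conj' (x i)) + sc x r * conj' (x i) = r i
  ring

lemma N2_pOpt (hxn : ∑ i, Complex.normSq (x i) = 1) (j : ℕ) :
    N2 (pOpt k lam x r j)
      = Complex.normSq (bco k lam j) * N2 (uv x r) + Complex.normSq (gco k lam x r j) := by
  have cross : ∑ i, (bco k lam j * uv x r i) * conj' (gco k lam x r j * conj' (x i)) = 0 := by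
    have e1 : ∀ i : Fin n, (bco k lam j * uv x r i) * conj' (gco k lam x r j * conj' (x i))
        = (bco k lam j * conj' (gco k lam x r j)) * (x i * uv x r i) := by
      intro i
      simp only [_root_.map_mul, Complex.conj_conj]
      ring
    rw [Finset.sum_congr rfl fun i _ => e1 i, ← Finset.mul_sum]
    have h0 : (∑ i, x i * uv x r i) = 0 := dot_uv hxn
    rw [h0, mul_zero]
  have := N2_add_orth (fun i => bco k lam j * uv x r i)
    (fun i => gco k lam x r j * conj' (x i)) cross
  have heq : N2 (pOpt k lam x r j)
      = ∑ i, Complex.normSq (bco k lam j * uv x r i + gco k lam x r j * conj' (x i)) := rfl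
  rw [heq, this, N2_smul, N2_smul]
  have hy : N2 (fun i => conj' (x i)) = 1 := by
    simpa [N2, Complex.normSq_conj] using hxn
  rw [hy, mul_one]

lemma N2_qOpt (hxn : ∑ i, Complex.normSq (x i) = 1) (j : ℕ) :
    N2 (qOpt k lam x r j)
      = Complex.normSq (dcoef k lam j) * N2 (uv x r) + Complex.normSq (gco k lam x r j) := by
  have cross : ∑ i, (gco k lam x r j * conj' (x i)) * conj' (dcoef k lam j * uv x r i) = 0 := by
    have e1 : ∀ i : Fin n, (gco k lam x r j * conj' (x i)) * conj' (dcoef k lam j * uv x r i)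
        = (gco k lam x r j * conj' (dcoef k lam j)) * conj' (x i * uv x r i) := by
      intro i
      simp only [_root_.map_mul]
      ring
    rw [Finset.sum_congr rfl fun i _ => e1 i, ← Finset.mul_sum, ← map_sum]
    have h0 : (∑ i, x i * uv x r i) = 0 := dot_uv hxn
    rw [h0, map_zero, mul_zero]
  have := N2_add_orth (fun i => gco k lam x r j * conj' (x i))
    (fun i => dcoef k lam j * uv x r i) cross
  have heq : N2 (qOpt k lam x r j)
      = ∑ i, Complex.normSq (gco k lam x r j * conj' (x i) + dcoef k lam j * uv x r i) := rfl
  rw [heq, this, N2_smul, N2_smul]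
  have hy : N2 (fun i => conj' (x i)) = 1 := by
    simpa [N2, Complex.normSq_conj] using hxn
  rw [hy, mul_one]
  ring

lemma DeltaOpt_cost (hlam : lam ≠ 1) (hxn : ∑ i, Complex.normSq (x i) = 1) :
    ∑ j ∈ Finset.range (2*k+1+1), FS (DeltaOpt k lam x r j)
      = 2 * N2 (uv x r) / LamNormSq (2*k+1) lam
        + Complex.normSq (sc x r) / PiMinusSq (2*k+1) lam := by
  have hL := Lam_pos (2*k+1) lam
  have hPm := Pim_pos k lam hlam
  set L := LamNormSq (2*k+1) lam with hLdef
  set Pm := PiMinusSq (2*k+1) lam with hPmdef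
  rw [pair_sum k (fun j => FS (DeltaOpt k lam x r j))]
  have hterm : ∀ j ∈ Finset.range (k+1),
      FS (DeltaOpt k lam x r j) + FS (DeltaOpt k lam x r (2*k+1-j))
      = 2 * ((Complex.normSq (lam^j) + Complex.normSq (lam^(2*k+1-j)))/(L*L) * N2 (uv x r)
          + Complex.normSq (sc x r) * Complex.normSq (lam^j - lam^(2*k+1-j))
            / ((2*Pm)*(2*Pm))) := by
    intro j hj
    have hjk : j ≤ k := by simp only [Finset.mem_range] at hj; omega
    have h1 : ¬ (2*k+1-j ≤ k) := by omega
    have h2 : 2*k+1-(2*k+1-j) = j := by omega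
    have e1 : FS (DeltaOpt k lam x r (2*k+1-j)) = FS (DeltaOpt k lam x r j) := by
      simp only [DeltaOpt, if_neg h1, if_pos hjk, h2]
      exact FS_neg_transpose _
    have hq : dotProduct x (qOpt k lam x r j) = dotProduct x (pOpt k lam x r j) := by
      rw [dot_pOpt k lam hxn j, dot_qOpt k lam hxn j]
    have e2 : FS (DeltaOpt k lam x r j)
        = N2 (pOpt k lam x r j) + N2 (qOpt k lam x r j)
          - Complex.normSq (gco k lam x r j) := by
      simp only [DeltaOpt, if_pos hjk, DOpt]
      rw [FS_Mmat x _ _ hxn hq, dot_pOpt k lam hxn j]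
    have e3 : Complex.normSq (bco k lam j) = Complex.normSq (lam^j) / (L*L) := by
      unfold bco
      rw [Complex.normSq_div, Complex.normSq_conj, Complex.normSq_ofReal]
    have e4 : Complex.normSq (dcoef k lam j) = Complex.normSq (lam^(2*k+1-j)) / (L*L) := by
      unfold dcoef
      rw [Complex.normSq_div, Complex.normSq_neg, Complex.normSq_conj, Complex.normSq_ofReal]
    have e5 : Complex.normSq (gco k lam x r j)
        = Complex.normSq (sc x r) * Complex.normSq (lam^j - lam^(2*k+1-j)) / ((2*Pm)*(2*Pm)) := by
      unfold gco
      rw [Complex.normSq_div, Complex.normSq_mul, Complex.normSq_conj, Complex.normSq_ofReal]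
    rw [e1, e2, N2_pOpt k lam hxn j, N2_qOpt k lam hxn j, e3, e4, e5]
    ring
  rw [Finset.sum_congr rfl hterm]
  have expand : ∀ j ∈ Finset.range (k+1),
      2 * ((Complex.normSq (lam^j) + Complex.normSq (lam^(2*k+1-j)))/(L*L) * N2 (uv x r)
          + Complex.normSq (sc x r) * Complex.normSq (lam^j - lam^(2*k+1-j)) / ((2*Pm)*(2*Pm)))
      = (Complex.normSq (lam^j) + Complex.normSq (lam^(2*k+1-j)))
          * (2 * N2 (uv x r) / (L*L))
        + Complex.normSq (lam^j - lam^(2*k+1-j))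
          * (2 * Complex.normSq (sc x r) / ((2*Pm)*(2*Pm))) := by
    intro j _; ring
  rw [Finset.sum_congr rfl expand, Finset.sum_add_distrib, ← Finset.sum_mul, ← Finset.sum_mul,
    ← Lam_pair k lam]
  have e6 : (∑ j ∈ Finset.range (k+1), Complex.normSq (lam^j - lam^(2*k+1-j))) = 2 * Pm := by
    rw [hPmdef, Pim_pair]; ring
  rw [e6, ← hLdef]
  field_simp

lemma upper_exists (hlam : lam ≠ 1) (hxn : ∑ i, Complex.normSq (x i) = 1) :
    ∃ Δ : ℕ → Matrix (Fin n) (Fin n) ℂ,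
      (∀ j ≤ 2*k+1, Δ (2*k+1-j) = -(Δ j).transpose) ∧
      (evalP (2*k+1) Δ lam).mulVec x = r ∧
      ∑ j ∈ Finset.range (2*k+1+1), FS (Δ j)
        = 2 * N2 (fun i => r i - dotProduct x r * conj' (x i)) / LamNormSq (2*k+1) lam
          + Complex.normSq (dotProduct x r) / PiMinusSq (2*k+1) lam := by
  refine ⟨DeltaOpt k lam x r, DeltaOpt_struct k lam, DeltaOpt_con k lam hlam hxn, ?_⟩
  exact DeltaOpt_cost k lam hlam hxn

end Construction

end Stmt5Aux

/-- Frobenius structured backward error, T-anti-palindromic, m odd, λ ≠ 1. -/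
theorem stmt_5 {m n : ℕ} (hm : Odd m) (hn : 0 < n)
    (A : ℕ → Matrix (Fin n) (Fin n) ℂ)
    (hpal : ∀ j ≤ m, A (m - j) = -(A j).transpose)
    (hreg : ∃ z : ℂ, (evalP m A z).det ≠ 0)
    (lam : ℂ) (hlam : lam ≠ 1)
    (x : Fin n → ℂ) (hx : vnorm x = 1)
    (r : Fin n → ℂ) (hr : r = -(evalP m A lam).mulVec x) :
    etaF_Tapal m A lam x =
      Real.sqrt ((2 / LamNormSq m lam) * vnorm r ^ 2 +
        (1 / PiMinusSq m lam - 2 / LamNormSq m lam) * ‖dotProduct x r‖ ^ 2) := by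
  classical
  obtain ⟨k, hk⟩ := hm
  subst hk
  have hxn : ∑ i, Complex.normSq (x i) = 1 := by
    have h := Stmt5Aux.vnorm_sq x
    rw [hx] at h
    simpa [Stmt5Aux.N2] using h.symm
  have hL := Stmt5Aux.Lam_pos (2*k+1) lam
  have hPm := Stmt5Aux.Pim_pos k lam hlam
  have hA : (evalP (2*k+1) A lam).mulVec x = -r := by rw [hr, neg_neg]
  set V : ℝ := 2 * Stmt5Aux.N2 (fun i => r i - dotProduct x r * (starRingEnd ℂ) (x i))
      / LamNormSq (2*k+1) lam
      + Complex.normSq (dotProduct x r) / PiMinusSq (2*k+1) lam with hV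
  have hRHSV : (2 / LamNormSq (2*k+1) lam) * vnorm r ^ 2 +
      (1 / PiMinusSq (2*k+1) lam - 2 / LamNormSq (2*k+1) lam)
        * ‖dotProduct x r‖ ^ 2 = V := by
    have h1 : vnorm r ^2 = Stmt5Aux.N2 r := Stmt5Aux.vnorm_sq r
    have h2 : ‖dotProduct x r‖^2 = Complex.normSq (dotProduct x r) :=
      (Stmt5Aux.normSq_eq_norm_sq _).symm
    have h3 : Stmt5Aux.N2 (fun i => r i - dotProduct x r * (starRingEnd ℂ) (x i))
        = Stmt5Aux.N2 r - Complex.normSq (dotProduct x r) :=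
      Stmt5Aux.N2_sub_proj x r hxn
    rw [hV, h1, h2, h3]
    field_simp
    ring
  obtain ⟨Δ₀, hstr₀, hcon₀, hcost₀⟩ := Stmt5Aux.upper_exists k lam hlam (x := x) (r := r) hxn
  have hcostFS : ∀ Δ : ℕ → Matrix (Fin n) (Fin n) ℂ,
      (∑ j ∈ Finset.range (2*k+1+1), frobNorm (Δ j) ^ 2)
        = ∑ j ∈ Finset.range (2*k+1+1), Stmt5Aux.FS (Δ j) :=
    fun Δ => Finset.sum_congr rfl fun j _ => Stmt5Aux.frob_sq (Δ j)
  have hub : Real.sqrt V ∈ { e : ℝ | ∃ Δ : ℕ → Matrix (Fin n) (Fin n) ℂ,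
      (∀ j ≤ 2*k+1, Δ (2*k+1 - j) = -(Δ j).transpose) ∧
      (evalP (2*k+1) A lam).mulVec x + (evalP (2*k+1) Δ lam).mulVec x = 0 ∧
      e = Real.sqrt (∑ j ∈ Finset.range (2*k+1 + 1), frobNorm (Δ j) ^ 2) } := by
    refine ⟨Δ₀, hstr₀, ?_, ?_⟩
    · rw [hA, hcon₀]; exact neg_add_cancel r
    · rw [hcostFS Δ₀, hcost₀, hV]
  have hlb : ∀ e ∈ { e : ℝ | ∃ Δ : ℕ → Matrix (Fin n) (Fin n) ℂ,
      (∀ j ≤ 2*k+1, Δ (2*k+1 - j) = -(Δ j).transpose) ∧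
      (evalP (2*k+1) A lam).mulVec x + (evalP (2*k+1) Δ lam).mulVec x = 0 ∧
      e = Real.sqrt (∑ j ∈ Finset.range (2*k+1 + 1), frobNorm (Δ j) ^ 2) },
      Real.sqrt V ≤ e := by
    rintro e ⟨Δ, hstr, hcon, he⟩
    have hconr : (evalP (2*k+1) Δ lam).mulVec x = r := by
      rw [hA] at hcon
      have := neg_add_eq_zero.mp hcon
      exact this.symm
    have hlow := Stmt5Aux.lower_bound lam hlam x r hxn Δ hstr hconr
    rw [he, hcostFS Δ]
    rw [hV]
    exact Real.sqrt_le_sqrt hlow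
  rw [hRHSV]
  unfold etaF_Tapal
  exact le_antisymm (csInf_le ⟨Real.sqrt V, hlb⟩ hub) (le_csInf ⟨_, hub⟩ hlb)
end
end

section
/- Let m be even, let P be a regular T-palindromic matrix polynomial of degree m with n×n coefficients, let λ ∈ {1, −1}, and let x ∈ ℂⁿ with ‖x‖₂ = 1; set r := −P(λ)x. Then the Frobenius-norm structured backward error over the class S_p of T-palindromic polynomials of degree m satisfies η_F^{S_p}(λ, x, P) = √( (2‖r‖₂² − |xᵀr|²)/(m+1) ). -/
noncomputable section

open Finset ComplexConjugate

namespace Stmt6Aux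

variable {n : ℕ}

lemma nsq (z : ℂ) : ‖z‖^2 = Complex.normSq z := by
  rw [Complex.sq_norm]

/-- The optimal symmetric perturbation matrix. -/
def B0 (p : ℂ) (x r : Fin n → ℂ) : Matrix (Fin n) (Fin n) ℂ :=
  fun i k => (r i - p * conj (x i)) * conj (x k) + conj (x i) * r k

lemma B0_symm (p : ℂ) (x r : Fin n → ℂ) (i k : Fin n) :
    B0 p x r k i = B0 p x r i k := by
  simp only [B0]; ring

lemma B0_mulVec (p : ℂ) (x r : Fin n → ℂ)
    (hX : ∑ t, x t * conj (x t) = 1) (hp : p = ∑ t, x t * r t) :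
    (B0 p x r).mulVec x = r := by
  funext i
  have h1 : ∑ k, conj (x k) * x k = 1 := by
    rw [← hX]; exact Finset.sum_congr rfl fun k _ => mul_comm _ _
  have h2 : ∑ k, r k * x k = p := by
    rw [hp]; exact Finset.sum_congr rfl fun k _ => mul_comm _ _
  show ∑ k, B0 p x r i k * x k = r i
  have e : ∀ k, B0 p x r i k * x k
      = (r i - p * conj (x i)) * (conj (x k) * x k) + conj (x i) * (r k * x k) := by
    intro k; simp only [B0]; ring
  rw [Finset.sum_congr rfl fun k _ => e k, Finset.sum_add_distrib,
    ← Finset.mul_sum, ← Finset.mul_sum, h1, h2]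
  ring

lemma B0_normSq (p : ℂ) (x r : Fin n → ℂ)
    (hX : ∑ t, x t * conj (x t) = 1) (hp : p = ∑ t, x t * r t) :
    ∑ i, ∑ k, Complex.normSq (B0 p x r i k)
      = 2 * (∑ i, Complex.normSq (r i)) - Complex.normSq p := by
  have hS1 : ∑ k, conj (x k) * x k = 1 := by
    rw [← hX]; exact Finset.sum_congr rfl fun k _ => mul_comm _ _
  have hS2 : ∑ k, conj (x k) * conj (r k) = conj p := by
    rw [hp, map_sum]; exact Finset.sum_congr rfl fun k _ => (map_mul _ _ _).symm
  have hS3 : ∑ k, r k * x k = p := by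
    rw [hp]; exact Finset.sum_congr rfl fun k _ => mul_comm _ _
  have hS4 : ∑ k, r k * conj (r k) = ∑ k, r k * conj (r k) := rfl
  set R : ℂ := ∑ k, r k * conj (r k) with hR
  have key : ∑ i, ∑ k, B0 p x r i k * conj (B0 p x r i k)
      = 2 * R - p * conj p := by
    have inner : ∀ i, ∑ k, B0 p x r i k * conj (B0 p x r i k)
        = r i * conj (r i) + (R - p * conj p) * (x i * conj (x i)) := by
      intro i
      have e : ∀ k, B0 p x r i k * conj (B0 p x r i k)
          = ((r i - p * conj (x i)) * conj (r i - p * conj (x i))) * (conj (x k) * x k)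
          + ((r i - p * conj (x i)) * x i) * (conj (x k) * conj (r k))
          + (conj (r i - p * conj (x i)) * conj (x i)) * (r k * x k)
          + (conj (x i) * x i) * (r k * conj (r k)) := by
        intro k
        simp only [B0, map_add, map_mul, map_sub, Complex.conj_conj]
        ring
      rw [Finset.sum_congr rfl fun k _ => e k]
      simp only [Finset.sum_add_distrib, ← Finset.mul_sum]
      rw [hS1, hS2, hS3, ← hR]
      simp only [map_sub, map_mul, Complex.conj_conj]
      ring
    rw [Finset.sum_congr rfl fun i _ => inner i, Finset.sum_add_distrib,
      ← Finset.mul_sum, hX, ← hR]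
    ring
  have creal : ((∑ i, ∑ k, Complex.normSq (B0 p x r i k) : ℝ) : ℂ)
      = ((2 * (∑ i, Complex.normSq (r i)) - Complex.normSq p : ℝ) : ℂ) := by
    push_cast [← Complex.mul_conj]
    exact key
  exact_mod_cast creal

lemma cross_zero (p : ℂ) (x r : Fin n → ℂ) (C : Matrix (Fin n) (Fin n) ℂ)
    (hCs : ∀ i k, C k i = C i k) (hCx : C.mulVec x = 0) :
    ∑ i, ∑ k, conj (B0 p x r i k) * C i k = 0 := by
  have h1 : ∀ i, ∑ k, C i k * x k = 0 := by
    intro i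
    have := congrFun hCx i
    simpa [Matrix.mulVec, dotProduct] using this
  have h2 : ∀ k, ∑ i, x i * C i k = 0 := by
    intro k
    have : ∑ i, x i * C i k = ∑ i, C k i * x i := by
      exact Finset.sum_congr rfl fun i _ => by rw [mul_comm, hCs]
    rw [this]
    simpa using h1 k
  have e : ∀ i k, conj (B0 p x r i k) * C i k
      = conj (r i - p * conj (x i)) * (C i k * x k) + conj (r k) * (x i * C i k) := by
    intro i k
    simp only [B0, map_add, map_mul, map_sub, Complex.conj_conj]
    ring
  calc ∑ i, ∑ k, conj (B0 p x r i k) * C i k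
      = ∑ i, ∑ k, (conj (r i - p * conj (x i)) * (C i k * x k)
          + conj (r k) * (x i * C i k)) :=
        Finset.sum_congr rfl fun i _ => Finset.sum_congr rfl fun k _ => e i k
    _ = (∑ i, conj (r i - p * conj (x i)) * ∑ k, C i k * x k)
          + ∑ i, ∑ k, conj (r k) * (x i * C i k) := by
        simp only [Finset.sum_add_distrib]
        congr 1
        exact Finset.sum_congr rfl fun i _ => (Finset.mul_sum _ _ _).symm
    _ = (∑ i, conj (r i - p * conj (x i)) * ∑ k, C i k * x k)
          + ∑ k, conj (r k) * ∑ i, x i * C i k := by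
        congr 1
        rw [Finset.sum_comm]
        exact Finset.sum_congr rfl fun k _ => (Finset.mul_sum _ _ _).symm
    _ = 0 := by simp [h1, h2]

lemma sum_normSq_ge (p : ℂ) (x r : Fin n → ℂ)
    (hX : ∑ t, x t * conj (x t) = 1) (hp : p = ∑ t, x t * r t)
    (B : Matrix (Fin n) (Fin n) ℂ)
    (hBs : ∀ i k, B k i = B i k) (hBx : B.mulVec x = r) :
    ∑ i, ∑ k, Complex.normSq (B0 p x r i k) ≤ ∑ i, ∑ k, Complex.normSq (B i k) := by
  set C : Matrix (Fin n) (Fin n) ℂ := B - B0 p x r with hC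
  have hCs : ∀ i k, C k i = C i k := by
    intro i k
    simp only [hC, Matrix.sub_apply, hBs i k, B0_symm p x r i k]
  have hCx : C.mulVec x = 0 := by
    rw [hC, Matrix.sub_mulVec, hBx, B0_mulVec p x r hX hp, sub_self]
  have hcross := cross_zero p x r C hCs hCx
  have hcross2 : ∑ i, ∑ k, B0 p x r i k * conj (C i k) = 0 := by
    have : ∑ i, ∑ k, B0 p x r i k * conj (C i k)
        = conj (∑ i, ∑ k, conj (B0 p x r i k) * C i k) := by
      rw [map_sum]
      refine Finset.sum_congr rfl fun i _ => ?_
      rw [map_sum]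
      refine Finset.sum_congr rfl fun k _ => ?_
      rw [map_mul, Complex.conj_conj, mul_comm]
    rw [this, hcross, map_zero]
  have hBe : ∀ i k, B i k = B0 p x r i k + C i k := by
    intro i k; simp [hC]
  have step : ∑ i, ∑ k, Complex.normSq (B i k)
      = ∑ i, ∑ k, Complex.normSq (B0 p x r i k) + ∑ i, ∑ k, Complex.normSq (C i k)
        + 2 * (∑ i, ∑ k, B0 p x r i k * conj (C i k)).re := by
    have e : ∀ i k, Complex.normSq (B i k)
        = Complex.normSq (B0 p x r i k) + Complex.normSq (C i k)
          + 2 * (B0 p x r i k * conj (C i k)).re := by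
      intro i k; rw [hBe i k, Complex.normSq_add]
    rw [Finset.sum_congr rfl fun i _ => Finset.sum_congr rfl fun k _ => e i k]
    simp only [Finset.sum_add_distrib, ← Finset.mul_sum, Complex.re_sum]
  have hCnn : 0 ≤ ∑ i, ∑ k, Complex.normSq (C i k) := by
    apply Finset.sum_nonneg; intro i _
    apply Finset.sum_nonneg; intro k _
    exact Complex.normSq_nonneg _
  rw [step, hcross2]
  simp only [Complex.zero_re, mul_zero, add_zero]
  linarith

end Stmt6Aux
set_option maxHeartbeats 1000000 in
open Finset ComplexConjugate in
/-- Frobenius structured backward error, T-palindromic, m even, λ = ±1. -/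
theorem stmt_6 {m n : ℕ} (hm : Even m) (hm0 : 0 < m) (hn : 0 < n)
    (A : ℕ → Matrix (Fin n) (Fin n) ℂ)
    (hpal : ∀ j ≤ m, A (m - j) = (A j).transpose)
    (hreg : ∃ z : ℂ, (evalP m A z).det ≠ 0)
    (lam : ℂ) (hlam : lam = 1 ∨ lam = -1)
    (x : Fin n → ℂ) (hx : vnorm x = 1)
    (r : Fin n → ℂ) (hr : r = -(evalP m A lam).mulVec x) :
    etaF_Tpal m A lam x =
      Real.sqrt ((2 * vnorm r ^ 2 - ‖dotProduct x r‖ ^ 2) / ((m : ℝ) + 1)) := by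
  classical
  obtain ⟨t, ht⟩ := hm
  -- facts about lam
  have hsq : lam * lam = 1 := by rcases hlam with h | h <;> simp [h]
  have hpowsq : ∀ j : ℕ, lam ^ j * lam ^ j = 1 := by
    intro j; rw [← mul_pow, hsq, one_pow]
  have hmpow : lam ^ m = 1 := by rw [ht, pow_add, hpowsq]
  have hmj : ∀ j ≤ m, lam ^ (m - j) = lam ^ j := by
    intro j hj
    have h1 : lam ^ (m - j) * lam ^ j = 1 := by
      rw [← pow_add, Nat.sub_add_cancel hj, hmpow]
    calc lam ^ (m - j) = lam ^ (m - j) * (lam ^ j * lam ^ j) := by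
          rw [hpowsq, mul_one]
      _ = (lam ^ (m - j) * lam ^ j) * lam ^ j := by ring
      _ = lam ^ j := by rw [h1, one_mul]
  have hnormpow : ∀ j : ℕ, ‖lam ^ j‖ = 1 := by
    intro j; rcases hlam with h | h <;> simp [h]
  -- facts about x
  have hx2 : ∑ i, ‖x i‖ ^ 2 = (1 : ℝ) := by
    have h0 : (0:ℝ) ≤ ∑ i, ‖x i‖ ^ 2 := Finset.sum_nonneg fun i _ => sq_nonneg _
    have h1 : Real.sqrt (∑ i, ‖x i‖ ^ 2) = 1 := hx
    nlinarith [Real.sq_sqrt h0, h1]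
  have hX : ∑ i, x i * conj (x i) = 1 := by
    have e : ∀ i, x i * conj (x i) = ((‖x i‖ ^ 2 : ℝ) : ℂ) := by
      intro i; rw [Complex.mul_conj, Stmt6Aux.nsq]
    rw [Finset.sum_congr rfl fun i _ => e i]
    norm_cast
  set p : ℂ := dotProduct x r with hpdef
  have hp : p = ∑ i, x i * r i := rfl
  set N : ℝ := ∑ i, ∑ k, Complex.normSq (Stmt6Aux.B0 p x r i k) with hNdef
  have hNval : N = 2 * vnorm r ^ 2 - ‖p‖ ^ 2 := by
    rw [hNdef, Stmt6Aux.B0_normSq p x r hX hp]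
    have h1 : vnorm r ^ 2 = ∑ i, Complex.normSq (r i) := by
      have h0 : (0:ℝ) ≤ ∑ i, ‖r i‖ ^ 2 := Finset.sum_nonneg fun i _ => sq_nonneg _
      simp only [vnorm]
      rw [Real.sq_sqrt h0]
      exact Finset.sum_congr rfl fun i _ => Stmt6Aux.nsq _
    rw [h1, Stmt6Aux.nsq]
  have hAx : (evalP m A lam).mulVec x = -r := by rw [hr, neg_neg]
  have hEval : ∀ (Δ : ℕ → Matrix (Fin n) (Fin n) ℂ) (i k : Fin n),
      evalP m Δ lam i k = ∑ j ∈ Finset.range (m + 1), lam ^ j * Δ j i k := by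
    intro Δ i k
    simp [evalP, Matrix.sum_apply]
  have hfrob : ∀ M : Matrix (Fin n) (Fin n) ℂ,
      frobNorm M ^ 2 = ∑ i, ∑ k, ‖M i k‖ ^ 2 := by
    intro M
    have h0 : (0:ℝ) ≤ ∑ i, ∑ k, ‖M i k‖ ^ 2 :=
      Finset.sum_nonneg fun i _ => Finset.sum_nonneg fun k _ => sq_nonneg _
    simp only [frobNorm]; rw [Real.sq_sqrt h0]
  have hm1R : (0 : ℝ) < (m : ℝ) + 1 := Nat.cast_add_one_pos m
  -- the witness perturbation
  set c : ℂ := ((m : ℂ) + 1)⁻¹ with hc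
  have hcne : ((m : ℂ) + 1) ≠ 0 := Nat.cast_add_one_ne_zero m
  have hcnorm : ‖c‖ = ((m : ℝ) + 1)⁻¹ := by
    rw [hc, norm_inv]
    congr 1
    rw [show ((m : ℂ) + 1) = (((m : ℝ) + 1 : ℝ) : ℂ) by push_cast; ring]
    rw [Complex.norm_real, Real.norm_eq_abs, abs_of_pos hm1R]
  set Δ0 : ℕ → Matrix (Fin n) (Fin n) ℂ :=
    fun j => (c * lam ^ j) • Stmt6Aux.B0 p x r with hΔ0
  have hB0T : (Stmt6Aux.B0 p x r).transpose = Stmt6Aux.B0 p x r := by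
    funext i k
    simp only [Matrix.transpose_apply]
    exact Stmt6Aux.B0_symm p x r i k
  have hmemval : ∃ Δ : ℕ → Matrix (Fin n) (Fin n) ℂ,
      (∀ j ≤ m, Δ (m - j) = (Δ j).transpose) ∧
      (evalP m A lam).mulVec x + (evalP m Δ lam).mulVec x = 0 ∧
      Real.sqrt (N / ((m : ℝ) + 1)) =
        Real.sqrt (∑ j ∈ Finset.range (m + 1), frobNorm (Δ j) ^ 2) := by
    refine ⟨Δ0, ?_, ?_, ?_⟩
    · intro j hj
      show (c * lam ^ (m - j)) • Stmt6Aux.B0 p x r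
          = ((c * lam ^ j) • Stmt6Aux.B0 p x r).transpose
      rw [Matrix.transpose_smul, hB0T, hmj j hj]
    · have hev : evalP m Δ0 lam = Stmt6Aux.B0 p x r := by
        funext i k
        rw [hEval]
        have e : ∀ j ∈ Finset.range (m + 1),
            lam ^ j * Δ0 j i k = c * Stmt6Aux.B0 p x r i k := by
          intro j _
          show lam ^ j * ((c * lam ^ j) * Stmt6Aux.B0 p x r i k) = _
          calc lam ^ j * ((c * lam ^ j) * Stmt6Aux.B0 p x r i k)
              = (lam ^ j * lam ^ j) * (c * Stmt6Aux.B0 p x r i k) := by ring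
            _ = c * Stmt6Aux.B0 p x r i k := by rw [hpowsq, one_mul]
        rw [Finset.sum_congr rfl e, Finset.sum_const, Finset.card_range, nsmul_eq_mul]
        rw [hc]
        push_cast
        field_simp
      rw [hev, hAx, Stmt6Aux.B0_mulVec p x r hX hp, neg_add_cancel]
    · congr 1
      have e : ∀ j ∈ Finset.range (m + 1),
          frobNorm (Δ0 j) ^ 2 = (((m : ℝ) + 1) ^ 2)⁻¹ * N := by
        intro j _
        rw [hfrob]
        have e2 : ∀ (i k : Fin n), ‖Δ0 j i k‖ ^ 2
            = (((m : ℝ) + 1) ^ 2)⁻¹ * Complex.normSq (Stmt6Aux.B0 p x r i k) := by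
          intro i k
          show ‖(c * lam ^ j) * Stmt6Aux.B0 p x r i k‖ ^ 2 = _
          rw [norm_mul, norm_mul, hcnorm, hnormpow, mul_one, mul_pow,
            ← inv_pow, Stmt6Aux.nsq]
        rw [Finset.sum_congr rfl fun i _ => Finset.sum_congr rfl fun k _ => e2 i k]
        simp only [← Finset.mul_sum]
        rw [hNdef]
      rw [Finset.sum_congr rfl e, Finset.sum_const, Finset.card_range, nsmul_eq_mul]
      push_cast
      field_simp
  -- lower bound
  have hlow : ∀ e : ℝ, (∃ Δ : ℕ → Matrix (Fin n) (Fin n) ℂ,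
      (∀ j ≤ m, Δ (m - j) = (Δ j).transpose) ∧
      (evalP m A lam).mulVec x + (evalP m Δ lam).mulVec x = 0 ∧
      e = Real.sqrt (∑ j ∈ Finset.range (m + 1), frobNorm (Δ j) ^ 2)) →
      Real.sqrt (N / ((m : ℝ) + 1)) ≤ e := by
    rintro e ⟨Δ, hpalΔ, hcon, he⟩
    set B : Matrix (Fin n) (Fin n) ℂ := evalP m Δ lam with hBdef
    have hBx : B.mulVec x = r := by
      have h3 := eq_neg_of_add_eq_zero_right hcon
      rw [hAx, neg_neg] at h3
      exact h3
    have hBs : ∀ i k, B k i = B i k := by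
      intro i k
      rw [hBdef, hEval Δ k i, hEval Δ i k]
      calc ∑ j ∈ Finset.range (m + 1), lam ^ j * Δ j k i
          = ∑ j ∈ Finset.range (m + 1), lam ^ (m - j) * Δ (m - j) i k := by
            refine Finset.sum_congr rfl fun j hj => ?_
            have hj' : j ≤ m := Finset.mem_range_succ_iff.mp hj
            rw [hmj j hj', hpalΔ j hj']
            simp [Matrix.transpose_apply]
        _ = ∑ j ∈ Finset.range (m + 1), lam ^ j * Δ j i k := by
            have h4 := Finset.sum_range_reflect (fun j => lam ^ j * Δ j i k) (m + 1)
            simpa using h4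
    have hBge : N ≤ ∑ i, ∑ k, Complex.normSq (B i k) :=
      Stmt6Aux.sum_normSq_ge p x r hX hp B hBs hBx
    have hentry : ∀ i k, Complex.normSq (B i k)
        ≤ ((m : ℝ) + 1) * ∑ j ∈ Finset.range (m + 1), ‖Δ j i k‖ ^ 2 := by
      intro i k
      have h1 : ‖B i k‖ ≤ ∑ j ∈ Finset.range (m + 1), ‖Δ j i k‖ := by
        rw [hBdef, hEval Δ i k]
        refine (norm_sum_le _ _).trans_eq ?_
        exact Finset.sum_congr rfl fun j _ => by rw [norm_mul, hnormpow, one_mul]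
      have h2 : (∑ j ∈ Finset.range (m + 1), ‖Δ j i k‖) ^ 2
          ≤ ((m : ℝ) + 1) * ∑ j ∈ Finset.range (m + 1), ‖Δ j i k‖ ^ 2 := by
        have h := sq_sum_le_card_mul_sum_sq (s := Finset.range (m + 1))
          (f := fun j => ‖Δ j i k‖)
        simpa [Finset.card_range] using h
      have h3 : ‖B i k‖ ^ 2 ≤ (∑ j ∈ Finset.range (m + 1), ‖Δ j i k‖) ^ 2 :=
        pow_le_pow_left₀ (norm_nonneg _) h1 2
      rw [← Stmt6Aux.nsq]
      exact h3.trans h2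
    have hswap : ∑ i, ∑ k, ∑ j ∈ Finset.range (m + 1), ‖Δ j i k‖ ^ 2
        = ∑ j ∈ Finset.range (m + 1), ∑ i, ∑ k, ‖Δ j i k‖ ^ 2 := by
      rw [Finset.sum_congr rfl fun i _ => Finset.sum_comm (s := Finset.univ)
        (t := Finset.range (m + 1)) (f := fun k j => ‖Δ j i k‖ ^ 2)]
      exact Finset.sum_comm
    have hCS : N ≤ ((m : ℝ) + 1) * ∑ j ∈ Finset.range (m + 1), frobNorm (Δ j) ^ 2 := by
      calc N ≤ ∑ i, ∑ k, Complex.normSq (B i k) := hBge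
        _ ≤ ∑ i, ∑ k, (((m : ℝ) + 1) * ∑ j ∈ Finset.range (m + 1), ‖Δ j i k‖ ^ 2) := by
            refine Finset.sum_le_sum fun i _ => Finset.sum_le_sum fun k _ => hentry i k
        _ = ((m : ℝ) + 1) * ∑ i, ∑ k, ∑ j ∈ Finset.range (m + 1), ‖Δ j i k‖ ^ 2 := by
            simp only [← Finset.mul_sum]
        _ = ((m : ℝ) + 1) * ∑ j ∈ Finset.range (m + 1), ∑ i, ∑ k, ‖Δ j i k‖ ^ 2 := by
            rw [hswap]
        _ = ((m : ℝ) + 1) * ∑ j ∈ Finset.range (m + 1), frobNorm (Δ j) ^ 2 := by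
            congr 1
            exact Finset.sum_congr rfl fun j _ => (hfrob (Δ j)).symm
    rw [he]
    apply Real.sqrt_le_sqrt
    rw [div_le_iff₀ hm1R]
    linarith [hCS]
  -- conclude
  have hrw : (2 * vnorm r ^ 2 - ‖dotProduct x r‖ ^ 2) / ((m : ℝ) + 1)
      = N / ((m : ℝ) + 1) := by rw [hNval, ← hpdef]
  rw [hrw]
  simp only [etaF_Tpal]
  refine le_antisymm (csInf_le ⟨0, ?_⟩ hmemval) (le_csInf ⟨_, hmemval⟩ hlow)
  rintro e ⟨Δ, -, -, he⟩
  rw [he]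
  exact Real.sqrt_nonneg _
end
end

section
/- Let m be even, let P be a regular T-anti-palindromic matrix polynomial of degree m with n×n coefficients, let λ ∈ ℂ with λ ≠ 1 and λ ≠ −1, and let x ∈ ℂⁿ with ‖x‖₂ = 1; set r := −P(λ)x. Then the Frobenius-norm structured backward error over the class S_ap of T-anti-palindromic polynomials of degree m satisfies η_F^{S_ap}(λ, x, P) = [ (2/‖Λ_m‖₂²)·‖r‖₂² + ( 1/‖Π₋(Λ_m)‖₂² − 2/‖Λ_m‖₂² )·|xᵀr|² ]^{1/2}. -/
noncomputable section

namespace Stmt7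

variable {n : ℕ}

/-- squared euclidean norm -/
def nsq {n : ℕ} (v : Fin n → ℂ) : ℝ := ∑ i, ‖v i‖ ^ 2

lemma nsq_nonneg (v : Fin n → ℂ) : 0 ≤ nsq v :=
  Finset.sum_nonneg fun _ _ => sq_nonneg _

lemma nsq_smul (c : ℂ) (v : Fin n → ℂ) : nsq (c • v) = ‖c‖ ^ 2 * nsq v := by
  simp [nsq, norm_smul, mul_pow, Finset.mul_sum]

lemma nsq_neg (v : Fin n → ℂ) : nsq (-v) = nsq v := by simp [nsq]

lemma nsq_add_orth (u v : Fin n → ℂ) (h : ∑ i, (starRingEnd ℂ) (u i) * v i = 0) :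
    nsq (u + v) = nsq u + nsq v := by
  have expand : ∀ i, ‖u i + v i‖ ^ 2
      = ‖u i‖ ^ 2 + 2 * Complex.re ((starRingEnd ℂ) (u i) * v i) + ‖v i‖ ^ 2 := by
    intro i
    have := norm_add_sq (𝕜 := ℂ) (u i) (v i)
    rwa [RCLike.inner_apply, mul_comm (v i)] at this
  have : nsq (u + v) = ∑ i, (‖u i‖ ^ 2 + 2 * Complex.re ((starRingEnd ℂ) (u i) * v i) + ‖v i‖ ^ 2) := by
    simp only [nsq, Pi.add_apply]
    exact Finset.sum_congr rfl fun i _ => expand i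
  rw [this]
  rw [Finset.sum_add_distrib, Finset.sum_add_distrib, ← Finset.mul_sum, ← Complex.re_sum, h]
  simp [nsq]

/-- Cauchy–Schwarz for complex sums. -/
lemma cs_scalar {ι : Type*} (s : Finset ι) (a b : ι → ℂ) :
    ‖∑ i ∈ s, a i * b i‖ ^ 2 ≤ (∑ i ∈ s, ‖a i‖ ^ 2) * (∑ i ∈ s, ‖b i‖ ^ 2) := by
  have h1 : ‖∑ i ∈ s, a i * b i‖ ≤ ∑ i ∈ s, ‖a i‖ * ‖b i‖ := by
    refine (norm_sum_le _ _).trans ?_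
    exact Finset.sum_le_sum fun i _ => (norm_mul _ _).le
  calc ‖∑ i ∈ s, a i * b i‖ ^ 2 ≤ (∑ i ∈ s, ‖a i‖ * ‖b i‖) ^ 2 := by
        apply pow_le_pow_left₀ (norm_nonneg _) h1
    _ ≤ _ := Finset.sum_mul_sq_le_sq_mul_sq s _ _

end Stmt7

namespace Stmt7

lemma nsq_star (x : Fin n → ℂ) : nsq (star x) = nsq x := by
  simp [nsq]

lemma dot_star_self (x : Fin n → ℂ) : dotProduct x (star x) = (nsq x : ℂ) := by
  simp only [dotProduct, Pi.star_apply, nsq, Complex.ofReal_sum]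
  refine Finset.sum_congr rfl fun i _ => ?_
  rw [Complex.star_def, Complex.mul_conj, Complex.normSq_eq_norm_sq]

lemma dot_transpose (x : Fin n → ℂ) (M : Matrix (Fin n) (Fin n) ℂ) :
    dotProduct x (M.transpose.mulVec x) = dotProduct x (M.mulVec x) := by
  simp only [dotProduct, Matrix.mulVec, Matrix.transpose_apply, Finset.mul_sum]
  rw [Finset.sum_comm]
  exact Finset.sum_congr rfl fun i _ => Finset.sum_congr rfl fun j _ => by ring

lemma dot_sub_proj (x y : Fin n → ℂ) (hx : nsq x = 1) :
    dotProduct x (y - (dotProduct x y) • star x) = 0 := by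
  rw [dotProduct_sub, dotProduct_smul, dot_star_self, hx]
  simp

lemma nsq_sub_proj (x y : Fin n → ℂ) (hx : nsq x = 1) :
    nsq (y - (dotProduct x y) • star x)
      = nsq y - ‖dotProduct x y‖ ^ 2 := by
  set s := dotProduct x y with hs
  set w := y - s • star x with hw
  have hdw : dotProduct x w = 0 := dot_sub_proj x y hx
  have hy : y = s • star x + w := by rw [hw]; abel
  have horth : ∑ i, (starRingEnd ℂ) ((s • star x) i) * w i = 0 := by
    have h2 : ∑ i, (starRingEnd ℂ) ((s • star x) i) * w i
        = (starRingEnd ℂ) s * dotProduct x w := by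
      rw [dotProduct, Finset.mul_sum]
      refine Finset.sum_congr rfl fun i _ => ?_
      simp only [Pi.smul_apply, Pi.star_apply, smul_eq_mul, map_mul, Complex.star_def,
        Complex.conj_conj]
      ring
    rw [h2, hdw, mul_zero]
  have := nsq_add_orth (s • star x) w horth
  rw [← hy] at this
  rw [this, nsq_smul, nsq_star, hx]
  ring

lemma nsq_mulVec_le (x : Fin n → ℂ) (hx : nsq x = 1) (M : Matrix (Fin n) (Fin n) ℂ) :
    nsq (M.mulVec x) ≤ ∑ i, ∑ j, ‖M i j‖ ^ 2 := by
  refine Finset.sum_le_sum fun i _ => ?_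
  have := cs_scalar Finset.univ (fun j => M i j) x
  rw [show (∑ j, ‖x j‖ ^ 2) = 1 from hx] at this
  simpa [Matrix.mulVec, dotProduct] using this

/-- Key lower bound for the Frobenius norm squared. -/
lemma frob_lb (x : Fin n → ℂ) (hx : nsq x = 1) (Δ : Matrix (Fin n) (Fin n) ℂ) :
    nsq (Δ.mulVec x) + nsq (Δ.transpose.mulVec x)
      - ‖dotProduct x (Δ.mulVec x)‖ ^ 2 ≤ ∑ i, ∑ j, ‖Δ i j‖ ^ 2 := by
  set u := Δ.transpose.mulVec x with hu
  set B : Matrix (Fin n) (Fin n) ℂ := fun i j => Δ i j - (starRingEnd ℂ) (x i) * u j with hB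
  have hxC : (∑ i, x i * (starRingEnd ℂ) (x i)) = 1 := by
    have := dot_star_self x
    rw [hx] at this
    simpa [dotProduct, Complex.star_def] using this
  -- column decomposition
  have hcol : ∀ j, (∑ i, ‖Δ i j‖ ^ 2) = (∑ i, ‖B i j‖ ^ 2) + ‖u j‖ ^ 2 := by
    intro j
    have hsum : (∑ i, x i * Δ i j) = u j := by
      simp [hu, Matrix.mulVec, dotProduct, Matrix.transpose_apply, mul_comm]
    have horth : ∑ i, (starRingEnd ℂ) ((u j • star x) i) * (fun i => B i j) i = 0 := by
      have expand : ∑ i, (starRingEnd ℂ) ((u j • star x) i) * (fun i => B i j) i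
          = ∑ i, ((starRingEnd ℂ) (u j) * (x i * Δ i j)
              - (starRingEnd ℂ) (u j) * ((x i * (starRingEnd ℂ) (x i)) * u j)) := by
        refine Finset.sum_congr rfl fun i _ => ?_
        simp only [Pi.smul_apply, Pi.star_apply, smul_eq_mul, map_mul, Complex.star_def,
          Complex.conj_conj, hB]
        ring
      rw [expand, Finset.sum_sub_distrib, ← Finset.mul_sum, ← Finset.mul_sum, hsum,
        ← Finset.sum_mul, hxC, one_mul, sub_self]
    have hcolsum : (fun i => Δ i j) = (u j • star x) + (fun i => B i j) := by
      funext i; simp [hB, Pi.smul_apply, smul_eq_mul, mul_comm]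
    have hthis := nsq_add_orth (n := n) (u j • star x) (fun i => B i j) horth
    rw [← hcolsum, nsq_smul, nsq_star, hx] at hthis
    simp only [nsq] at hthis
    rw [show (∑ i, ‖Δ i j‖ ^ 2) = ∑ i, ‖(fun i => Δ i j) i‖ ^ 2 from rfl, hthis]
    ring
  have hsplit : (∑ i, ∑ j, ‖Δ i j‖ ^ 2) = (∑ i, ∑ j, ‖B i j‖ ^ 2) + nsq u := by
    rw [Finset.sum_comm (f := fun i j => ‖Δ i j‖ ^ 2),
        Finset.sum_comm (f := fun i j => ‖B i j‖ ^ 2),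
        show nsq u = ∑ j, ‖u j‖ ^ 2 from rfl, ← Finset.sum_add_distrib]
    exact Finset.sum_congr rfl fun j _ => hcol j
  have hdotxu : dotProduct x u = dotProduct x (Δ.mulVec x) := dot_transpose x Δ
  have hBmul : B.mulVec x = Δ.mulVec x - (dotProduct x (Δ.mulVec x)) • star x := by
    rw [← hdotxu]
    funext i
    simp only [Matrix.mulVec, dotProduct, hB, Pi.sub_apply, Pi.smul_apply, Pi.star_apply,
      smul_eq_mul, sub_mul, Finset.sum_sub_distrib]
    congr 1
    rw [Finset.sum_mul]
    refine Finset.sum_congr rfl fun j _ => ?_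
    rw [Complex.star_def]
    ring
  have h1 : nsq (B.mulVec x) ≤ ∑ i, ∑ j, ‖B i j‖ ^ 2 := nsq_mulVec_le x hx B
  have h2 : nsq (B.mulVec x) = nsq (Δ.mulVec x) - ‖dotProduct x (Δ.mulVec x)‖ ^ 2 := by
    rw [hBmul]; exact nsq_sub_proj x (Δ.mulVec x) hx
  rw [hsplit]
  rw [h2] at h1
  linarith

end Stmt7

namespace Stmt7

lemma sum_reflect {M : Type*} [AddCommMonoid M] (m : ℕ) (f : ℕ → M) :
    ∑ j ∈ Finset.range (m + 1), f (m - j) = ∑ j ∈ Finset.range (m + 1), f j := by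
  have := Finset.sum_range_reflect f (m + 1)
  simpa using this

lemma sum_symm_zero {g : ℕ → ℝ} {m k : ℕ} (hmk : m = k + k)
    (hsymm : ∀ j ≤ m, g (m - j) = g j) (hk : g k = 0) :
    ∑ j ∈ Finset.range (m + 1), g j = 2 * ∑ j ∈ Finset.range k, g j := by
  have h2 : m + 1 - k = k + 1 := by omega
  have e0 : ∑ i ∈ Finset.Ico k (m + 1), g i = ∑ i ∈ Finset.range (k + 1), g (k + i) := by
    rw [Finset.sum_Ico_eq_sum_range, h2]
  have e1 : ∑ j ∈ Finset.range (m + 1), g j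
      = (∑ j ∈ Finset.range k, g j) + ∑ i ∈ Finset.range (k + 1), g (k + i) := by
    rw [← e0, Finset.range_eq_Ico, ← Finset.sum_Ico_consecutive _ (Nat.zero_le k)
        (by omega : k ≤ m + 1), ← Finset.range_eq_Ico]
  have e2 : ∑ i ∈ Finset.range (k + 1), g (k + i) = ∑ i ∈ Finset.range k, g (k + (i + 1)) := by
    rw [Finset.sum_range_succ']
    simp [hk]
  have e3 : ∑ i ∈ Finset.range k, g (k + (i + 1)) = ∑ i ∈ Finset.range k, g (k - 1 - i) := by
    refine Finset.sum_congr rfl fun i hi => ?_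
    have hik : i < k := Finset.mem_range.mp hi
    have hle : k + (i + 1) ≤ m := by omega
    have h3 : m - (k + (i + 1)) = k - 1 - i := by omega
    rw [← hsymm _ hle, h3]
  have e4 : ∑ i ∈ Finset.range k, g (k - 1 - i) = ∑ i ∈ Finset.range k, g i :=
    Finset.sum_range_reflect g k
  rw [e1, e2, e3, e4]; ring

variable {m k : ℕ} {lam : ℂ}

lemma c_reflect (hmk : m = k + k) {j : ℕ} (hj : j ≤ m) :
    lam ^ (m - j) - lam ^ (m - (m - j)) = -(lam ^ j - lam ^ (m - j)) := by
  have : m - (m - j) = j := by omega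
  rw [this]; ring

lemma c_mid (hmk : m = k + k) : lam ^ k - lam ^ (m - k) = 0 := by
  have : m - k = k := by omega
  rw [this, sub_self]

/-- ∑_{j=0}^m ‖c j‖² = 4 Pm. -/
lemma csum_eq (hmk : m = k + k) :
    ∑ j ∈ Finset.range (m + 1), ‖lam ^ j - lam ^ (m - j)‖ ^ 2
      = 4 * ∑ j ∈ Finset.range k, ‖lam ^ j - lam ^ (m - j)‖ ^ 2 / 2 := by
  rw [sum_symm_zero hmk (fun j hj => by rw [c_reflect hmk hj, norm_neg])
      (by rw [c_mid hmk]; simp)]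
  rw [← Finset.sum_div]
  ring

lemma Pm_pos (hmk : m = k + k) (hk0 : 0 < k) (hlam1 : lam ≠ 1) (hlam2 : lam ≠ -1) :
    0 < ∑ j ∈ Finset.range k, ‖lam ^ j - lam ^ (m - j)‖ ^ 2 / 2 := by
  rcases (Finset.sum_nonneg (fun j (_ : j ∈ Finset.range k) =>
      div_nonneg (sq_nonneg ‖lam ^ j - lam ^ (m - j)‖) two_pos.le)).lt_or_eq with h | h
  · exact h
  exfalso
  have hzero : ∀ j ∈ Finset.range k, ‖lam ^ j - lam ^ (m - j)‖ ^ 2 / 2 = 0 := by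
    intro j hj
    exact (Finset.sum_eq_zero_iff_of_nonneg (fun j _ =>
      div_nonneg (sq_nonneg _) two_pos.le)).mp h.symm j hj
  have hc : ∀ j < k, lam ^ j = lam ^ (m - j) := by
    intro j hj
    have := hzero j (Finset.mem_range.mpr hj)
    have h2 : ‖lam ^ j - lam ^ (m - j)‖ = 0 := by
      nlinarith [norm_nonneg (lam ^ j - lam ^ (m - j)), sq_nonneg ‖lam ^ j - lam ^ (m - j)‖]
    rw [norm_eq_zero, sub_eq_zero] at h2
    exact h2
  -- j = 0 : lam ^ m = 1, hence lam ≠ 0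
  have h0 := hc 0 hk0
  rw [pow_zero, Nat.sub_zero] at h0
  have hlam0 : lam ≠ 0 := by
    intro h
    rw [h, zero_pow (by omega : m ≠ 0)] at h0
    exact one_ne_zero h0
  -- j = k - 1 : lam ^ (k-1) = lam ^ (k+1)
  have h1 := hc (k - 1) (by omega)
  have hm1 : m - (k - 1) = k + 1 := by omega
  rw [hm1] at h1
  have hkk : k + 1 = (k - 1) + 2 := by omega
  rw [hkk, pow_add] at h1
  have hne : lam ^ (k - 1) ≠ 0 := pow_ne_zero _ hlam0
  have hsq : lam ^ 2 = 1 := by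
    have h4 : lam ^ (k - 1) * 1 = lam ^ (k - 1) * lam ^ 2 := by rw [mul_one]; exact h1
    exact (mul_left_cancel₀ hne h4).symm
  have hfact : (lam - 1) * (lam + 1) = 0 := by linear_combination hsq
  rcases mul_eq_zero.mp hfact with h | h
  · exact hlam1 (sub_eq_zero.mp h)
  · exact hlam2 (eq_neg_of_add_eq_zero_left h)

end Stmt7

namespace Stmt7

lemma mul_conj_self (z : ℂ) : z * (starRingEnd ℂ) z = ((‖z‖ ^ 2 : ℝ) : ℂ) := by
  rw [Complex.mul_conj, Complex.normSq_eq_norm_sq]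

variable {m k : ℕ} {lam : ℂ}

lemma L_sum (m : ℕ) (lam : ℂ) :
    ∑ j ∈ Finset.range (m + 1), lam ^ j * (starRingEnd ℂ) (lam ^ j)
      = ((∑ j ∈ Finset.range (m + 1), ‖lam‖ ^ (2 * j) : ℝ) : ℂ) := by
  rw [Complex.ofReal_sum]
  refine Finset.sum_congr rfl fun j _ => ?_
  rw [mul_conj_self, norm_pow, ← pow_mul, mul_comm j 2]

lemma L_ge_one (m : ℕ) (lam : ℂ) :
    (1 : ℝ) ≤ ∑ j ∈ Finset.range (m + 1), ‖lam‖ ^ (2 * j) := by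
  have := Finset.single_le_sum (f := fun j => ‖lam‖ ^ (2 * j))
    (fun i _ => pow_nonneg (norm_nonneg _) _) (Finset.mem_range.mpr (Nat.succ_pos m))
  simpa using this

lemma lamc_sum (hmk : m = k + k) :
    ∑ j ∈ Finset.range (m + 1), lam ^ j * (starRingEnd ℂ) (lam ^ j - lam ^ (m - j))
      = ((2 * ∑ j ∈ Finset.range k, ‖lam ^ j - lam ^ (m - j)‖ ^ 2 / 2 : ℝ) : ℂ) := by
  have hrefl : ∑ j ∈ Finset.range (m + 1), lam ^ j * (starRingEnd ℂ) (lam ^ j - lam ^ (m - j))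
      = ∑ j ∈ Finset.range (m + 1),
        -(lam ^ (m - j) * (starRingEnd ℂ) (lam ^ j - lam ^ (m - j))) := by
    rw [← sum_reflect m (fun j => lam ^ j * (starRingEnd ℂ) (lam ^ j - lam ^ (m - j)))]
    refine Finset.sum_congr rfl fun j hj => ?_
    have hjm : j ≤ m := by have := Finset.mem_range.mp hj; omega
    rw [c_reflect (lam := lam) hmk hjm, map_neg]
    ring
  have hsum2 : (∑ j ∈ Finset.range (m + 1), lam ^ j * (starRingEnd ℂ) (lam ^ j - lam ^ (m - j)))
      + (∑ j ∈ Finset.range (m + 1), lam ^ j * (starRingEnd ℂ) (lam ^ j - lam ^ (m - j)))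
      = ((∑ j ∈ Finset.range (m + 1), ‖lam ^ j - lam ^ (m - j)‖ ^ 2 : ℝ) : ℂ) := by
    nth_rewrite 2 [hrefl]
    rw [← Finset.sum_add_distrib, Complex.ofReal_sum]
    refine Finset.sum_congr rfl fun j _ => ?_
    rw [← mul_conj_self (lam ^ j - lam ^ (m - j))]
    ring
  rw [csum_eq hmk] at hsum2
  push_cast at hsum2 ⊢
  linear_combination hsum2 / 2

end Stmt7

namespace Stmt7

section Construction

variable {n : ℕ} (m : ℕ) (lam τ : ℂ) (x ρ : Fin n → ℂ)

/-- scalar coefficients of the optimal perturbation -/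
def sfun (j : ℕ) : ℂ := (starRingEnd ℂ) (lam ^ j - lam ^ (m - j)) * τ

/-- vector values `Δ_j x` of the optimal perturbation -/
def yfun (j : ℕ) : Fin n → ℂ :=
  sfun m lam τ j • star x + (starRingEnd ℂ) (lam ^ j) • ρ

/-- the optimal perturbation matrices -/
def Dmat (j : ℕ) : Matrix (Fin n) (Fin n) ℂ := fun a b =>
  yfun m lam τ x ρ j a * (starRingEnd ℂ) (x b)
    - (starRingEnd ℂ) (x a) * (yfun m lam τ x ρ (m - j) b + sfun m lam τ j * (starRingEnd ℂ) (x b))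

variable {m lam τ x ρ}

lemma sfun_reflect {k : ℕ} (hmk : m = k + k) {j : ℕ} (hj : j ≤ m) :
    sfun m lam τ (m - j) = -sfun m lam τ j := by
  unfold sfun
  rw [c_reflect hmk hj, map_neg, neg_mul]

lemma dotxx (hx : nsq x = 1) : ∑ b, (starRingEnd ℂ) (x b) * x b = 1 := by
  have h := dot_star_self x
  rw [hx, Complex.ofReal_one] at h
  rw [← h]
  simp only [dotProduct, Pi.star_apply, Complex.star_def]
  exact Finset.sum_congr rfl fun b _ => by ring

lemma dot_x_yfun (hx : nsq x = 1) (hρ : dotProduct x ρ = 0) (j : ℕ) :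
    dotProduct x (yfun m lam τ x ρ j) = sfun m lam τ j := by
  unfold yfun
  rw [dotProduct_add, dotProduct_smul, dotProduct_smul, dot_star_self,
    hx, hρ]
  simp

lemma Dmat_pal {k : ℕ} (hmk : m = k + k) {j : ℕ} (hj : j ≤ m) :
    Dmat m lam τ x ρ (m - j) = -(Dmat m lam τ x ρ j).transpose := by
  funext a b
  simp only [Dmat, Matrix.neg_apply, Matrix.transpose_apply]
  rw [show m - (m - j) = j from by omega, sfun_reflect hmk hj]
  ring

lemma Dmat_mulVec (hx : nsq x = 1) (hρ : dotProduct x ρ = 0)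
    {k : ℕ} (hmk : m = k + k) {j : ℕ} (hj : j ≤ m) :
    (Dmat m lam τ x ρ j).mulVec x = yfun m lam τ x ρ j := by
  funext a
  simp only [Dmat, Matrix.mulVec, dotProduct, sub_mul, Finset.sum_sub_distrib]
  have h1 : ∑ b, yfun m lam τ x ρ j a * (starRingEnd ℂ) (x b) * x b
      = yfun m lam τ x ρ j a := by
    rw [show (fun b => yfun m lam τ x ρ j a * (starRingEnd ℂ) (x b) * x b)
        = (fun b => yfun m lam τ x ρ j a * ((starRingEnd ℂ) (x b) * x b)) from
        funext fun b => by ring]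
    rw [← Finset.mul_sum, dotxx hx, mul_one]
  have h2 : ∑ b, (starRingEnd ℂ) (x a)
        * (yfun m lam τ x ρ (m - j) b + sfun m lam τ j * (starRingEnd ℂ) (x b)) * x b
      = 0 := by
    have expand : ∀ b, (starRingEnd ℂ) (x a)
          * (yfun m lam τ x ρ (m - j) b + sfun m lam τ j * (starRingEnd ℂ) (x b)) * x b
        = (starRingEnd ℂ) (x a) * (x b * yfun m lam τ x ρ (m - j) b)
          + (starRingEnd ℂ) (x a) * sfun m lam τ j * ((starRingEnd ℂ) (x b) * x b) := by
      intro b; ring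
    rw [Finset.sum_congr rfl fun b _ => expand b, Finset.sum_add_distrib,
      ← Finset.mul_sum, ← Finset.mul_sum, dotxx hx, mul_one]
    have hdy : ∑ b, x b * yfun m lam τ x ρ (m - j) b = sfun m lam τ (m - j) :=
      dot_x_yfun hx hρ (m - j)
    rw [hdy, sfun_reflect hmk hj]
    ring
  rw [h1, h2, sub_zero]

lemma norm_sfun_reflect {k : ℕ} (hmk : m = k + k) {j : ℕ} (hj : j ≤ m) :
    ‖sfun m lam τ (m - j)‖ = ‖sfun m lam τ j‖ := by
  rw [sfun_reflect hmk hj, norm_neg]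

/-- rows-times-columns outer structure norm computation -/
lemma frob_outer (hx : nsq x = 1) (u w : Fin n → ℂ) (hw : dotProduct x w = 0) :
    ∑ a, ∑ b, ‖u a * (starRingEnd ℂ) (x b) + (starRingEnd ℂ) (x a) * w b‖ ^ 2
      = nsq u + nsq w := by
  have hrow : ∀ a, ∑ b, ‖u a * (starRingEnd ℂ) (x b) + (starRingEnd ℂ) (x a) * w b‖ ^ 2
      = ‖u a‖ ^ 2 + ‖x a‖ ^ 2 * nsq w := by
    intro a
    have horth : ∑ b, (starRingEnd ℂ) ((u a • star x) b) * (((starRingEnd ℂ) (x a)) • w) b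
        = 0 := by
      have : ∀ b, (starRingEnd ℂ) ((u a • star x) b) * (((starRingEnd ℂ) (x a)) • w) b
          = (starRingEnd ℂ) (u a) * (starRingEnd ℂ) (x a) * (x b * w b) := by
        intro b
        simp only [Pi.smul_apply, Pi.star_apply, smul_eq_mul, map_mul, Complex.star_def,
          Complex.conj_conj]
        ring
      rw [Finset.sum_congr rfl fun b _ => this b, ← Finset.mul_sum]
      have : ∑ b, x b * w b = 0 := hw
      rw [this, mul_zero]
    have hsum := nsq_add_orth (u a • star x) (((starRingEnd ℂ) (x a)) • w) horth
    have heq : (fun b => u a * (starRingEnd ℂ) (x b) + (starRingEnd ℂ) (x a) * w b)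
        = (u a • star x) + (((starRingEnd ℂ) (x a)) • w) := by
      funext b
      simp only [Pi.add_apply, Pi.smul_apply, Pi.star_apply, smul_eq_mul, Complex.star_def]
    rw [show (∑ b, ‖u a * (starRingEnd ℂ) (x b) + (starRingEnd ℂ) (x a) * w b‖ ^ 2)
        = nsq (fun b => u a * (starRingEnd ℂ) (x b) + (starRingEnd ℂ) (x a) * w b) from rfl,
      heq, hsum, nsq_smul, nsq_smul, nsq_star, hx]
    simp
  rw [Finset.sum_congr rfl fun a _ => hrow a, Finset.sum_add_distrib, ← Finset.sum_mul]
  rw [show (∑ a, ‖u a‖ ^ 2) = nsq u from rfl, show (∑ a, ‖x a‖ ^ 2) = nsq x from rfl, hx,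
    one_mul]

lemma Dmat_frob (hx : nsq x = 1) (hρ : dotProduct x ρ = 0)
    {k : ℕ} (hmk : m = k + k) {j : ℕ} (hj : j ≤ m) :
    ∑ a, ∑ b, ‖Dmat m lam τ x ρ j a b‖ ^ 2
      = nsq (yfun m lam τ x ρ j) + nsq (yfun m lam τ x ρ (m - j)) - ‖sfun m lam τ j‖ ^ 2 := by
  set w : Fin n → ℂ :=
    fun b => -(yfun m lam τ x ρ (m - j) b + sfun m lam τ j * (starRingEnd ℂ) (x b)) with hwdef
  have hDw : ∀ a b, Dmat m lam τ x ρ j a b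
      = yfun m lam τ x ρ j a * (starRingEnd ℂ) (x b) + (starRingEnd ℂ) (x a) * w b := by
    intro a b; simp only [Dmat, hwdef]; ring
  have hdotw : dotProduct x w = 0 := by
    simp only [dotProduct, hwdef]
    have : ∀ b, x b * -(yfun m lam τ x ρ (m - j) b + sfun m lam τ j * (starRingEnd ℂ) (x b))
        = -(x b * yfun m lam τ x ρ (m - j) b) - sfun m lam τ j * ((starRingEnd ℂ) (x b) * x b) := by
      intro b; ring
    rw [Finset.sum_congr rfl fun b _ => this b, Finset.sum_sub_distrib, Finset.sum_neg_distrib,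
      ← Finset.mul_sum, dotxx hx, mul_one]
    have hdy : ∑ b, x b * yfun m lam τ x ρ (m - j) b = sfun m lam τ (m - j) :=
      dot_x_yfun hx hρ (m - j)
    rw [hdy, sfun_reflect hmk hj]
    ring
  have hnw : nsq w = nsq (yfun m lam τ x ρ (m - j)) - ‖sfun m lam τ j‖ ^ 2 := by
    have hw2 : w = -(yfun m lam τ x ρ (m - j)
        - (dotProduct x (yfun m lam τ x ρ (m - j))) • star x) := by
      funext b
      simp only [hwdef, Pi.neg_apply, Pi.sub_apply, Pi.smul_apply, Pi.star_apply, smul_eq_mul,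
        dot_x_yfun hx hρ (m - j), sfun_reflect hmk hj, Complex.star_def]
      ring
    rw [hw2, nsq_neg, nsq_sub_proj x _ hx, dot_x_yfun hx hρ (m - j),
      norm_sfun_reflect hmk hj]
  rw [Finset.sum_congr rfl fun a _ => Finset.sum_congr rfl fun b _ => by rw [hDw a b],
    frob_outer hx _ w hdotw, hnw]
  ring

lemma nsq_yfun (hx : nsq x = 1) (hρ : dotProduct x ρ = 0) (j : ℕ) :
    nsq (yfun m lam τ x ρ j) = ‖sfun m lam τ j‖ ^ 2 + ‖lam‖ ^ (2 * j) * nsq ρ := by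
  have horth : ∑ i, (starRingEnd ℂ) ((sfun m lam τ j • star x) i)
      * (((starRingEnd ℂ) (lam ^ j)) • ρ) i = 0 := by
    have : ∀ i, (starRingEnd ℂ) ((sfun m lam τ j • star x) i)
        * (((starRingEnd ℂ) (lam ^ j)) • ρ) i
        = (starRingEnd ℂ) (sfun m lam τ j) * (starRingEnd ℂ) (lam ^ j) * (x i * ρ i) := by
      intro i
      simp only [Pi.smul_apply, Pi.star_apply, smul_eq_mul, map_mul, Complex.star_def,
        Complex.conj_conj]
      ring
    rw [Finset.sum_congr rfl fun i _ => this i, ← Finset.mul_sum]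
    have : ∑ i, x i * ρ i = 0 := hρ
    rw [this, mul_zero]
  rw [yfun, nsq_add_orth _ _ horth, nsq_smul, nsq_smul, nsq_star, hx, mul_one,
    RCLike.norm_conj, norm_pow, ← pow_mul, mul_comm j 2]

end Construction

end Stmt7

namespace Stmt7

lemma vnorm_sq {n : ℕ} (v : Fin n → ℂ) : vnorm v ^ 2 = nsq v :=
  Real.sq_sqrt (nsq_nonneg v)

lemma frobNorm_sq {n : ℕ} (M : Matrix (Fin n) (Fin n) ℂ) :
    frobNorm M ^ 2 = ∑ i, ∑ j, ‖M i j‖ ^ 2 :=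
  Real.sq_sqrt (Finset.sum_nonneg fun _ _ => Finset.sum_nonneg fun _ _ => sq_nonneg _)

lemma evalP_mulVec {n : ℕ} (m : ℕ) (Δ : ℕ → Matrix (Fin n) (Fin n) ℂ) (z : ℂ)
    (x : Fin n → ℂ) :
    (evalP m Δ z).mulVec x = ∑ j ∈ Finset.range (m + 1), z ^ j • (Δ j).mulVec x := by
  funext i
  simp only [evalP, Matrix.mulVec, dotProduct, Finset.sum_apply, Matrix.sum_apply,
    Matrix.smul_apply, Pi.smul_apply, smul_eq_mul, Finset.sum_mul, Finset.mul_sum]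
  rw [Finset.sum_comm]
  exact Finset.sum_congr rfl fun j _ => Finset.sum_congr rfl fun b _ => by ring

end Stmt7

/-- Frobenius structured backward error, T-anti-palindromic, m even, λ ≠ ±1. -/
theorem stmt_7 {m n : ℕ} (hm : Even m) (hm0 : 0 < m) (hn : 0 < n)
    (A : ℕ → Matrix (Fin n) (Fin n) ℂ)
    (hpal : ∀ j ≤ m, A (m - j) = -(A j).transpose)
    (hreg : ∃ z : ℂ, (evalP m A z).det ≠ 0)
    (lam : ℂ) (hlam1 : lam ≠ 1) (hlam2 : lam ≠ -1)
    (x : Fin n → ℂ) (hx : vnorm x = 1)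
    (r : Fin n → ℂ) (hr : r = -(evalP m A lam).mulVec x) :
    etaF_Tapal m A lam x =
      Real.sqrt ((2 / LamNormSq m lam) * vnorm r ^ 2 +
        (1 / PiMinusSq m lam - 2 / LamNormSq m lam) * ‖dotProduct x r‖ ^ 2) := by
  classical
  obtain ⟨k, hmk⟩ := hm
  have hk0 : 0 < k := by omega
  have hx1 : Stmt7.nsq x = 1 := Real.sqrt_eq_one.mp hx
  set d : ℂ := dotProduct x r with hd
  set L : ℝ := LamNormSq m lam with hLdef
  set Pm : ℝ := PiMinusSq m lam with hPmdef
  have hL_sum : L = ∑ j ∈ Finset.range (m + 1), ‖lam‖ ^ (2 * j) := rfl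
  have hPm_eq : Pm = ∑ j ∈ Finset.range k, ‖lam ^ j - lam ^ (m - j)‖ ^ 2 / 2 := by
    rw [hPmdef, PiMinusSq, if_neg (by omega : ¬ (m % 2 = 1)),
      show m / 2 = k from by omega]
  have hPm_pos : 0 < Pm := by rw [hPm_eq]; exact Stmt7.Pm_pos hmk hk0 hlam1 hlam2
  have hL1 : (1 : ℝ) ≤ L := by rw [hL_sum]; exact Stmt7.L_ge_one m lam
  have hL_pos : 0 < L := lt_of_lt_of_le one_pos hL1
  set rp : Fin n → ℂ := r - d • star x with hrp
  have hdrp : dotProduct x rp = 0 := Stmt7.dot_sub_proj x r hx1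
  have hnrp : Stmt7.nsq rp = Stmt7.nsq r - ‖d‖ ^ 2 := Stmt7.nsq_sub_proj x r hx1
  have hrp_nonneg : 0 ≤ Stmt7.nsq r - ‖d‖ ^ 2 := hnrp ▸ Stmt7.nsq_nonneg rp
  set T : ℝ := ‖d‖ ^ 2 / Pm + 2 * (Stmt7.nsq r - ‖d‖ ^ 2) / L with hT
  have hT_nonneg : 0 ≤ T := by
    have h1 : 0 ≤ ‖d‖ ^ 2 / Pm := div_nonneg (sq_nonneg _) hPm_pos.le
    have h2 : 0 ≤ 2 * (Stmt7.nsq r - ‖d‖ ^ 2) / L := by positivity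
    rw [hT]
    linarith
  have hRHS : Real.sqrt (2 / L * vnorm r ^ 2 + (1 / Pm - 2 / L) * ‖d‖ ^ 2)
      = Real.sqrt T := by
    congr 1
    rw [Stmt7.vnorm_sq, hT]
    field_simp
    ring
  rw [hRHS, etaF_Tapal]
  -- the construction
  set τ : ℂ := d / ((2 * Pm : ℝ) : ℂ) with hτ
  set ρ : Fin n → ℂ := ((1 / L : ℝ) : ℂ) • rp with hρ
  have hρ0 : dotProduct x ρ = 0 := by
    rw [hρ, dotProduct_smul, hdrp, smul_zero]
  have hnρ : Stmt7.nsq ρ = (Stmt7.nsq r - ‖d‖ ^ 2) / L ^ 2 := by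
    rw [hρ, Stmt7.nsq_smul, hnrp, Complex.norm_real, Real.norm_of_nonneg (by positivity)]
    field_simp
  have hjle : ∀ j ∈ Finset.range (m + 1), j ≤ m := fun j hj => by
    have := Finset.mem_range.mp hj; omega
  have key2 : (evalP m (Stmt7.Dmat m lam τ x ρ) lam).mulVec x = r := by
    rw [Stmt7.evalP_mulVec]
    have h1 : ∀ j ∈ Finset.range (m + 1),
        lam ^ j • (Stmt7.Dmat m lam τ x ρ j).mulVec x
        = (lam ^ j * Stmt7.sfun m lam τ j) • star x
          + (lam ^ j * (starRingEnd ℂ) (lam ^ j)) • ρ := by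
      intro j hj
      rw [Stmt7.Dmat_mulVec hx1 hρ0 hmk (hjle j hj), Stmt7.yfun, smul_add, smul_smul,
        smul_smul]
    rw [Finset.sum_congr rfl h1, Finset.sum_add_distrib, ← Finset.sum_smul, ← Finset.sum_smul]
    have h2 : ∑ j ∈ Finset.range (m + 1), lam ^ j * Stmt7.sfun m lam τ j = d := by
      simp only [Stmt7.sfun]
      rw [Finset.sum_congr rfl fun j _ => (mul_assoc _ _ _).symm, ← Finset.sum_mul,
        Stmt7.lamc_sum hmk, ← hPm_eq, hτ]
      rw [mul_div_cancel₀]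
      exact Complex.ofReal_ne_zero.mpr (by positivity)
    have h3 : ∑ j ∈ Finset.range (m + 1), lam ^ j * (starRingEnd ℂ) (lam ^ j)
        = ((L : ℝ) : ℂ) := by
      rw [Stmt7.L_sum, ← hL_sum]
    rw [h2, h3, hρ, smul_smul,
      show ((L : ℝ) : ℂ) * ((1 / L : ℝ) : ℂ) = 1 by
        rw [← Complex.ofReal_mul, mul_one_div, div_self hL_pos.ne', Complex.ofReal_one],
      one_smul, hrp]
    abel
  have hsfnorm : ∀ j, ‖Stmt7.sfun m lam τ j‖ ^ 2
      = ‖lam ^ j - lam ^ (m - j)‖ ^ 2 * ‖τ‖ ^ 2 := by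
    intro j
    rw [Stmt7.sfun, norm_mul, RCLike.norm_conj, mul_pow]
  have hτn : ‖τ‖ ^ 2 = ‖d‖ ^ 2 / (2 * Pm) ^ 2 := by
    rw [hτ, norm_div, Complex.norm_real, Real.norm_of_nonneg (by positivity), div_pow]
  have hsf_sum : ∑ j ∈ Finset.range (m + 1), ‖Stmt7.sfun m lam τ j‖ ^ 2 = ‖d‖ ^ 2 / Pm := by
    rw [Finset.sum_congr rfl fun j _ => hsfnorm j, ← Finset.sum_mul, Stmt7.csum_eq hmk,
      ← hPm_eq, hτn]
    field_simp
    ring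
  have key3 : ∑ j ∈ Finset.range (m + 1), ∑ a, ∑ b, ‖Stmt7.Dmat m lam τ x ρ j a b‖ ^ 2
      = T := by
    rw [Finset.sum_congr rfl fun j hj => Stmt7.Dmat_frob hx1 hρ0 hmk (hjle j hj)]
    rw [Finset.sum_sub_distrib, Finset.sum_add_distrib,
      Stmt7.sum_reflect m (fun j => Stmt7.nsq (Stmt7.yfun m lam τ x ρ j)),
      Finset.sum_congr rfl fun j _ => Stmt7.nsq_yfun hx1 hρ0 j,
      Finset.sum_add_distrib, ← Finset.sum_mul, ← hL_sum, hsf_sum, hnρ, hT]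
    field_simp
    ring
  have hfrob_eq : (∑ j ∈ Finset.range (m + 1), frobNorm (Stmt7.Dmat m lam τ x ρ j) ^ 2) = T := by
    rw [Finset.sum_congr rfl fun j _ => Stmt7.frobNorm_sq _, key3]
  have hmem : Real.sqrt T ∈ { e : ℝ | ∃ Δ : ℕ → Matrix (Fin n) (Fin n) ℂ,
      (∀ j ≤ m, Δ (m - j) = -(Δ j).transpose) ∧
      (evalP m A lam).mulVec x + (evalP m Δ lam).mulVec x = 0 ∧
      e = Real.sqrt (∑ j ∈ Finset.range (m + 1), frobNorm (Δ j) ^ 2) } := by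
    refine ⟨Stmt7.Dmat m lam τ x ρ, fun j hj => Stmt7.Dmat_pal hmk hj, ?_, ?_⟩
    · rw [key2, hr]
      abel
    · rw [hfrob_eq]
  -- lower bound
  have hlb : ∀ e ∈ { e : ℝ | ∃ Δ : ℕ → Matrix (Fin n) (Fin n) ℂ,
      (∀ j ≤ m, Δ (m - j) = -(Δ j).transpose) ∧
      (evalP m A lam).mulVec x + (evalP m Δ lam).mulVec x = 0 ∧
      e = Real.sqrt (∑ j ∈ Finset.range (m + 1), frobNorm (Δ j) ^ 2) },
      Real.sqrt T ≤ e := by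
    rintro e ⟨Δ, hΔpal, hΔeq, rfl⟩
    have hΔr : (evalP m Δ lam).mulVec x = r := by
      rw [hr]
      exact eq_neg_of_add_eq_zero_right hΔeq
    set y : ℕ → Fin n → ℂ := fun j => (Δ j).mulVec x with hy
    set s : ℕ → ℂ := fun j => dotProduct x (y j) with hs
    set w : ℕ → Fin n → ℂ := fun j => y j - s j • star x with hw
    have hyr : ∑ j ∈ Finset.range (m + 1), lam ^ j • y j = r := by
      rw [← hΔr, Stmt7.evalP_mulVec]
    have hsrefl : ∀ j ≤ m, s (m - j) = -s j := by
      intro j hj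
      simp only [hs, hy, hΔpal j hj, Matrix.neg_mulVec, dotProduct_neg]
      rw [Stmt7.dot_transpose]
    have hfj : ∀ j ≤ m, Stmt7.nsq (y j) + Stmt7.nsq (y (m - j)) - ‖s j‖ ^ 2
        ≤ ∑ a, ∑ b, ‖Δ j a b‖ ^ 2 := by
      intro j hj
      have h1 := Stmt7.frob_lb x hx1 (Δ j)
      have h2 : (Δ j).transpose = -(Δ (m - j)) := by rw [hΔpal j hj, neg_neg]
      rw [h2, Matrix.neg_mulVec, Stmt7.nsq_neg] at h1
      exact h1
    have hsum1 : ∑ j ∈ Finset.range (m + 1),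
        (Stmt7.nsq (y j) + Stmt7.nsq (y (m - j)) - ‖s j‖ ^ 2)
        ≤ ∑ j ∈ Finset.range (m + 1), ∑ a, ∑ b, ‖Δ j a b‖ ^ 2 :=
      Finset.sum_le_sum fun j hj => hfj j (hjle j hj)
    have hrefly : ∑ j ∈ Finset.range (m + 1), Stmt7.nsq (y (m - j))
        = ∑ j ∈ Finset.range (m + 1), Stmt7.nsq (y j) :=
      Stmt7.sum_reflect m (fun j => Stmt7.nsq (y j))
    have hpyth : ∀ j, Stmt7.nsq (w j) = Stmt7.nsq (y j) - ‖s j‖ ^ 2 := fun j =>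
      Stmt7.nsq_sub_proj x (y j) hx1
    have hds : ∑ j ∈ Finset.range (m + 1), lam ^ j * s j = d := by
      rw [hd, ← hyr]
      simp only [hs, hy, dotProduct, Finset.sum_apply, Pi.smul_apply, smul_eq_mul,
        Finset.mul_sum]
      rw [Finset.sum_comm]
      exact Finset.sum_congr rfl fun i _ => Finset.sum_congr rfl fun j _ => by ring
    have h2 : ∑ j ∈ Finset.range (m + 1), lam ^ j * s j
        = ∑ j ∈ Finset.range (m + 1), -(lam ^ (m - j) * s j) := by
      rw [← Stmt7.sum_reflect m (fun j => lam ^ j * s j)]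
      refine Finset.sum_congr rfl fun j hj => ?_
      rw [hsrefl j (hjle j hj)]
      ring
    have hcsum : 2 * d = ∑ j ∈ Finset.range (m + 1), (lam ^ j - lam ^ (m - j)) * s j := by
      rw [← hds, two_mul]
      nth_rewrite 2 [h2]
      rw [← Finset.sum_add_distrib]
      exact Finset.sum_congr rfl fun j _ => by ring
    have hc4 : ∑ j ∈ Finset.range (m + 1), ‖lam ^ j - lam ^ (m - j)‖ ^ 2 = 4 * Pm := by
      rw [Stmt7.csum_eq hmk, ← hPm_eq]
    have hsbound : ‖d‖ ^ 2 / Pm ≤ ∑ j ∈ Finset.range (m + 1), ‖s j‖ ^ 2 := by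
      have hcs := Stmt7.cs_scalar (Finset.range (m + 1))
        (fun j => lam ^ j - lam ^ (m - j)) s
      rw [← hcsum, hc4] at hcs
      have h2d : ‖2 * d‖ ^ 2 = 4 * ‖d‖ ^ 2 := by
        rw [norm_mul, mul_pow, show ‖(2:ℂ)‖ = 2 from by norm_num]
        ring
      rw [h2d] at hcs
      rw [div_le_iff₀ hPm_pos]
      nlinarith [hcs]
    have hwr : ∀ a, ∑ j ∈ Finset.range (m + 1), lam ^ j * w j a = rp a := by
      intro a
      have expand : ∀ j ∈ Finset.range (m + 1), lam ^ j * w j a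
          = lam ^ j * y j a - (lam ^ j * s j) * (starRingEnd ℂ) (x a) := by
        intro j _
        simp only [hw, Pi.sub_apply, Pi.smul_apply, Pi.star_apply, smul_eq_mul,
          Complex.star_def]
        ring
      rw [Finset.sum_congr rfl expand, Finset.sum_sub_distrib, ← Finset.sum_mul, hds]
      have h1 := congrFun hyr a
      simp only [Finset.sum_apply, Pi.smul_apply, smul_eq_mul] at h1
      rw [h1, hrp]
      simp only [Pi.sub_apply, Pi.smul_apply, Pi.star_apply, smul_eq_mul, Complex.star_def]
    have hLnorm : ∑ j ∈ Finset.range (m + 1), ‖lam ^ j‖ ^ 2 = L := by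
      rw [hL_sum]
      exact Finset.sum_congr rfl fun j _ => by rw [norm_pow, ← pow_mul, mul_comm j 2]
    have hwb : Stmt7.nsq rp ≤ L * ∑ j ∈ Finset.range (m + 1), Stmt7.nsq (w j) := by
      have h1 : Stmt7.nsq rp
          = ∑ a, ‖∑ j ∈ Finset.range (m + 1), lam ^ j * w j a‖ ^ 2 := by
        rw [Stmt7.nsq]
        exact Finset.sum_congr rfl fun a _ => by rw [hwr a]
      rw [h1]
      calc ∑ a, ‖∑ j ∈ Finset.range (m + 1), lam ^ j * w j a‖ ^ 2
          ≤ ∑ a : Fin n, (∑ j ∈ Finset.range (m + 1), ‖lam ^ j‖ ^ 2)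
            * (∑ j ∈ Finset.range (m + 1), ‖w j a‖ ^ 2) :=
            Finset.sum_le_sum fun a _ =>
              Stmt7.cs_scalar (Finset.range (m + 1)) (fun j => lam ^ j) (fun j => w j a)
        _ = L * ∑ j ∈ Finset.range (m + 1), Stmt7.nsq (w j) := by
            rw [hLnorm, ← Finset.mul_sum]
            congr 1
            rw [Finset.sum_comm]
            rfl
    have hwb2 : (Stmt7.nsq r - ‖d‖ ^ 2) / L
        ≤ ∑ j ∈ Finset.range (m + 1), Stmt7.nsq (w j) := by
      rw [div_le_iff₀ hL_pos, ← hnrp]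
      linarith [hwb]
    have e1 : ∑ j ∈ Finset.range (m + 1),
        (Stmt7.nsq (y j) + Stmt7.nsq (y (m - j)) - ‖s j‖ ^ 2)
        = (∑ j ∈ Finset.range (m + 1), ‖s j‖ ^ 2)
          + 2 * ∑ j ∈ Finset.range (m + 1), Stmt7.nsq (w j) := by
      rw [Finset.sum_sub_distrib, Finset.sum_add_distrib, hrefly]
      have h3 : ∑ j ∈ Finset.range (m + 1), Stmt7.nsq (w j)
          = (∑ j ∈ Finset.range (m + 1), Stmt7.nsq (y j))
            - ∑ j ∈ Finset.range (m + 1), ‖s j‖ ^ 2 := by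
        rw [← Finset.sum_sub_distrib]
        exact Finset.sum_congr rfl fun j _ => hpyth j
      linarith [h3]
    have hTbound : T ≤ ∑ j ∈ Finset.range (m + 1), ∑ a, ∑ b, ‖Δ j a b‖ ^ 2 := by
      have hsum1' := le_trans (le_of_eq e1.symm) hsum1
      have hTd : T = ‖d‖ ^ 2 / Pm + 2 * ((Stmt7.nsq r - ‖d‖ ^ 2) / L) := by rw [hT]; ring
      rw [hTd]
      linarith [hsum1', hsbound, hwb2]
    have hfrob2 : ∑ j ∈ Finset.range (m + 1), frobNorm (Δ j) ^ 2
        = ∑ j ∈ Finset.range (m + 1), ∑ a, ∑ b, ‖Δ j a b‖ ^ 2 :=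
      Finset.sum_congr rfl fun j _ => Stmt7.frobNorm_sq _
    refine Real.sqrt_le_sqrt ?_
    rw [hfrob2]
    exact hTbound
  refine le_antisymm (csInf_le ⟨Real.sqrt T, hlb⟩ hmem) (le_csInf ⟨Real.sqrt T, hmem⟩ hlb)
end
end

section
/- Let m be even, let P be a regular T-palindromic matrix polynomial of degree m with n×n coefficients, let λ ∈ {1, −1}, and let x ∈ ℂⁿ with ‖x‖₂ = 1. Then the spectral-norm structured backward error over the class S_p of T-palindromic polynomials of degree m satisfies η₂^{S_p}(λ, x, P) = ‖P(λ)x‖₂ / √(m+1). -/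
noncomputable section

/-- Spectral-norm structured backward error over T-palindromic polynomials of degree `m`. -/
def eta2_Tpal {n : ℕ} (m : ℕ) (A : ℕ → Matrix (Fin n) (Fin n) ℂ) (lam : ℂ)
    (x : Fin n → ℂ) : ℝ :=
  sInf { e : ℝ | ∃ Δ : ℕ → Matrix (Fin n) (Fin n) ℂ,
    (∀ j ≤ m, Δ (m - j) = (Δ j).transpose) ∧
    (evalP m A lam).mulVec x + (evalP m Δ lam).mulVec x = 0 ∧
    e = Real.sqrt (∑ j ∈ Finset.range (m + 1), specNorm (Δ j) ^ 2) }

namespace Helpers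

variable {n : ℕ}

def toE (x : Fin n → ℂ) : EuclideanSpace ℂ (Fin n) := (WithLp.equiv 2 _).symm x

lemma vnorm_eq (x : Fin n → ℂ) : vnorm x = ‖toE x‖ := by
  rw [EuclideanSpace.norm_eq]; rfl

open scoped InnerProductSpace ComplexConjugate Matrix

lemma toE_smul (c : ℂ) (x : Fin n → ℂ) : toE (c • x) = c • toE x := rfl
lemma toE_add (x y : Fin n → ℂ) : toE (x + y) = toE x + toE y := rfl
lemma toE_sub (x y : Fin n → ℂ) : toE (x - y) = toE x - toE y := rfl
lemma toE_neg (x : Fin n → ℂ) : toE (-x) = -toE x := rfl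

lemma toE_sum {ι : Type*} (s : Finset ι) (f : ι → (Fin n → ℂ)) :
    toE (∑ i ∈ s, f i) = ∑ i ∈ s, toE (f i) := by
  induction s using Finset.cons_induction with
  | empty => rfl
  | cons a s ha ih => rw [Finset.sum_cons, Finset.sum_cons, toE_add, ih]

lemma vnorm_nonneg (x : Fin n → ℂ) : 0 ≤ vnorm x := Real.sqrt_nonneg _
lemma vnorm_smul (c : ℂ) (x : Fin n → ℂ) : vnorm (c • x) = ‖c‖ * vnorm x := by
  rw [vnorm_eq, vnorm_eq, toE_smul, norm_smul]
lemma vnorm_neg (x : Fin n → ℂ) : vnorm (-x) = vnorm x := by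
  rw [vnorm_eq, vnorm_eq, toE_neg, norm_neg]

lemma vnorm_star (x : Fin n → ℂ) : vnorm (star x) = vnorm x := by
  unfold vnorm
  congr 1
  apply Finset.sum_congr rfl
  intro i _
  simp [Pi.star_apply]

lemma vnorm_eq_zero {x : Fin n → ℂ} : vnorm x = 0 ↔ x = 0 := by
  rw [vnorm_eq, norm_eq_zero]
  constructor
  · intro h; exact (WithLp.equiv 2 _).symm.injective (by simpa [toE] using h)
  · rintro rfl; rfl

lemma inner_toE (a b : Fin n → ℂ) : ⟪toE a, toE b⟫_ℂ = ∑ i, conj (a i) * b i := by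
  rw [PiLp.inner_apply]; simp [toE, mul_comm]

lemma vecMulVec_mulVec (a b y : Fin n → ℂ) :
    (Matrix.vecMulVec a b).mulVec y = (b ⬝ᵥ y) • a := by
  ext i
  simp [Matrix.mulVec, Matrix.vecMulVec, dotProduct, Finset.mul_sum, mul_comm, mul_assoc,
    mul_left_comm]

lemma vecMulVec_transpose (a b : Fin n → ℂ) :
    (Matrix.vecMulVec a b).transpose = Matrix.vecMulVec b a := by
  ext i j
  simp [Matrix.vecMulVec, Matrix.transpose, mul_comm]

lemma dot_eq_inner (a b : Fin n → ℂ) : a ⬝ᵥ b = ⟪toE (star a), toE b⟫_ℂ := by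
  rw [inner_toE]
  simp [dotProduct]

lemma mulVec_toE (A : Matrix (Fin n) (Fin n) ℂ) (y : Fin n → ℂ) :
    toE (A.mulVec y) = Matrix.toEuclideanCLM (𝕜 := ℂ) A (toE y) := by
  simp only [toE]; rfl

lemma vnorm_mulVec_le (A : Matrix (Fin n) (Fin n) ℂ) (y : Fin n → ℂ) :
    vnorm (A.mulVec y) ≤ specNorm A * vnorm y := by
  rw [vnorm_eq, vnorm_eq, mulVec_toE]
  exact (Matrix.toEuclideanCLM (𝕜 := ℂ) A).le_opNorm _

lemma specNorm_nonneg (A : Matrix (Fin n) (Fin n) ℂ) : 0 ≤ specNorm A := norm_nonneg _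

set_option synthInstance.maxHeartbeats 1000000 in
set_option maxHeartbeats 1000000 in
lemma specNorm_smul (c : ℂ) (A : Matrix (Fin n) (Fin n) ℂ) :
    specNorm (c • A) = ‖c‖ * specNorm A := by
  unfold specNorm
  rw [map_smul]
  exact norm_smul c (Matrix.toEuclideanCLM (𝕜 := ℂ) A)

lemma specNorm_le_bound (A : Matrix (Fin n) (Fin n) ℂ) (C : ℝ) (hC : 0 ≤ C)
    (h : ∀ y, vnorm (A.mulVec y) ≤ C * vnorm y) : specNorm A ≤ C := by
  apply ContinuousLinearMap.opNorm_le_bound _ hC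
  intro z
  have := h ((WithLp.equiv 2 _) z)
  rw [vnorm_eq, vnorm_eq, mulVec_toE] at this
  simpa [toE] using this

lemma sum_mulVec {ι : Type*} (s : Finset ι) (f : ι → Matrix (Fin n) (Fin n) ℂ) (y : Fin n → ℂ) :
    (∑ i ∈ s, f i).mulVec y = ∑ i ∈ s, (f i).mulVec y := by
  induction s using Finset.cons_induction with
  | empty => simp
  | cons a s ha ih => rw [Finset.sum_cons, Finset.sum_cons, Matrix.add_mulVec, ih]

/-- the key "two-vector Bessel" inequality -/
lemma bessel_two {E : Type*} [NormedAddCommGroup E] [InnerProductSpace ℂ E]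
    (w₁ w₂ y : E) (h11 : ⟪w₁, w₁⟫_ℂ = 1) (h22 : ⟪w₂, w₂⟫_ℂ = 1)
    (c : ℂ) (h12 : ⟪w₁, w₂⟫_ℂ = c) (hc : ‖c‖ < 1) :
    ‖⟪w₁, y⟫_ℂ‖ ^ 2 + ‖⟪w₂, y⟫_ℂ‖ ^ 2
      - 2 * (c * conj (⟪w₁, y⟫_ℂ) * ⟪w₂, y⟫_ℂ).re
      ≤ (1 - ‖c‖ ^ 2) * ‖y‖ ^ 2 := by
  set p := ⟪w₁, y⟫_ℂ with hp
  set q := ⟪w₂, y⟫_ℂ with hq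
  have h21 : ⟪w₂, w₁⟫_ℂ = conj c := by rw [← inner_conj_symm, h12]
  have h1y : ⟪y, w₁⟫_ℂ = conj p := by rw [← inner_conj_symm, ← hp]
  have h2y : ⟪y, w₂⟫_ℂ = conj q := by rw [← inner_conj_symm, ← hq]
  set K : ℝ := 1 - ‖c‖ ^ 2 with hK
  have hKpos : 0 < K := by
    have : ‖c‖ ^ 2 < 1 := by nlinarith [norm_nonneg c]
    linarith
  set z : E := (K : ℂ) • y - (p - c * q) • w₁ - (q - conj c * p) • w₂ with hz
  have h0 : 0 ≤ (⟪z, z⟫_ℂ).re := inner_self_nonneg (𝕜 := ℂ) (x := z)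
  have hexp : (⟪z, z⟫_ℂ).re
      = K * (K * ‖y‖ ^ 2 - (‖p‖ ^ 2 + ‖q‖ ^ 2 - 2 * (c * conj p * q).re)) := by
    have hyy : ⟪y, y⟫_ℂ = (‖y‖ : ℂ) ^ 2 := inner_self_eq_norm_sq_to_K y
    have habs : ∀ w : ℂ, ‖w‖ ^ 2 = w.re ^ 2 + w.im ^ 2 := fun w => by
      rw [Complex.sq_norm, Complex.normSq_apply]; ring
    simp only [hz, inner_sub_left, inner_sub_right, inner_smul_left, inner_smul_right,
      h11, h22, h12, h21, h1y, h2y, ← hp, ← hq, hyy, map_sub, map_mul, Complex.conj_conj,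
      Complex.conj_ofReal]
    simp only [Complex.sub_re, Complex.add_re, Complex.mul_re, Complex.mul_im,
      Complex.ofReal_re, Complex.ofReal_im, Complex.conj_re, Complex.conj_im,
      Complex.sub_im, Complex.add_im, ← Complex.ofReal_pow, Complex.ofReal_re,
      Complex.one_re, Complex.one_im]
    rw [hK, habs p, habs q, habs c]
    ring
  rw [hexp] at h0
  have := (mul_nonneg_iff_of_pos_left hKpos).mp h0
  linarith

/-- Existence of a symmetric matrix `S` with `S x = u`, `‖S‖₂ ≤ 1`, for unit vectors. -/
lemma exists_symmetric_map_unit (x u : Fin n → ℂ) (hx : vnorm x = 1) (hu : vnorm u = 1) :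
    ∃ S : Matrix (Fin n) (Fin n) ℂ, S.transpose = S ∧ S.mulVec x = u ∧
      specNorm S ≤ 1 := by
  have hx2 : star x ⬝ᵥ x = 1 := by
    rw [dot_eq_inner, star_star, inner_self_eq_norm_sq_to_K, ← vnorm_eq, hx]
    norm_num
  set X : Fin n → ℂ := star x with hX
  set c : ℂ := u ⬝ᵥ x with hc
  have hW1 : ‖toE (star u)‖ = 1 := by rw [← vnorm_eq, vnorm_star, hu]
  have hW2 : ‖toE x‖ = 1 := by rw [← vnorm_eq, hx]
  have hcW : c = ⟪toE (star u), toE x⟫_ℂ := by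
    rw [hc, dot_eq_inner]
  have hc_le : ‖c‖ ≤ 1 := by
    rw [hcW]
    calc ‖⟪toE (star u), toE x⟫_ℂ‖ ≤ ‖toE (star u)‖ * ‖toE x‖ := norm_inner_le_norm _ _
    _ = 1 := by rw [hW1, hW2]; ring
  by_cases hc1 : ‖c‖ = 1
  · -- rank-one case : x is parallel to conj u
    have hW1ne : toE (star u) ≠ 0 := by
      intro h; rw [h, norm_zero] at hW1; norm_num at hW1
    have hW2ne : toE x ≠ 0 := by
      intro h; rw [h, norm_zero] at hW2; norm_num at hW2
    obtain ⟨r, hr0, hr⟩ := (norm_inner_eq_norm_iff hW1ne hW2ne).mp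
      (by rw [← hcW, hc1, hW1, hW2]; ring)
    have hcr : c = r := by
      rw [hcW, hr, inner_smul_right, inner_self_eq_norm_sq_to_K, hW1]
      norm_num
    have hxeq : x = r • star u := by
      have := congrArg (WithLp.equiv 2 ((Fin n) → ℂ)) hr
      simpa [toE] using this
    have hXc : X = conj c • u := by
      rw [hX, hxeq, hcr]
      ext i
      simp [Pi.smul_apply, smul_eq_mul]
    have hcc : c * conj c = 1 := by
      rw [Complex.mul_conj']
      norm_cast
      rw [hc1]; norm_num
    refine ⟨c • Matrix.vecMulVec X X, ?_, ?_, ?_⟩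
    · rw [Matrix.transpose_smul, vecMulVec_transpose]
    · rw [Matrix.smul_mulVec, vecMulVec_mulVec, hx2, one_smul, hXc,
        smul_smul, hcc, one_smul]
    · apply specNorm_le_bound _ _ zero_le_one
      intro y
      rw [Matrix.smul_mulVec, vecMulVec_mulVec, smul_smul, vnorm_smul]
      have h1 : vnorm X = 1 := by rw [hX, vnorm_star, hx]
      have h2 : ‖X ⬝ᵥ y‖ ≤ vnorm y := by
        rw [hX, dot_eq_inner, star_star, vnorm_eq]
        calc ‖⟪toE x, toE y⟫_ℂ‖ ≤ ‖toE x‖ * ‖toE y‖ := norm_inner_le_norm _ _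
        _ = ‖toE y‖ := by rw [hW2, one_mul]
      calc ‖c * (X ⬝ᵥ y)‖ * vnorm X = ‖X ⬝ᵥ y‖ := by
            rw [h1, mul_one, norm_mul, hc1, one_mul]
      _ ≤ vnorm y := h2
      _ = 1 * vnorm y := by ring
  · -- main case
    have hc_lt : ‖c‖ < 1 := lt_of_le_of_ne hc_le hc1
    set K : ℝ := 1 - ‖c‖ ^ 2 with hK
    have hKpos : 0 < K := by
      have : ‖c‖ ^ 2 < 1 := by nlinarith [norm_nonneg c]
      rw [hK]; linarith
    set k : ℂ := ((1 / (‖c‖ ^ 2 - 1) : ℝ) : ℂ) with hk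
    have hknorm : ‖k‖ = 1 / K := by
      rw [hk, Complex.norm_real, Real.norm_eq_abs, abs_div, abs_one]
      congr 1
      rw [abs_of_neg (show ‖c‖ ^ 2 - 1 < 0 by rw [hK] at hKpos; linarith), hK]
      ring
    set M : Matrix (Fin n) (Fin n) ℂ :=
      conj c • Matrix.vecMulVec u u + c • Matrix.vecMulVec X X
        - Matrix.vecMulVec u X - Matrix.vecMulVec X u with hM
    have hMy : ∀ y : Fin n → ℂ, M.mulVec y
        = (conj c * (u ⬝ᵥ y) - (X ⬝ᵥ y)) • u + (c * (X ⬝ᵥ y) - (u ⬝ᵥ y)) • X := by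
      intro y
      rw [hM, Matrix.sub_mulVec, Matrix.sub_mulVec, Matrix.add_mulVec,
        Matrix.smul_mulVec, Matrix.smul_mulVec,
        vecMulVec_mulVec, vecMulVec_mulVec, vecMulVec_mulVec, vecMulVec_mulVec]
      ext i
      simp only [Pi.add_apply, Pi.sub_apply, Pi.smul_apply, smul_eq_mul]
      ring
    have hconjc : conj c * c = ((‖c‖ ^ 2 : ℝ) : ℂ) := by
      rw [Complex.conj_mul']
      norm_cast
    refine ⟨k • M, ?_, ?_, ?_⟩
    · rw [hM]
      ext i j
      simp only [Matrix.transpose_apply, Matrix.add_apply, Matrix.sub_apply,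
        Matrix.smul_apply, Matrix.vecMulVec_apply, smul_eq_mul]
      ring
    · rw [Matrix.smul_mulVec, hMy x, ← hc, hx2]
      have h1 : c * 1 - c = 0 := by ring
      rw [h1, zero_smul, add_zero, smul_smul]
      have h2 : k * (conj c * c - 1) = 1 := by
        rw [hconjc, hk]
        have h3 : ((‖c‖ ^ 2 : ℝ) : ℂ) - 1 = ((‖c‖ ^ 2 - 1 : ℝ) : ℂ) := by push_cast; ring
        rw [h3, ← Complex.ofReal_mul]
        have hne : (‖c‖ : ℝ) ^ 2 - 1 ≠ 0 := by nlinarith [hc_lt, norm_nonneg c]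
        rw [one_div, inv_mul_cancel₀ hne]
        norm_num
      rw [h2, one_smul]
    · apply specNorm_le_bound _ _ zero_le_one
      intro y
      set p : ℂ := u ⬝ᵥ y with hp
      set q : ℂ := X ⬝ᵥ y with hq
      set A : ℂ := conj c * p - q with hA
      set B : ℂ := c * q - p with hB
      have hSy : (k • M).mulVec y = k • (A • u + B • X) := by
        rw [Matrix.smul_mulVec, hMy y, ← hp, ← hq, ← hA, ← hB]
      -- inner product facts
      have hVv : ⟪toE u, toE u⟫_ℂ = 1 := by
        rw [inner_self_eq_norm_sq_to_K, ← vnorm_eq, hu]; norm_num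
      have hXv : ⟪toE X, toE X⟫_ℂ = 1 := by
        rw [inner_self_eq_norm_sq_to_K, ← vnorm_eq, hX, vnorm_star, hx]; norm_num
      have hVX : ⟪toE u, toE X⟫_ℂ = conj c := by
        rw [inner_toE, hc]
        rw [show (u ⬝ᵥ x) = ∑ i, u i * x i from rfl, map_sum]
        apply Finset.sum_congr rfl
        intro i _
        rw [hX, map_mul]
        rfl
      have hXV : ⟪toE X, toE u⟫_ℂ = c := by
        rw [← inner_conj_symm, hVX, Complex.conj_conj]
      -- Bessel
      have hb11 : ⟪toE (star u), toE (star u)⟫_ℂ = 1 := by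
        rw [inner_self_eq_norm_sq_to_K, hW1]; norm_num
      have hb22 : ⟪toE x, toE x⟫_ℂ = 1 := by
        rw [inner_self_eq_norm_sq_to_K, hW2]; norm_num
      have hbp : ⟪toE (star u), toE y⟫_ℂ = p := by rw [hp, dot_eq_inner]
      have hbq : ⟪toE x, toE y⟫_ℂ = q := by
        rw [hq, hX, dot_eq_inner, star_star]
      have hbes := bessel_two (toE (star u)) (toE x) (toE y) hb11 hb22 c hcW.symm hc_lt
      rw [hbp, hbq] at hbes
      -- squared norm computation
      have hns : ∀ w : EuclideanSpace ℂ (Fin n), ‖w‖ ^ 2 = (⟪w, w⟫_ℂ).re :=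
        fun w => norm_sq_eq_re_inner (𝕜 := ℂ) w
      have habs : ∀ w : ℂ, ‖w‖ ^ 2 = w.re ^ 2 + w.im ^ 2 := fun w => by
        rw [Complex.sq_norm, Complex.normSq_apply]; ring
      have hinner : (⟪A • toE u + B • toE X, A • toE u + B • toE X⟫_ℂ).re
          = K * (‖p‖ ^ 2 + ‖q‖ ^ 2 - 2 * (c * conj p * q).re) := by
        simp only [inner_add_left, inner_add_right, inner_smul_left, inner_smul_right,
          hVv, hXv, hVX, hXV, mul_one]
        simp only [hA, hB, map_sub, map_mul, Complex.conj_conj]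
        simp only [Complex.add_re, Complex.sub_re, Complex.mul_re, Complex.mul_im,
          Complex.sub_im, Complex.add_im, Complex.conj_re, Complex.conj_im]
        rw [hK, habs p, habs q, habs c]
        ring
      have htoE : toE (A • u + B • X) = A • toE u + B • toE X := rfl
      have hsq : vnorm ((k • M).mulVec y) ^ 2 ≤ (1 * vnorm y) ^ 2 := by
        rw [hSy, vnorm_smul, mul_pow, vnorm_eq, htoE, hns, hinner, hknorm]
        have hyn : ‖toE y‖ = vnorm y := (vnorm_eq y).symm
        rw [← hyn]
        have h3 : ‖p‖ ^ 2 + ‖q‖ ^ 2 - 2 * (c * conj p * q).re ≤ K * ‖toE y‖ ^ 2 := by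
          rw [hK]; exact hbes
        calc (1 / K) ^ 2 * (K * (‖p‖ ^ 2 + ‖q‖ ^ 2 - 2 * (c * conj p * q).re))
            ≤ (1 / K) ^ 2 * (K * (K * ‖toE y‖ ^ 2)) := by
              apply mul_le_mul_of_nonneg_left _ (sq_nonneg _)
              exact mul_le_mul_of_nonneg_left h3 (le_of_lt hKpos)
        _ = (1 * ‖toE y‖) ^ 2 := by
              field_simp
      have h4 : 0 ≤ 1 * vnorm y := by
        have := vnorm_nonneg y; linarith
      nlinarith [vnorm_nonneg ((k • M).mulVec y)]

/-- Existence of a symmetric matrix `S` with `S x = v` and `‖S‖₂ ≤ ‖v‖₂`, given `‖x‖₂ = 1`. -/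
lemma exists_symmetric_map (x v : Fin n → ℂ) (hx : vnorm x = 1) :
    ∃ S : Matrix (Fin n) (Fin n) ℂ, S.transpose = S ∧ S.mulVec x = v ∧
      specNorm S ≤ vnorm v := by
  by_cases hv : v = 0
  · refine ⟨0, by simp, by simp [hv], ?_⟩
    have h0 : specNorm (0 : Matrix (Fin n) (Fin n) ℂ) = 0 := by
      unfold specNorm; rw [map_zero, norm_zero]
    rw [h0, hv]
    exact vnorm_nonneg 0
  · set ν : ℝ := vnorm v with hν
    have hνpos : 0 < ν := by
      rcases lt_or_eq_of_le (vnorm_nonneg v) with h | h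
      · exact h
      · exact absurd (vnorm_eq_zero.mp h.symm) hv
    have hνC : (ν : ℂ) ≠ 0 := by
      simp only [ne_eq, Complex.ofReal_eq_zero]
      positivity
    have hu1 : vnorm (((ν : ℂ))⁻¹ • v) = 1 := by
      rw [vnorm_smul, norm_inv, Complex.norm_real, Real.norm_eq_abs,
        abs_of_pos hνpos, ← hν, inv_mul_cancel₀ (ne_of_gt hνpos)]
    obtain ⟨S, hS1, hS2, hS3⟩ := exists_symmetric_map_unit x (((ν : ℂ))⁻¹ • v) hx hu1
    refine ⟨(ν : ℂ) • S, ?_, ?_, ?_⟩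
    · rw [Matrix.transpose_smul, hS1]
    · rw [Matrix.smul_mulVec, hS2, smul_smul, mul_inv_cancel₀ hνC, one_smul]
    · rw [specNorm_smul, Complex.norm_real, Real.norm_eq_abs, abs_of_pos hνpos]
      calc ν * specNorm S ≤ ν * 1 := mul_le_mul_of_nonneg_left hS3 (le_of_lt hνpos)
      _ = ν := by ring

end Helpers


/-- spectral-norm structured backward error, T-palindromic, m even, λ = ±1. -/
theorem stmt_10 {m n : ℕ} (hm : Even m) (hm0 : 0 < m) (hn : 0 < n)
    (A : ℕ → Matrix (Fin n) (Fin n) ℂ)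
    (hpal : ∀ j ≤ m, A (m - j) = (A j).transpose)
    (hreg : ∃ z : ℂ, (evalP m A z).det ≠ 0)
    (lam : ℂ) (hlam : lam = 1 ∨ lam = -1)
    (x : Fin n → ℂ) (hx : vnorm x = 1) :
    eta2_Tpal m A lam x =
      vnorm ((evalP m A lam).mulVec x) / Real.sqrt ((m : ℝ) + 1) := by
  classical
  set r : Fin n → ℂ := (evalP m A lam).mulVec x with hr
  set B : ℝ := vnorm r / Real.sqrt ((m : ℝ) + 1) with hB
  have hm1pos : (0 : ℝ) < (m : ℝ) + 1 := by positivity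
  have hsqrtpos : 0 < Real.sqrt ((m : ℝ) + 1) := Real.sqrt_pos.mpr hm1pos
  have hlam1 : ‖lam‖ = 1 := by rcases hlam with h | h <;> simp [h]
  have hlamj : ∀ j : ℕ, lam ^ j * lam ^ j = 1 := by
    intro j
    rcases hlam with h | h
    · simp [h]
    · rw [h, ← pow_add]
      exact Even.neg_one_pow (by exact ⟨j, by ring⟩)
  have hlampal : ∀ j ≤ m, lam ^ (m - j) = lam ^ j := by
    intro j hj
    have h1 : lam ^ (m - j) * lam ^ j = 1 := by
      rw [← pow_add, Nat.sub_add_cancel hj]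
      rcases hlam with h | h
      · simp [h]
      · rw [h]; exact Even.neg_one_pow hm
    calc lam ^ (m - j) = lam ^ (m - j) * (lam ^ j * lam ^ j) := by rw [hlamj j, mul_one]
    _ = (lam ^ (m - j) * lam ^ j) * lam ^ j := by ring
    _ = lam ^ j := by rw [h1, one_mul]
  have hMcast : ((m : ℂ) + 1) ≠ 0 := by
    have : ((m : ℂ) + 1) = ((m + 1 : ℕ) : ℂ) := by push_cast; ring
    rw [this]
    exact_mod_cast Nat.succ_ne_zero m
  -- the minimizing perturbation
  set v : Fin n → ℂ := (-((m : ℂ) + 1)⁻¹) • r with hv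
  obtain ⟨S, hSsym, hSx, hSn⟩ := Helpers.exists_symmetric_map x v hx
  have hvnorm : vnorm v = ((m : ℝ) + 1)⁻¹ * vnorm r := by
    rw [hv, Helpers.vnorm_smul, norm_neg, norm_inv]
    congr 2
    have : ((m : ℂ) + 1) = (((m : ℝ) + 1 : ℝ) : ℂ) := by push_cast; ring
    rw [this, Complex.norm_real, Real.norm_eq_abs, abs_of_pos hm1pos]
  set Δ : ℕ → Matrix (Fin n) (Fin n) ℂ := fun j => lam ^ j • S with hΔ
  have hpalΔ : ∀ j ≤ m, Δ (m - j) = (Δ j).transpose := by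
    intro j hj
    rw [hΔ]
    simp only
    rw [Matrix.transpose_smul, hSsym, hlampal j hj]
  have heqΔ : (evalP m A lam).mulVec x + (evalP m Δ lam).mulVec x = 0 := by
    have h1 : (evalP m Δ lam).mulVec x = -r := by
      rw [evalP, Helpers.sum_mulVec]
      have h2 : ∀ j ∈ Finset.range (m + 1),
          (lam ^ j • Δ j).mulVec x = S.mulVec x := by
        intro j _
        rw [hΔ]
        simp only
        rw [smul_smul, Matrix.smul_mulVec, hlamj j, one_smul]
      rw [Finset.sum_congr rfl h2, Finset.sum_const, Finset.card_range]
      rw [← Nat.cast_smul_eq_nsmul ℂ (m + 1) (S.mulVec x), hSx, hv, smul_smul]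
      have h3 : ((m + 1 : ℕ) : ℂ) * (-((m : ℂ) + 1)⁻¹) = -1 := by
        push_cast
        field_simp
      rw [h3]
      ext i
      simp
    rw [← hr, h1, add_neg_cancel]
  have hspecΔ : ∀ j, specNorm (Δ j) = specNorm S := by
    intro j
    rw [hΔ]
    simp only
    rw [Helpers.specNorm_smul, norm_pow, hlam1, one_pow, one_mul]
  set e₀ : ℝ := Real.sqrt (∑ j ∈ Finset.range (m + 1), specNorm (Δ j) ^ 2) with he₀
  have he₀B : e₀ ≤ B := by
    rw [he₀, hB]
    have h1 : ∑ j ∈ Finset.range (m + 1), specNorm (Δ j) ^ 2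
        = ((m : ℝ) + 1) * specNorm S ^ 2 := by
      rw [Finset.sum_congr rfl (fun j _ => by rw [hspecΔ j]), Finset.sum_const,
        Finset.card_range, nsmul_eq_mul]
      push_cast
      ring
    rw [h1]
    have h2 : specNorm S ≤ ((m : ℝ) + 1)⁻¹ * vnorm r := by
      rw [← hvnorm]; exact hSn
    have h3 : ((m : ℝ) + 1) * specNorm S ^ 2
        ≤ ((m : ℝ) + 1) * (((m : ℝ) + 1)⁻¹ * vnorm r) ^ 2 := by
      apply mul_le_mul_of_nonneg_left _ (le_of_lt hm1pos)
      apply pow_le_pow_left₀ (Helpers.specNorm_nonneg S) h2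
    calc Real.sqrt (((m : ℝ) + 1) * specNorm S ^ 2)
        ≤ Real.sqrt (((m : ℝ) + 1) * (((m : ℝ) + 1)⁻¹ * vnorm r) ^ 2) :=
          Real.sqrt_le_sqrt h3
    _ = vnorm r / Real.sqrt ((m : ℝ) + 1) := by
          rw [mul_pow, ← mul_assoc]
          rw [show ((m : ℝ) + 1) * (((m : ℝ) + 1)⁻¹) ^ 2 = (((m : ℝ) + 1))⁻¹ by
            field_simp]
          rw [Real.sqrt_mul (by positivity) _, Real.sqrt_sq (Helpers.vnorm_nonneg r)]
          rw [Real.sqrt_inv]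
          ring
  -- the feasible set
  set E : Set ℝ := { e : ℝ | ∃ Δ : ℕ → Matrix (Fin n) (Fin n) ℂ,
    (∀ j ≤ m, Δ (m - j) = (Δ j).transpose) ∧
    (evalP m A lam).mulVec x + (evalP m Δ lam).mulVec x = 0 ∧
    e = Real.sqrt (∑ j ∈ Finset.range (m + 1), specNorm (Δ j) ^ 2) } with hE
  have hmem : e₀ ∈ E := ⟨Δ, hpalΔ, heqΔ, rfl⟩
  have hlow : ∀ e ∈ E, B ≤ e := by
    rintro e ⟨Δ', hpal', heq', rfl⟩
    have h1 : vnorm r ≤ ∑ j ∈ Finset.range (m + 1), specNorm (Δ' j) := by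
      have h2 : (evalP m Δ' lam).mulVec x = -r := by
        have := heq'
        rw [← hr] at this
        linear_combination (norm := module) this
      have h3 : vnorm r = vnorm ((evalP m Δ' lam).mulVec x) := by
        rw [h2, Helpers.vnorm_neg]
      rw [h3, evalP, Helpers.sum_mulVec]
      calc vnorm (∑ j ∈ Finset.range (m + 1), (lam ^ j • Δ' j).mulVec x)
          ≤ ∑ j ∈ Finset.range (m + 1), vnorm ((lam ^ j • Δ' j).mulVec x) := by
            rw [Helpers.vnorm_eq, Helpers.toE_sum]
            calc ‖∑ j ∈ Finset.range (m + 1), Helpers.toE ((lam ^ j • Δ' j).mulVec x)‖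
                ≤ ∑ j ∈ Finset.range (m + 1), ‖Helpers.toE ((lam ^ j • Δ' j).mulVec x)‖ :=
                  norm_sum_le _ _
            _ = ∑ j ∈ Finset.range (m + 1), vnorm ((lam ^ j • Δ' j).mulVec x) := by
                  apply Finset.sum_congr rfl
                  intro j _
                  rw [Helpers.vnorm_eq]
      _ ≤ ∑ j ∈ Finset.range (m + 1), specNorm (Δ' j) := by
            apply Finset.sum_le_sum
            intro j _
            rw [Matrix.smul_mulVec, Helpers.vnorm_smul, norm_pow, hlam1, one_pow,
              one_mul]
            calc vnorm ((Δ' j).mulVec x) ≤ specNorm (Δ' j) * vnorm x :=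
                  Helpers.vnorm_mulVec_le _ _
            _ = specNorm (Δ' j) := by rw [hx, mul_one]
    have h4 : (vnorm r) ^ 2 ≤ ((m : ℝ) + 1) * ∑ j ∈ Finset.range (m + 1), specNorm (Δ' j) ^ 2 := by
      calc (vnorm r) ^ 2 ≤ (∑ j ∈ Finset.range (m + 1), specNorm (Δ' j)) ^ 2 :=
            pow_le_pow_left₀ (Helpers.vnorm_nonneg r) h1 2
      _ ≤ ((Finset.range (m + 1)).card : ℝ) * ∑ j ∈ Finset.range (m + 1), specNorm (Δ' j) ^ 2 :=
            sq_sum_le_card_mul_sum_sq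
      _ = ((m : ℝ) + 1) * ∑ j ∈ Finset.range (m + 1), specNorm (Δ' j) ^ 2 := by
            rw [Finset.card_range]; push_cast; ring
    rw [hB]
    rw [div_le_iff₀ hsqrtpos]
    have h5 : Real.sqrt (∑ j ∈ Finset.range (m + 1), specNorm (Δ' j) ^ 2) *
        Real.sqrt ((m : ℝ) + 1)
        = Real.sqrt (((m : ℝ) + 1) * ∑ j ∈ Finset.range (m + 1), specNorm (Δ' j) ^ 2) := by
      rw [← Real.sqrt_mul (by positivity) _]
      ring_nf
    rw [h5]
    calc vnorm r = Real.sqrt ((vnorm r) ^ 2) :=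
          (Real.sqrt_sq (Helpers.vnorm_nonneg r)).symm
    _ ≤ Real.sqrt (((m : ℝ) + 1) * ∑ j ∈ Finset.range (m + 1), specNorm (Δ' j) ^ 2) :=
          Real.sqrt_le_sqrt h4
  have hbdd : BddBelow E := ⟨B, hlow⟩
  have hupper : sInf E ≤ B := le_trans (csInf_le hbdd hmem) he₀B
  have hlower : B ≤ sInf E := le_csInf ⟨e₀, hmem⟩ hlow
  unfold eta2_Tpal
  rw [← hE]
  exact le_antisymm hupper hlower
end
end
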